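/- arXiv:1508.07052 — 2 statements merged into one kernel-verified Lean document; each statement's English description precedes it below -/
import Mathlib

section
/- For every standard Young tableau T of partition shape, slink(slink_*(T)) = slink_*(slink(T)). -/
open scoped Classical

noncomputable section

/-- `T` is a standard Young tableau of shape `μ` with entries `1, …, n`.
Here `μ` is a Young diagram (Mathlib convention: row `0` is the longest row,
so the reading word below reads rows from the largest row index down to row `0`,
which corresponds to French notation read from the top row down), and `T` assigns
`0` to cells outside `μ`. -/
def IsSYT (n : ℕ) (μ : YoungDiagram) (T : ℕ × ℕ → ℕ) : Prop :=
  (∀ c, c ∉ μ → T c = 0) ∧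
  Set.BijOn T (↑μ.cells) (Set.Icc 1 n) ∧
  (∀ i j : ℕ, (i, j + 1) ∈ μ → T (i, j) < T (i, j + 1)) ∧
  (∀ i j : ℕ, (i + 1, j) ∈ μ → T (i, j) < T (i + 1, j))

/-- The value `u` occurs before the value `v` in the row reading word of `T`
(rows read from the top row down, each row left to right). -/
def Precedes (μ : YoungDiagram) (T : ℕ × ℕ → ℕ) (u v : ℕ) : Prop :=
  ∃ cu ∈ μ.cells, ∃ cv ∈ μ.cells,
    T cu = u ∧ T cv = v ∧ (cv.1 < cu.1 ∨ (cu.1 = cv.1 ∧ cu.2 < cv.2))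

/-- Interchange the values `a` and `b` in the filling `T`. -/
def swapVals (a b : ℕ) (T : ℕ × ℕ → ℕ) : ℕ × ℕ → ℕ :=
  fun c => if T c = a then b else if T c = b then a else T c

/-- The elementary dual equivalence `d_i` acting on fillings via the row reading
word: identity if `i` occurs between `i-1` and `i+1`; if `i-1` is in the middle it
swaps the values `i` and `i+1`; if `i+1` is in the middle it swaps `i-1` and `i`. -/
def dT (μ : YoungDiagram) (i : ℕ) (T : ℕ × ℕ → ℕ) : ℕ × ℕ → ℕ :=
  if (Precedes μ T i (i-1) ∧ Precedes μ T (i-1) (i+1)) ∨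
     (Precedes μ T (i+1) (i-1) ∧ Precedes μ T (i-1) i) then swapVals i (i+1) T
  else if (Precedes μ T i (i+1) ∧ Precedes μ T (i+1) (i-1)) ∨
     (Precedes μ T (i-1) (i+1) ∧ Precedes μ T (i+1) i) then swapVals (i-1) i T
  else T

/-- The index (1-based) of the run of `T` containing the value `v`: one plus the
number of inverse descents of the reading word of `T` that are smaller than `v`. -/
def runIdx (μ : YoungDiagram) (T : ℕ × ℕ → ℕ) (v : ℕ) : ℕ :=
  1 + ((Finset.Ico 1 v).filter (fun m => Precedes μ T (m+1) m)).card

/-- `b_j`, the largest value in the `j`-th run of `T`: the number of values in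
`{1, …, n}` lying in the first `j` runs. -/
def bsum (n : ℕ) (μ : YoungDiagram) (T : ℕ × ℕ → ℕ) (j : ℕ) : ℕ :=
  ((Finset.Icc 1 n).filter (fun v => runIdx μ T v ≤ j)).card

/-- `β_j(T)`, the size of the `j`-th run of `T`. -/
def betaRun (n : ℕ) (μ : YoungDiagram) (T : ℕ × ℕ → ℕ) (j : ℕ) : ℕ :=
  bsum n μ T j - bsum n μ T (j - 1)

/-- The first `j` runs of `T` form a superstandard tableau: every value `v` of the
first `j` runs lies in row `runIdx(v) - 1` (0-based; i.e. the `m`-th run fills the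
`m`-th row from the bottom, in order). -/
def FirstRunsSS (n : ℕ) (μ : YoungDiagram) (T : ℕ × ℕ → ℕ) (j : ℕ) : Prop :=
  ∀ v, 1 ≤ v → v ≤ n → runIdx μ T v ≤ j →
    ∀ c ∈ μ.cells, T c = v → c.1 = runIdx μ T v - 1

/-- `T` is the superstandard tableau `U_λ` of its shape: each run fills its row. -/
def IsSuperstandard (μ : YoungDiagram) (T : ℕ × ℕ → ℕ) : Prop :=
  ∀ c ∈ μ.cells, c.1 = runIdx μ T (T c) - 1

/-- `μ_r`, the number of cells in the `r`-th row (1-based) of the shape of the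
first `j` runs of `T`. -/
def shapeRow (μ : YoungDiagram) (T : ℕ × ℕ → ℕ) (j r : ℕ) : ℕ :=
  (μ.cells.filter (fun c => runIdx μ T (T c) ≤ j ∧ c.1 = r - 1)).card

/-- The cells of the `a`-th and `j`-th runs of `T` lying strictly below the `j`-th
row (1-based rows; row `j` has 0-based index `j - 1`). -/
def belowCells (μ : YoungDiagram) (T : ℕ × ℕ → ℕ) (a j : ℕ) : Finset (ℕ × ℕ) :=
  μ.cells.filter (fun c => (runIdx μ T (T c) = a ∨ runIdx μ T (T c) = j) ∧ c.1 + 1 < j)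

/-- `T'` is obtained from `T` by permuting the cells of the `a`-th and `j`-th runs
lying strictly below the `j`-th row, giving the first `k` of these cells (in row
reading order) to the `a`-th run and the rest to the `j`-th run; all other runs,
and the part of the `j`-th run weakly above the `j`-th row, keep their cells. -/
def Redistrib (μ : YoungDiagram) (T T' : ℕ × ℕ → ℕ) (a j k : ℕ) : Prop :=
  (∀ c ∈ μ.cells, runIdx μ T (T c) ≠ a → runIdx μ T (T c) ≠ j →
      runIdx μ T' (T' c) = runIdx μ T (T c)) ∧
  (∀ c ∈ μ.cells, runIdx μ T (T c) = j → j ≤ c.1 + 1 → runIdx μ T' (T' c) = j) ∧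
  (∀ c ∈ belowCells μ T a j,
      runIdx μ T' (T' c) =
        if ((belowCells μ T a j).filter
              (fun c' => c.1 < c'.1 ∨ (c'.1 = c.1 ∧ c'.2 < c.2))).card < k
        then a else j)

/-- The indices `i` and `j` from the definition of `slink` and `slink_*`:
`j` is minimal such that the first `j` runs of `T` do not form a superstandard
tableau, and `i` is minimal with `μ_{i+1} ≤ β_j(T) + i - j` (written additively to
avoid natural subtraction). -/
def SlinkData (n : ℕ) (μ : YoungDiagram) (T : ℕ × ℕ → ℕ) (i j : ℕ) : Prop :=
  1 ≤ j ∧ ¬ FirstRunsSS n μ T j ∧ (∀ j', j' < j → FirstRunsSS n μ T j') ∧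
  1 ≤ i ∧ shapeRow μ T j (i + 1) + j ≤ betaRun n μ T j + i ∧
  (∀ i', 1 ≤ i' → i' < i → betaRun n μ T j + i' < shapeRow μ T j (i' + 1) + j)

/-- `T' = slink_*(T)`: both are standard Young tableaux of a common shape; if `T`
is superstandard then `T' = T`, and otherwise `T'` is obtained by permuting the
cells of the `i`-th and `j`-th runs below the `j`-th row, giving the first
`β_j(T) + i - j` of them to the `i`-th run. -/
def SlinkStarRel (n : ℕ) (T T' : ℕ × ℕ → ℕ) : Prop :=
  ∃ μ : YoungDiagram, IsSYT n μ T ∧ IsSYT n μ T' ∧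
    ((IsSuperstandard μ T ∧ T' = T) ∨
     (¬ IsSuperstandard μ T ∧ ∃ i j, SlinkData n μ T i j ∧
        Redistrib μ T T' i j (betaRun n μ T j + i - j)))

/-- `T' = slink(T)`: both are standard Young tableaux of a common shape; if `T` is
superstandard then `T' = T`, and otherwise `T'` is obtained by permuting the cells
of the `(j-1)`-st and `j`-th runs below the `j`-th row, giving the first
`β_j(T) - 1` of them to the `(j-1)`-st run. -/
def SlinkRel (n : ℕ) (T T' : ℕ × ℕ → ℕ) : Prop :=
  ∃ μ : YoungDiagram, IsSYT n μ T ∧ IsSYT n μ T' ∧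
    ((IsSuperstandard μ T ∧ T' = T) ∨
     (¬ IsSuperstandard μ T ∧ ∃ i j, SlinkData n μ T i j ∧
        Redistrib μ T T' (j - 1) j (betaRun n μ T j - 1)))


/-! ### Auxiliary infrastructure for the proof -/

section SlinkProof

open Finset

/-- Reading order on cells: `c` is read before `c'` (rows from the top row down,
each row left to right). -/
def clt (c c' : ℕ × ℕ) : Prop := c'.1 < c.1 ∨ (c.1 = c'.1 ∧ c.2 < c'.2)

lemma clt_irrefl (c : ℕ × ℕ) : ¬ clt c c := by
  rintro (h | ⟨-, h⟩) <;> exact lt_irrefl _ h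

lemma clt_trans {a b c : ℕ × ℕ} (h1 : clt a b) (h2 : clt b c) : clt a c := by
  rcases h1 with h1 | ⟨e1, h1⟩ <;> rcases h2 with h2 | ⟨e2, h2⟩
  · exact Or.inl (h2.trans h1)
  · exact Or.inl (e2 ▸ h1)
  · exact Or.inl (e1 ▸ h2)
  · exact Or.inr ⟨e1.trans e2, h1.trans h2⟩

lemma clt_trichot (c c' : ℕ × ℕ) : clt c c' ∨ c = c' ∨ clt c' c := by
  rcases lt_trichotomy c'.1 c.1 with h | h | h
  · exact Or.inl (Or.inl h)
  · rcases lt_trichotomy c.2 c'.2 with h2 | h2 | h2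
    · exact Or.inl (Or.inr ⟨h.symm, h2⟩)
    · exact Or.inr (Or.inl (Prod.ext h.symm h2))
    · exact Or.inr (Or.inr (Or.inr ⟨h, h2⟩))
  · exact Or.inr (Or.inr (Or.inl h))

lemma clt_asymm {c c' : ℕ × ℕ} (h : clt c c') : ¬ clt c' c :=
  fun h' => clt_irrefl c (clt_trans h h')

/-- Number of cells of `s` read before `c`. -/
noncomputable def rk (s : Finset (ℕ × ℕ)) (c : ℕ × ℕ) : ℕ :=
  (s.filter (fun c' => clt c' c)).card

lemma rk_lt_rk {s : Finset (ℕ × ℕ)} {c c' : ℕ × ℕ} (hc : c ∈ s)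
    (h : clt c c') : rk s c < rk s c' := by
  apply card_lt_card
  constructor
  · intro a ha
    simp only [mem_filter] at ha ⊢
    exact ⟨ha.1, clt_trans ha.2 h⟩
  · intro hsub
    have : c ∈ s.filter (fun c' => clt c' c) := hsub (by simp [mem_filter, hc, h])
    exact clt_irrefl c (mem_filter.1 this).2

lemma rk_le_of_rk_le {s : Finset (ℕ × ℕ)} {c c' : ℕ × ℕ} (hc : c ∈ s) (hc' : c' ∈ s)
    (h : rk s c ≤ rk s c') : c = c' ∨ clt c c' := by
  rcases clt_trichot c c' with h1 | h1 | h1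
  · exact Or.inr h1
  · exact Or.inl h1
  · exact absurd h (not_le.2 (rk_lt_rk hc' h1))

/-- A finset of naturals not containing `0` and downward closed (within positives)
is `{1, …, card}`. -/
lemma initseg {s : Finset ℕ} (h0 : 0 ∉ s)
    (hdc : ∀ a b : ℕ, 1 ≤ a → a ≤ b → b ∈ s → a ∈ s) :
    ∀ v : ℕ, v ∈ s ↔ 1 ≤ v ∧ v ≤ s.card := by
  intro v
  constructor
  · intro hv
    have h1 : 1 ≤ v := Nat.one_le_iff_ne_zero.2 (by rintro rfl; exact h0 hv)
    refine ⟨h1, ?_⟩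
    have hsub : Finset.Icc 1 v ⊆ s := fun a ha => by
      rw [Finset.mem_Icc] at ha; exact hdc a v ha.1 ha.2 hv
    calc v = (Finset.Icc 1 v).card := by rw [Nat.card_Icc]; omega
    _ ≤ s.card := card_le_card hsub
  · rintro ⟨h1, h2⟩
    by_contra hv
    have hsub : s ⊆ Finset.Icc 1 (v - 1) := by
      intro x hx
      rw [Finset.mem_Icc]
      have hx1 : 1 ≤ x := Nat.one_le_iff_ne_zero.2 (by rintro rfl; exact h0 hx)
      refine ⟨hx1, ?_⟩
      by_contra hxv
      exact hv (hdc v x h1 (by omega) hx)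
    have := card_le_card hsub
    rw [Nat.card_Icc] at this
    omega

/-- The analogous statement for downward closed sets of naturals (columns). -/
lemma initseg0 {s : Finset ℕ} (hdc : ∀ a b : ℕ, a ≤ b → b ∈ s → a ∈ s) :
    ∀ v : ℕ, v ∈ s ↔ v < s.card := by
  intro v
  constructor
  · intro hv
    have hsub : Finset.range (v + 1) ⊆ s := fun a ha => by
      rw [Finset.mem_range] at ha; exact hdc a v (by omega) hv
    have := card_le_card hsub
    rw [Finset.card_range] at this; omega
  · intro h2
    by_contra hv
    have hsub : s ⊆ Finset.range v := by
      intro x hx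
      rw [Finset.mem_range]
      by_contra hxv
      exact hv (hdc v x (by omega) hx)
    have := card_le_card hsub
    rw [Finset.card_range] at this
    omega

/-! #### Basic dictionary for standard Young tableaux -/

section SYT

variable {n : ℕ} {μ : YoungDiagram} {T : ℕ × ℕ → ℕ}

lemma IsSYT.mem_Icc (hT : IsSYT n μ T) {c : ℕ × ℕ} (hc : c ∈ μ.cells) :
    T c ∈ Set.Icc 1 n := hT.2.1.mapsTo hc

lemma IsSYT.one_le (hT : IsSYT n μ T) {c : ℕ × ℕ} (hc : c ∈ μ.cells) : 1 ≤ T c :=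
  (hT.mem_Icc hc).1

lemma IsSYT.le_n (hT : IsSYT n μ T) {c : ℕ × ℕ} (hc : c ∈ μ.cells) : T c ≤ n :=
  (hT.mem_Icc hc).2

lemma IsSYT.exists_cell (hT : IsSYT n μ T) {v : ℕ} (h1 : 1 ≤ v) (h2 : v ≤ n) :
    ∃ c ∈ μ.cells, T c = v := by
  obtain ⟨c, hc, hTc⟩ := hT.2.1.surjOn (Set.mem_Icc.2 ⟨h1, h2⟩)
  exact ⟨c, hc, hTc⟩

lemma IsSYT.inj (hT : IsSYT n μ T) {c c' : ℕ × ℕ} (hc : c ∈ μ.cells) (hc' : c' ∈ μ.cells)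
    (h : T c = T c') : c = c' := hT.2.1.injOn hc hc' h

lemma IsSYT.prec_of_clt (hT : IsSYT n μ T) {c c' : ℕ × ℕ} (hc : c ∈ μ.cells)
    (hc' : c' ∈ μ.cells) (h : clt c c') : Precedes μ T (T c) (T c') :=
  ⟨c, hc, c', hc', rfl, rfl, h⟩

lemma IsSYT.clt_of_prec (hT : IsSYT n μ T) {c c' : ℕ × ℕ} (hc : c ∈ μ.cells)
    (hc' : c' ∈ μ.cells) (h : Precedes μ T (T c) (T c')) : clt c c' := by
  obtain ⟨cu, hcu, cv, hcv, hu, hv, hlt⟩ := h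
  rwa [hT.inj hcu hc hu, hT.inj hcv hc' hv] at hlt

lemma IsSYT.not_prec_self (hT : IsSYT n μ T) (v : ℕ) : ¬ Precedes μ T v v := by
  rintro ⟨cu, hcu, cv, hcv, hu, hv, hlt⟩
  rw [hT.inj hcu hcv (hu.trans hv.symm)] at hlt
  exact clt_irrefl _ hlt

lemma IsSYT.prec_total (hT : IsSYT n μ T) {u v : ℕ} (hu1 : 1 ≤ u) (hu2 : u ≤ n)
    (hv1 : 1 ≤ v) (hv2 : v ≤ n) (hne : u ≠ v) :
    Precedes μ T u v ∨ Precedes μ T v u := by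
  obtain ⟨c, hc, rfl⟩ := hT.exists_cell hu1 hu2
  obtain ⟨c', hc', rfl⟩ := hT.exists_cell hv1 hv2
  rcases clt_trichot c c' with h | h | h
  · exact Or.inl (hT.prec_of_clt hc hc' h)
  · exact absurd (congrArg T h) hne
  · exact Or.inr (hT.prec_of_clt hc' hc h)

lemma IsSYT.prec_asymm (hT : IsSYT n μ T) {u v : ℕ} (h : Precedes μ T u v) :
    ¬ Precedes μ T v u := by
  rintro ⟨cu, hcu, cv, hcv, hu, hv, hlt⟩
  obtain ⟨du, hdu, dv, hdv, ju, jv, jlt⟩ := h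
  rw [hT.inj hdu hcv (by rw [ju, hv]), hT.inj hdv hcu (by rw [jv, hu])] at jlt
  exact clt_asymm hlt jlt

lemma runIdx_pos (μ : YoungDiagram) (T : ℕ × ℕ → ℕ) (v : ℕ) : 1 ≤ runIdx μ T v :=
  Nat.le_add_right 1 _

lemma runIdx_mono (μ : YoungDiagram) (T : ℕ × ℕ → ℕ) {v v' : ℕ} (h : v ≤ v') :
    runIdx μ T v ≤ runIdx μ T v' := by
  unfold runIdx
  have : Finset.Ico 1 v ⊆ Finset.Ico 1 v' := Finset.Ico_subset_Ico le_rfl h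
  exact Nat.add_le_add_left (card_le_card (filter_subset_filter _ this)) 1

lemma runIdx_succ (μ : YoungDiagram) (T : ℕ × ℕ → ℕ) {v : ℕ} (hv : 1 ≤ v) :
    runIdx μ T (v + 1) =
      runIdx μ T v + (if Precedes μ T (v + 1) v then 1 else 0) := by
  unfold runIdx
  have h : Finset.Ico 1 (v + 1) = insert v (Finset.Ico 1 v) := by
    ext x; simp [Finset.mem_Ico]; omega
  rw [h, filter_insert]
  split_ifs with hp
  · rw [card_insert_of_notMem (by simp [Finset.mem_Ico])]
    omega
  · omega

lemma runIdx_succ_le (μ : YoungDiagram) (T : ℕ × ℕ → ℕ) {v : ℕ} (hv : 1 ≤ v) :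
    runIdx μ T (v + 1) ≤ runIdx μ T v + 1 := by
  rw [runIdx_succ μ T hv]; split_ifs <;> omega

lemma runIdx_one (μ : YoungDiagram) (T : ℕ × ℕ → ℕ) : runIdx μ T 1 = 1 := by
  unfold runIdx
  simp

lemma IsSYT.clt_of_consec (hT : IsSYT n μ T) {c c' : ℕ × ℕ}
    (hc : c ∈ μ.cells) (hc' : c' ∈ μ.cells) (hd : T c' = T c + 1)
    (hr : runIdx μ T (T c) = runIdx μ T (T c')) : clt c c' := by
  have h1 : 1 ≤ T c := hT.one_le hc
  have hnp : ¬ Precedes μ T (T c + 1) (T c) := by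
    intro hp
    rw [hd] at hr
    rw [runIdx_succ μ T h1, if_pos hp] at hr
    omega
  have := hT.prec_total (hT.one_le hc) (hT.le_n hc) (hT.one_le hc') (hT.le_n hc')
    (by omega)
  rcases this with h | h
  · exact hT.clt_of_prec hc hc' h
  · rw [hd] at h; exact absurd h hnp

/-- Within a run, cells appear in reading order of their values. -/
lemma IsSYT.clt_of_same_run (hT : IsSYT n μ T) : ∀ d : ℕ, ∀ c c' : ℕ × ℕ,
    c ∈ μ.cells → c' ∈ μ.cells → T c' = T c + d + 1 → T c' ≤ n →
    runIdx μ T (T c) = runIdx μ T (T c') → clt c c' := by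
  intro d
  induction d with
  | zero =>
    intro c c' hc hc' hd hn hr
    exact hT.clt_of_consec hc hc' (by omega) hr
  | succ d ih =>
    intro c c' hc hc' hd hn hr
    obtain ⟨cm, hcm, hTm⟩ := hT.exists_cell (v := T c + d + 1) (by omega) (by omega)
    have hr1 : runIdx μ T (T c) = runIdx μ T (T cm) := by
      have l1 := runIdx_mono μ T (show T c ≤ T cm by omega)
      have l2 := runIdx_mono μ T (show T cm ≤ T c' by omega)
      omega
    have h1 : clt c cm := ih c cm hc hcm (by omega) (by omega) hr1
    have h2 : clt cm c' := hT.clt_of_consec hcm hc' (by omega) (by omega)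
    exact clt_trans h1 h2

lemma IsSYT.clt_of_same_run' (hT : IsSYT n μ T) {c c' : ℕ × ℕ}
    (hc : c ∈ μ.cells) (hc' : c' ∈ μ.cells) (hlt : T c < T c')
    (hr : runIdx μ T (T c) = runIdx μ T (T c')) : clt c c' := by
  obtain ⟨d, hd⟩ : ∃ d, T c' = T c + d + 1 := ⟨T c' - T c - 1, by omega⟩
  exact hT.clt_of_same_run d c c' hc hc' hd (hT.le_n hc') hr

lemma IsSYT.lt_of_same_run_clt (hT : IsSYT n μ T) {c c' : ℕ × ℕ}
    (hc : c ∈ μ.cells) (hc' : c' ∈ μ.cells) (hclt : clt c c')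
    (hr : runIdx μ T (T c) = runIdx μ T (T c')) : T c < T c' := by
  rcases lt_trichotomy (T c) (T c') with h | h | h
  · exact h
  · have := hT.inj hc hc' h
    subst this
    exact absurd hclt (clt_irrefl c)
  · exact absurd (hT.clt_of_same_run' hc' hc h hr.symm) (clt_asymm hclt)

end SYT

section Counting

variable {n : ℕ} {μ : YoungDiagram} {T : ℕ × ℕ → ℕ}

/-- Values with run index `≤ r` form an initial segment `{1, …, bsum r}`. -/
lemma IsSYT.le_bsum_iff (hT : IsSYT n μ T) {v : ℕ} (h1 : 1 ≤ v) (h2 : v ≤ n) (r : ℕ) :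
    runIdx μ T v ≤ r ↔ v ≤ bsum n μ T r := by
  set s := (Finset.Icc 1 n).filter (fun v => runIdx μ T v ≤ r) with hs
  have h0 : 0 ∉ s := by simp [hs]
  have hdc : ∀ a b : ℕ, 1 ≤ a → a ≤ b → b ∈ s → a ∈ s := by
    intro a b ha hab hb
    simp only [hs, Finset.mem_filter, Finset.mem_Icc] at hb ⊢
    exact ⟨⟨ha, hab.trans hb.1.2⟩, (runIdx_mono μ T hab).trans hb.2⟩
  have hseg := initseg h0 hdc v
  unfold bsum
  constructor
  · intro hv
    exact (hseg.1 (by simp [hs, Finset.mem_Icc, h1, h2, hv])).2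
  · intro hv
    have hv' : v ∈ s := hseg.2 ⟨h1, hv⟩
    simp only [hs, Finset.mem_filter] at hv'
    exact hv'.2

lemma IsSYT.runIdx_eq_iff (hT : IsSYT n μ T) {v : ℕ} (h1 : 1 ≤ v) (h2 : v ≤ n) {r : ℕ}
    (hr : 1 ≤ r) : runIdx μ T v = r ↔ bsum n μ T (r - 1) < v ∧ v ≤ bsum n μ T r := by
  have e1 := hT.le_bsum_iff h1 h2 r
  have e2 := hT.le_bsum_iff h1 h2 (r - 1)
  have hp := runIdx_pos μ T v
  constructor
  · intro h; subst h
    exact ⟨by by_contra hh; have := e2.2 (by omega); omega, e1.1 le_rfl⟩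
  · rintro ⟨hlt, hle⟩
    have l1 : runIdx μ T v ≤ r := e1.2 hle
    have l2 : ¬ (runIdx μ T v ≤ r - 1) := fun hh => by have := e2.1 hh; omega
    omega

/-- `bsum` counts the cells in the first `r` runs. -/
lemma IsSYT.bsum_card (hT : IsSYT n μ T) (r : ℕ) :
    bsum n μ T r = (μ.cells.filter (fun c => runIdx μ T (T c) ≤ r)).card := by
  unfold bsum
  symm
  apply Finset.card_bij (i := fun c _ => T c)
  · intro c hc
    simp only [Finset.mem_filter] at hc ⊢
    exact ⟨Finset.mem_Icc.2 ⟨hT.one_le hc.1, hT.le_n hc.1⟩, hc.2⟩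
  · intro a ha b hb hab
    simp only [Finset.mem_filter] at ha hb
    exact hT.inj ha.1 hb.1 hab
  · intro v hv
    simp only [Finset.mem_filter, Finset.mem_Icc] at hv
    obtain ⟨c, hc, rfl⟩ := hT.exists_cell hv.1.1 hv.1.2
    exact ⟨c, by simp only [Finset.mem_filter]; exact ⟨hc, hv.2⟩, rfl⟩

/-- `betaRun` counts the cells of the `r`-th run. -/
lemma IsSYT.betaRun_card (hT : IsSYT n μ T) {r : ℕ} (hr : 1 ≤ r) :
    betaRun n μ T r = (μ.cells.filter (fun c => runIdx μ T (T c) = r)).card := by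
  unfold betaRun
  rw [hT.bsum_card r, hT.bsum_card (r - 1)]
  have hsub : μ.cells.filter (fun c => runIdx μ T (T c) ≤ r - 1) ⊆
      μ.cells.filter (fun c => runIdx μ T (T c) ≤ r) := by
    intro c hc
    simp only [Finset.mem_filter] at hc ⊢
    exact ⟨hc.1, by omega⟩
  have hsplit : μ.cells.filter (fun c => runIdx μ T (T c) = r) =
      μ.cells.filter (fun c => runIdx μ T (T c) ≤ r) \
        μ.cells.filter (fun c => runIdx μ T (T c) ≤ r - 1) := by
    ext c
    simp only [Finset.mem_sdiff, Finset.mem_filter]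
    constructor
    · rintro ⟨h1, h2⟩
      exact ⟨⟨h1, by omega⟩, fun hh => by omega⟩
    · rintro ⟨⟨h1, h2⟩, h3⟩
      refine ⟨h1, ?_⟩
      by_contra hne
      exact h3 ⟨h1, by omega⟩
  rw [hsplit, Finset.card_sdiff_of_subset hsub]

/-- The value formula: an SYT is determined by its run-index function on cells. -/
lemma IsSYT.value_formula (hT : IsSYT n μ T) {c : ℕ × ℕ} (hc : c ∈ μ.cells) :
    T c = bsum n μ T (runIdx μ T (T c) - 1) + 1 +
      (μ.cells.filter (fun c' => runIdx μ T (T c') = runIdx μ T (T c) ∧ clt c' c)).card := by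
  set r := runIdx μ T (T c) with hrdef
  set v := T c with hvdef
  have hr1 : 1 ≤ r := runIdx_pos μ T v
  have hv1 : 1 ≤ v := hT.one_le hc
  have hvn : v ≤ n := hT.le_n hc
  have hb := (hT.runIdx_eq_iff hv1 hvn hr1).1 rfl
  have hcard : (μ.cells.filter (fun c' => runIdx μ T (T c') = r ∧ clt c' c)).card
      = ((Finset.Icc 1 n).filter (fun u => runIdx μ T u = r ∧ u < v)).card := by
    apply Finset.card_bij (i := fun c' _ => T c')
    · intro c' hc'
      simp only [Finset.mem_filter] at hc' ⊢
      refine ⟨Finset.mem_Icc.2 ⟨hT.one_le hc'.1, hT.le_n hc'.1⟩, hc'.2.1, ?_⟩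
      exact hT.lt_of_same_run_clt hc'.1 hc hc'.2.2 (by rw [hc'.2.1])
    · intro a ha b hb hab
      simp only [Finset.mem_filter] at ha hb
      exact hT.inj ha.1 hb.1 hab
    · intro u hu
      simp only [Finset.mem_filter, Finset.mem_Icc] at hu
      obtain ⟨c', hc', rfl⟩ := hT.exists_cell hu.1.1 hu.1.2
      refine ⟨c', ?_, rfl⟩
      simp only [Finset.mem_filter]
      exact ⟨hc', hu.2.1, hT.clt_of_same_run' hc' hc hu.2.2 (by rw [hu.2.1])⟩
  rw [hcard]
  have hset : (Finset.Icc 1 n).filter (fun u => runIdx μ T u = r ∧ u < v)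
      = Finset.Icc (bsum n μ T (r - 1) + 1) (v - 1) := by
    ext u
    simp only [Finset.mem_filter, Finset.mem_Icc]
    constructor
    · rintro ⟨⟨hu1, hu2⟩, hur, huv⟩
      have := (hT.runIdx_eq_iff hu1 hu2 hr1).1 hur
      omega
    · rintro ⟨h1, h2⟩
      have hu1 : 1 ≤ u := by
        have := Nat.zero_le (bsum n μ T (r - 1)); omega
      have hu2 : u ≤ n := by omega
      refine ⟨⟨hu1, hu2⟩, ?_, by omega⟩
      exact (hT.runIdx_eq_iff hu1 hu2 hr1).2 ⟨by omega, by omega⟩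
  rw [hset, Nat.card_Icc]
  omega

/-- An SYT is determined by its run-index assignment. -/
lemma syt_ext {S S' : ℕ × ℕ → ℕ} (hS : IsSYT n μ S) (hS' : IsSYT n μ S')
    (h : ∀ c ∈ μ.cells, runIdx μ S (S c) = runIdx μ S' (S' c)) : S = S' := by
  have hbsum : ∀ r, bsum n μ S r = bsum n μ S' r := by
    intro r
    rw [hS.bsum_card r, hS'.bsum_card r]
    congr 1
    apply Finset.filter_congr
    intro c hc
    rw [h c hc]
  funext c
  by_cases hc : c ∈ μ.cells
  · rw [hS.value_formula hc, hS'.value_formula hc, h c hc, hbsum]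
    congr 2
    apply Finset.filter_congr
    intro c' hc'
    simp only [h c' hc']
  · rw [hS.1 c (by rwa [← YoungDiagram.mem_cells]),
      hS'.1 c (by rwa [← YoungDiagram.mem_cells])]

/-- The shape is determined by the tableau. -/
lemma shape_unique {μ' : YoungDiagram} {S : ℕ × ℕ → ℕ}
    (h : IsSYT n μ S) (h' : IsSYT n μ' S) : μ = μ' := by
  have hmem : ∀ c : ℕ × ℕ, c ∈ μ ↔ c ∈ μ' := by
    intro c
    constructor
    · intro hc
      by_contra hc'
      have e0 := h'.1 c hc'
      have e1 := h.one_le (by rwa [YoungDiagram.mem_cells])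
      omega
    · intro hc
      by_contra hc'
      have e0 := h.1 c hc'
      have e1 := h'.one_le (by rwa [YoungDiagram.mem_cells])
      omega
  cases μ with
  | mk cells lower =>
    cases μ' with
    | mk cells' lower' =>
      congr 1
      ext c
      exact hmem c

/-- Cellwise reformulation of `FirstRunsSS`. -/
lemma firstRunsSS_iff (hT : IsSYT n μ T) (t : ℕ) :
    FirstRunsSS n μ T t ↔
      ∀ c ∈ μ.cells, runIdx μ T (T c) ≤ t → c.1 = runIdx μ T (T c) - 1 := by
  constructor
  · intro h c hc hrc
    exact h (T c) (hT.one_le hc) (hT.le_n hc) hrc c hc rfl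
  · intro h v h1 h2 hr c hc hTc
    subst hTc
    exact h c hc hr

/-- Strict column increase over several rows. -/
lemma IsSYT.col_lt (hT : IsSYT n μ T) {r r' y : ℕ} (hrr : r < r')
    (hmem : (r', y) ∈ μ) : T (r, y) < T (r', y) := by
  induction r' with
  | zero => omega
  | succ r'' ih =>
    have hmem' : (r'', y) ∈ μ := μ.up_left_mem (by omega) le_rfl hmem
    have hstep : T (r'', y) < T (r'' + 1, y) := hT.2.2.2 r'' y hmem
    rcases Nat.lt_or_ge r r'' with h | h
    · exact (ih h hmem').trans hstep
    · have : r = r'' := by omega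
      subst this; exact hstep

lemma IsSYT.row_lt (hT : IsSYT n μ T) {r y y' : ℕ} (hyy : y < y')
    (hmem : (r, y') ∈ μ) : T (r, y) < T (r, y') := by
  induction y' with
  | zero => omega
  | succ y'' ih =>
    have hmem' : (r, y'') ∈ μ := μ.up_left_mem le_rfl (by omega) hmem
    have hstep : T (r, y'') < T (r, y'' + 1) := hT.2.2.1 r y'' hmem
    rcases Nat.lt_or_ge y y'' with h | h
    · exact (ih h hmem').trans hstep
    · have : y = y'' := by omega
      subst this; exact hstep

lemma IsSYT.rho_col_le (hT : IsSYT n μ T) {r r' y : ℕ} (hrr : r ≤ r')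
    (hmem : (r', y) ∈ μ) : runIdx μ T (T (r, y)) ≤ runIdx μ T (T (r', y)) := by
  rcases Nat.lt_or_ge r r' with h | h
  · exact runIdx_mono μ T (le_of_lt (hT.col_lt h hmem))
  · have : r = r' := by omega
    subst this; exact le_rfl

lemma IsSYT.rho_row_le (hT : IsSYT n μ T) {r y y' : ℕ} (hyy : y ≤ y')
    (hmem : (r, y') ∈ μ) : runIdx μ T (T (r, y)) ≤ runIdx μ T (T (r, y'))  := by
  rcases Nat.lt_or_ge y y' with h | h
  · exact runIdx_mono μ T (le_of_lt (hT.row_lt h hmem))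
  · have : y = y' := by omega
    subst this; exact le_rfl

/-- No two cells of the same run lie in one column. -/
lemma IsSYT.no_col_pair (hT : IsSYT n μ T) {r r' y : ℕ} (hrr : r < r')
    (hmem : (r', y) ∈ μ)
    (hrun : runIdx μ T (T (r, y)) = runIdx μ T (T (r', y))) : False := by
  have hmem' : (r, y) ∈ μ := μ.up_left_mem (by omega) le_rfl hmem
  have hlt := hT.col_lt hrr hmem
  have hclt := hT.clt_of_same_run' (c := (r, y)) (c' := (r', y))
    (by rwa [← YoungDiagram.mem_cells] at hmem') (by rwa [← YoungDiagram.mem_cells] at hmem)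
    hlt hrun
  rcases hclt with h | ⟨h, -⟩
  · simp only at h; omega
  · simp only at h; omega

/-- Runs with smaller index than a nonempty run are nonempty. -/
lemma IsSYT.run_nonempty (hT : IsSYT n μ T) {r : ℕ} (hr : 1 ≤ r) {c₀ : ℕ × ℕ}
    (hc₀ : c₀ ∈ μ.cells) (hle : r ≤ runIdx μ T (T c₀)) :
    ∃ c ∈ μ.cells, runIdx μ T (T c) = r := by
  suffices h : ∀ v₀ : ℕ, 1 ≤ v₀ → v₀ ≤ n → r ≤ runIdx μ T v₀ →
      ∃ v, 1 ≤ v ∧ v ≤ n ∧ runIdx μ T v = r by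
    obtain ⟨v, h1, h2, h3⟩ := h (T c₀) (hT.one_le hc₀) (hT.le_n hc₀) hle
    obtain ⟨c, hc, rfl⟩ := hT.exists_cell h1 h2
    exact ⟨c, hc, h3⟩
  intro v₀
  induction v₀ with
  | zero => intro h; omega
  | succ v ih =>
    intro h1 h2 h3
    rcases Nat.lt_or_ge 1 (v + 1) with hv | hv
    · have hv1 : 1 ≤ v := by omega
      rcases Nat.lt_or_ge (runIdx μ T v) r with hlt | hge
      · have := runIdx_succ_le μ T hv1
        exact ⟨v + 1, by omega, h2, by omega⟩
      · exact ih hv1 (by omega) hge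
    · have hveq : v + 1 = 1 := by omega
      rw [hveq] at h3
      rw [runIdx_one] at h3
      exact ⟨1, le_rfl, by omega, by rw [runIdx_one]; omega⟩

/-- Determinism: `Redistrib` with the same parameters determines the result,
provided the `a`-th run lies strictly below row `j'-1`. -/
lemma redistrib_det {S X Y : ℕ × ℕ → ℕ} {a j' k : ℕ}
    (hS : IsSYT n μ S) (hX : IsSYT n μ X) (hY : IsSYT n μ Y)
    (hcov : ∀ c ∈ μ.cells, runIdx μ S (S c) = a → c.1 + 1 < j')
    (hrX : Redistrib μ S X a j' k) (hrY : Redistrib μ S Y a j' k) : X = Y := by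
  apply syt_ext hX hY
  intro c hc
  by_cases h1 : runIdx μ S (S c) = a
  · have hbel : c ∈ belowCells μ S a j' := by
      unfold belowCells
      simp only [Finset.mem_filter]
      exact ⟨hc, Or.inl h1, hcov c hc h1⟩
    rw [hrX.2.2 c hbel, hrY.2.2 c hbel]
  · by_cases h2 : runIdx μ S (S c) = j'
    · by_cases h3 : c.1 + 1 < j'
      · have hbel : c ∈ belowCells μ S a j' := by
          unfold belowCells
          simp only [Finset.mem_filter]
          exact ⟨hc, Or.inr h2, h3⟩
        rw [hrX.2.2 c hbel, hrY.2.2 c hbel]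
      · rw [hrX.2.1 c hc h2 (by omega), hrY.2.1 c hc h2 (by omega)]
    · rw [hrX.1 c hc h1 h2, hrY.1 c hc h1 h2]

/-- Uniqueness of the indices in `SlinkData`. -/
lemma slinkData_unique {S : ℕ × ℕ → ℕ} {i j i' j' : ℕ}
    (h : SlinkData n μ S i j) (h' : SlinkData n μ S i' j') : i = i' ∧ j = j' := by
  obtain ⟨hj1, hns, hmin, hi1, hcond, himin⟩ := h
  obtain ⟨hj1', hns', hmin', hi1', hcond', himin'⟩ := h'
  have hjj : j = j' := by
    rcases Nat.lt_trichotomy j j' with h | h | h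
    · exact absurd (hmin' j h) hns
    · exact h
    · exact absurd (hmin j' h) hns'
  subst hjj
  refine ⟨?_, rfl⟩
  rcases Nat.lt_trichotomy i i' with h | h | h
  · have := himin' i hi1 h; omega
  · exact h
  · have := himin i' hi1' h; omega

end Counting

section Main

variable {n : ℕ} {μ : YoungDiagram} {T : ℕ × ℕ → ℕ} {i j : ℕ}

/-- The first run always sits in the bottom row. -/
lemma IsSYT.frss_one (hT : IsSYT n μ T) : FirstRunsSS n μ T 1 := by
  rw [firstRunsSS_iff hT]
  intro c hc hr
  obtain ⟨a, b⟩ := c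
  have hr1 : runIdx μ T (T (a, b)) = 1 := le_antisymm hr (runIdx_pos μ T _)
  rw [hr1]
  simp only
  by_contra hne
  have ha : 0 < a := by omega
  have hmem : (a, b) ∈ μ := by rwa [← YoungDiagram.mem_cells]
  have hle : runIdx μ T (T (0, b)) ≤ runIdx μ T (T (a, b)) :=
    hT.rho_col_le (Nat.zero_le _) hmem
  have h0 : runIdx μ T (T (0, b)) = 1 := by
    have := runIdx_pos μ T (T (0, b)); omega
  exact hT.no_col_pair ha hmem (by rw [h0, hr1])

variable (hd : SlinkData n μ T i j)

section TStruct

variable (hT : IsSYT n μ T)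

include hd hT

lemma two_le_j : 2 ≤ j := by
  obtain ⟨hj1, hns, -⟩ := hd
  rcases Nat.lt_or_ge j 2 with h | h
  · have hj : j = 1 := by omega
    subst hj
    exact absurd hT.frss_one hns
  · exact h

lemma frss_pred : FirstRunsSS n μ T (j - 1) := hd.2.2.1 (j - 1) (by have := two_le_j hd hT; omega)

/-- Runs `r < j` are precisely initial segments of row `r - 1`. -/
lemma run_prefix {r : ℕ} (hr1 : 1 ≤ r) (hrj : r < j) :
    μ.cells.filter (fun c => runIdx μ T (T c) = r) =
      (Finset.range (betaRun n μ T r)).image (fun y => (r - 1, y)) := by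
  have hfr := frss_pred hd hT
  rw [firstRunsSS_iff hT] at hfr
  set s := (μ.cells.filter (fun c => runIdx μ T (T c) = r)).image Prod.snd with hs
  have hrow : ∀ c ∈ μ.cells, runIdx μ T (T c) = r → c.1 = r - 1 := by
    intro c hc hcr
    have := hfr c hc (by omega)
    omega
  have hdc : ∀ a b : ℕ, a ≤ b → b ∈ s → a ∈ s := by
    intro a b hab hb
    simp only [hs, Finset.mem_image, Finset.mem_filter] at hb ⊢
    obtain ⟨c, ⟨hc, hcr⟩, hc2⟩ := hb
    have hceq : c = (r - 1, b) := Prod.ext (hrow c hc hcr) hc2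
    rw [hceq] at hc hcr
    have hmemb : (r - 1, b) ∈ μ := by rwa [← YoungDiagram.mem_cells]
    have hmem : (r - 1, a) ∈ μ := μ.up_left_mem le_rfl hab hmemb
    have hcells : (r - 1, a) ∈ μ.cells := by rwa [YoungDiagram.mem_cells]
    refine ⟨(r - 1, a), ⟨hcells, ?_⟩, rfl⟩
    have hle : runIdx μ T (T (r - 1, a)) ≤ runIdx μ T (T (r - 1, b)) :=
      hT.rho_row_le hab hmemb
    rw [hcr] at hle
    have hr'row : ((r : ℕ) - 1, a).1 = runIdx μ T (T (r - 1, a)) - 1 :=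
      hfr (r - 1, a) hcells (by omega)
    simp only at hr'row
    have hr'pos := runIdx_pos μ T (T (r - 1, a))
    omega
  have hcard : s.card = betaRun n μ T r := by
    rw [hT.betaRun_card hr1, hs]
    apply Finset.card_image_of_injOn
    intro a ha b hb hab
    simp only [Finset.mem_filter, Finset.mem_coe] at ha hb
    have h1 := hrow a ha.1 ha.2
    have h2 := hrow b hb.1 hb.2
    exact Prod.ext (h1.trans h2.symm) hab
  have hseg := fun v => (initseg0 hdc v)
  ext c
  simp only [Finset.mem_filter, Finset.mem_image, Finset.mem_range]
  constructor
  · rintro ⟨hc, hcr⟩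
    refine ⟨c.2, ?_, ?_⟩
    · rw [← hcard]
      apply (hseg c.2).1
      simp only [hs, Finset.mem_image, Finset.mem_filter]
      exact ⟨c, ⟨hc, hcr⟩, rfl⟩
    · rw [show c = (c.1, c.2) from rfl, hrow c hc hcr]
  · rintro ⟨y, hy, rfl⟩
    rw [← hcard] at hy
    have := (hseg y).2 hy
    simp only [hs, Finset.mem_image, Finset.mem_filter] at this
    obtain ⟨c', ⟨hc', hcr'⟩, hy'⟩ := this
    have : c' = (r - 1, y) := Prod.ext (hrow c' hc' hcr') hy'
    rw [← this]
    exact ⟨hc', hcr'⟩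

lemma run_prefix_mem {r y : ℕ} (hr1 : 1 ≤ r) (hrj : r < j) (hy : y < betaRun n μ T r) :
    (r - 1, y) ∈ μ.cells ∧ runIdx μ T (T (r - 1, y)) = r := by
  have h := run_prefix hd hT hr1 hrj
  have : (r - 1, y) ∈ μ.cells.filter (fun c => runIdx μ T (T c) = r) := by
    rw [h]
    simp only [Finset.mem_image, Finset.mem_range]
    exact ⟨y, hy, rfl⟩
  simpa only [Finset.mem_filter] using this

lemma run_prefix_iff {c : ℕ × ℕ} (hc : c ∈ μ.cells) {r : ℕ} (hr1 : 1 ≤ r) (hrj : r < j) :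
    runIdx μ T (T c) = r ↔ c.1 = r - 1 ∧ c.2 < betaRun n μ T r := by
  constructor
  · intro hcr
    have h := run_prefix hd hT hr1 hrj
    have : c ∈ μ.cells.filter (fun c => runIdx μ T (T c) = r) := by
      simp only [Finset.mem_filter]; exact ⟨hc, hcr⟩
    rw [h] at this
    simp only [Finset.mem_image, Finset.mem_range] at this
    obtain ⟨y, hy, hyc⟩ := this
    subst hyc
    exact ⟨rfl, hy⟩
  · rintro ⟨h1, h2⟩
    have := (run_prefix_mem hd hT hr1 hrj h2).2
    rwa [show ((r - 1 : ℕ), c.2) = c from Prod.ext h1.symm rfl] at this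

/-- Cells in rows `≥ j - 1` have run index `≥ j`. -/
lemma rho_ge_of_high {c : ℕ × ℕ} (hc : c ∈ μ.cells) (hrow : j - 1 ≤ c.1) :
    j ≤ runIdx μ T (T c) := by
  by_contra h
  have hfr := frss_pred hd hT
  rw [firstRunsSS_iff hT] at hfr
  have hj2 := two_le_j hd hT
  have hpos := runIdx_pos μ T (T c)
  have := hfr c hc (by omega)
  omega

/-- Cells beyond the run prefix in rows `< j - 1` have run index `≥ j`. -/
lemma rho_ge_of_beyond {c : ℕ × ℕ} (hc : c ∈ μ.cells) (hrow : c.1 + 1 < j)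
    (hcol : betaRun n μ T (c.1 + 1) ≤ c.2) : j ≤ runIdx μ T (T c) := by
  by_contra h
  set r := runIdx μ T (T c) with hr
  have hpos := runIdx_pos μ T (T c)
  have hiff := (run_prefix_iff hd hT hc (r := r) (by omega) (by omega)).1 rfl
  have h1 := hiff.1
  have h2 := hiff.2
  have hre : r = c.1 + 1 := by omega
  rw [hre] at h2
  omega

/-- Runs `1, …, j` are all nonempty. -/
lemma beta_pos {r : ℕ} (hr1 : 1 ≤ r) (hrj : r ≤ j) : 1 ≤ betaRun n μ T r := by
  have hex : ∃ c ∈ μ.cells, runIdx μ T (T c) = j := by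
    by_contra hno
    push_neg at hno
    apply hd.2.1
    rw [firstRunsSS_iff hT]
    intro c hc hr
    have hne := hno c hc
    have hfr := frss_pred hd hT
    rw [firstRunsSS_iff hT] at hfr
    exact hfr c hc (by omega)
  obtain ⟨c₀, hc₀, hc₀j⟩ := hex
  obtain ⟨c, hc, hcr⟩ := hT.run_nonempty hr1 hc₀ (by omega)
  rw [hT.betaRun_card hr1]
  exact Finset.card_pos.2 ⟨c, Finset.mem_filter.2 ⟨hc, hcr⟩⟩

/-- Run-`j` cells in rows `≥ j - 1` lie exactly in row `j - 1`. -/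
lemma qa_row {c : ℕ × ℕ} (hc : c ∈ μ.cells) (hcj : runIdx μ T (T c) = j)
    (hrow : j - 1 ≤ c.1) : c.1 = j - 1 := by
  obtain ⟨a, b⟩ := c
  simp only at hrow hcj ⊢
  by_contra hne
  have hj2 := two_le_j hd hT
  have hmem : (a, b) ∈ μ := by rwa [← YoungDiagram.mem_cells]
  have hmem' : (j - 1, b) ∈ μ := μ.up_left_mem (show j - 1 ≤ a by omega) le_rfl hmem
  have hle : runIdx μ T (T (j - 1, b)) ≤ runIdx μ T (T (a, b)) :=
    hT.rho_col_le (by omega) hmem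
  have hge : j ≤ runIdx μ T (T (j - 1, b)) :=
    rho_ge_of_high hd hT (by rwa [YoungDiagram.mem_cells]) (by simp only; omega)
  have heq : runIdx μ T (T (j - 1, b)) = j := by omega
  exact hT.no_col_pair (show j - 1 < a by omega) hmem (by rw [heq, hcj])

/-- Run-`j` cells in row `j - 1` have columns `< betaRun r` for every `r < j`. -/
lemma qa_col {c : ℕ × ℕ} (hc : c ∈ μ.cells) (hcj : runIdx μ T (T c) = j)
    (hrow : c.1 = j - 1) {r : ℕ} (hr1 : 1 ≤ r) (hrj : r < j) :
    c.2 < betaRun n μ T r := by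
  obtain ⟨a, b⟩ := c
  simp only at hrow hcj ⊢
  subst hrow
  have hj2 := two_le_j hd hT
  by_contra hcol
  have hmem : ((j : ℕ) - 1, b) ∈ μ := by rwa [← YoungDiagram.mem_cells]
  have hmem' : ((r : ℕ) - 1, b) ∈ μ := μ.up_left_mem (show r - 1 ≤ j - 1 by omega) le_rfl hmem
  have hcells' : ((r : ℕ) - 1, b) ∈ μ.cells := by rwa [YoungDiagram.mem_cells]
  have hle : runIdx μ T (T (r - 1, b)) ≤ runIdx μ T (T (j - 1, b)) :=
    hT.rho_col_le (by omega) hmem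
  have hge : j ≤ runIdx μ T (T (r - 1, b)) := by
    apply rho_ge_of_beyond hd hT hcells' (by simp only; omega)
    simp only
    rw [show r - 1 + 1 = r by omega]
    omega
  have heq : runIdx μ T (T (r - 1, b)) = j := by omega
  exact hT.no_col_pair (show r - 1 < j - 1 by omega) hmem (by rw [heq, hcj])

/-- Run sizes are antitone among the first `j - 1` runs. -/
lemma beta_antitone {r r' : ℕ} (hr1 : 1 ≤ r) (hrr : r ≤ r') (hrj : r' < j) :
    betaRun n μ T r' ≤ betaRun n μ T r := by
  rcases Nat.eq_or_lt_of_le hrr with rfl | hlt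
  · exact le_rfl
  have hb' := beta_pos hd hT (show 1 ≤ r' by omega) (show r' ≤ j by omega)
  set y := betaRun n μ T r' - 1 with hy
  obtain ⟨hcell, hrun⟩ := run_prefix_mem hd hT (r := r') (by omega) hrj
      (y := y) (by omega)
  have hmem : ((r' : ℕ) - 1, y) ∈ μ := by rwa [YoungDiagram.mem_cells] at hcell
  have hmem2 : ((r : ℕ) - 1, y) ∈ μ := μ.up_left_mem (show r - 1 ≤ r' - 1 by omega) le_rfl hmem
  have hcells2 : ((r : ℕ) - 1, y) ∈ μ.cells := by rwa [YoungDiagram.mem_cells]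
  have hle : runIdx μ T (T (r - 1, y)) ≤ r' := by
    have h := hT.rho_col_le (show r - 1 ≤ r' - 1 by omega) hmem
    rwa [hrun] at h
  set r'' := runIdx μ T (T (r - 1, y)) with hr''
  have hpos := runIdx_pos μ T (T (r - 1, y))
  have hiff := (run_prefix_iff hd hT hcells2 (r := r'') (by omega) (by omega)).1 rfl
  have h1 := hiff.1
  have h2 := hiff.2
  simp only at h1 h2
  have hreq : r'' = r := by omega
  rw [hreq] at h2
  omega

end TStruct

lemma rk_lt_card {s : Finset (ℕ × ℕ)} {c : ℕ × ℕ} (hc : c ∈ s) : rk s c < s.card := by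
  have hsub : s.filter (fun c' => clt c' c) ⊆ s.erase c := by
    intro a ha
    simp only [Finset.mem_filter] at ha
    refine Finset.mem_erase.2 ⟨?_, ha.1⟩
    rintro rfl
    exact clt_irrefl _ ha.2
  calc rk s c ≤ (s.erase c).card := Finset.card_le_card hsub
  _ < s.card := Finset.card_erase_lt_of_mem hc

lemma rk_injOn {s : Finset (ℕ × ℕ)} {c c' : ℕ × ℕ} (hc : c ∈ s) (hc' : c' ∈ s)
    (h : rk s c = rk s c') : c = c' := by
  rcases clt_trichot c c' with h1 | h1 | h1
  · exact absurd h (Nat.ne_of_lt (rk_lt_rk hc h1))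
  · exact h1
  · exact absurd h.symm (Nat.ne_of_lt (rk_lt_rk hc' h1))

lemma exists_rk {s : Finset (ℕ × ℕ)} {k : ℕ} (hk : k < s.card) :
    ∃ c ∈ s, rk s c = k := by
  have himg : s.image (rk s) = Finset.range s.card := by
    apply Finset.eq_of_subset_of_card_le
    · intro v hv
      simp only [Finset.mem_image] at hv
      obtain ⟨c, hc, rfl⟩ := hv
      exact Finset.mem_range.2 (rk_lt_card hc)
    · rw [Finset.card_range, Finset.card_image_of_injOn (fun a ha b hb => rk_injOn ha hb)]
  have : k ∈ s.image (rk s) := by rw [himg]; exact Finset.mem_range.2 hk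
  simpa only [Finset.mem_image] using this

lemma card_rk_lt (s : Finset (ℕ × ℕ)) (k : ℕ) :
    (s.filter (fun c => rk s c < k)).card = min k s.card := by
  have himg : (s.filter (fun c => rk s c < k)).image (rk s) =
      Finset.range (min k s.card) := by
    ext v
    simp only [Finset.mem_image, Finset.mem_filter, Finset.mem_range, lt_min_iff]
    constructor
    · rintro ⟨c, ⟨hc, hck⟩, rfl⟩
      exact ⟨hck, rk_lt_card hc⟩
    · rintro ⟨h1, h2⟩
      obtain ⟨c, hc, rfl⟩ := exists_rk h2
      exact ⟨c, ⟨hc, h1⟩, rfl⟩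
  have hcards := congrArg Finset.card himg
  rwa [Finset.card_image_of_injOn
    (fun a ha b hb => rk_injOn (Finset.mem_filter.1 ha).1 (Finset.mem_filter.1 hb).1),
    Finset.card_range] at hcards

/-- The run-`r` cells. -/
noncomputable def fib (μ : YoungDiagram) (T : ℕ × ℕ → ℕ) (r : ℕ) : Finset (ℕ × ℕ) :=
  μ.cells.filter (fun c => runIdx μ T (T c) = r)

/-- Run-`j` cells weakly above row `j - 1`. -/
noncomputable def QaS (μ : YoungDiagram) (T : ℕ × ℕ → ℕ) (j : ℕ) : Finset (ℕ × ℕ) :=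
  (fib μ T j).filter (fun c => ¬ c.1 + 1 < j)

/-- Run-`j` cells strictly below row `j - 1`. -/
noncomputable def QbS (μ : YoungDiagram) (T : ℕ × ℕ → ℕ) (j : ℕ) : Finset (ℕ × ℕ) :=
  (fib μ T j).filter (fun c => c.1 + 1 < j)

section AGeneric

variable (hT : IsSYT n μ T)
include hd hT

lemma i_lt_j : i < j := by
  have hj2 := two_le_j hd hT
  by_contra hge
  have hm := hd.2.2.2.2.2 (j - 1) (by omega) (by omega)
  have hsub : μ.cells.filter (fun c => runIdx μ T (T c) ≤ j ∧ c.1 = j - 1) ⊆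
      μ.cells.filter (fun c => runIdx μ T (T c) = j) := by
    intro c hc
    simp only [Finset.mem_filter] at hc ⊢
    refine ⟨hc.1, ?_⟩
    have := rho_ge_of_high hd hT hc.1 (by omega)
    omega
  have hcard : shapeRow μ T j j ≤ betaRun n μ T j := by
    unfold shapeRow
    rw [hT.betaRun_card (by omega)]
    exact Finset.card_le_card hsub
  have heq : μ.cells.filter (fun c => runIdx μ T (T c) ≤ j ∧ c.1 = j - 1) =
      μ.cells.filter (fun c => runIdx μ T (T c) = j) := by
    apply Finset.eq_of_subset_of_card_le hsub
    have hβ := hT.betaRun_card (show 1 ≤ j by omega)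
    unfold shapeRow at hm
    simp only [show j - 1 + 1 - 1 = j - 1 by omega] at hm
    omega
  apply hd.2.1
  rw [firstRunsSS_iff hT]
  intro c hc hr
  rcases Nat.lt_or_ge (runIdx μ T (T c)) j with hlt | hgee
  · have hfr := frss_pred hd hT
    rw [firstRunsSS_iff hT] at hfr
    exact hfr c hc (by omega)
  · have hcj : runIdx μ T (T c) = j := by omega
    have : c ∈ μ.cells.filter (fun c => runIdx μ T (T c) ≤ j ∧ c.1 = j - 1) := by
      rw [heq]
      simp only [Finset.mem_filter]
      exact ⟨hc, hcj⟩
    simp only [Finset.mem_filter] at this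
    rw [hcj]
    exact this.2.2

lemma j_le_beta_add : j ≤ betaRun n μ T j + i := by
  have := hd.2.2.2.2.1
  omega

lemma qa_card_le {r : ℕ} (hr1 : 1 ≤ r) (hrj : r < j) :
    (QaS μ T j).card ≤ betaRun n μ T r := by
  have hj2 := two_le_j hd hT
  have hinj : ∀ c ∈ QaS μ T j, ∀ c' ∈ QaS μ T j, c.2 = c'.2 → c = c' := by
    intro c hc c' hc' hcc
    simp only [QaS, fib, Finset.mem_filter] at hc hc'
    have h1 := qa_row hd hT hc.1.1 hc.1.2 (by omega)
    have h2 := qa_row hd hT hc'.1.1 hc'.1.2 (by omega)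
    exact Prod.ext (h1.trans h2.symm) hcc
  have hmap : ∀ c ∈ QaS μ T j, c.2 ∈ Finset.range (betaRun n μ T r) := by
    intro c hc
    simp only [QaS, fib, Finset.mem_filter] at hc
    have hrow := qa_row hd hT hc.1.1 hc.1.2 (by omega)
    exact Finset.mem_range.2 (qa_col hd hT hc.1.1 hc.1.2 hrow hr1 hrj)
  calc (QaS μ T j).card ≤ (Finset.range (betaRun n μ T r)).card :=
        Finset.card_le_card_of_injOn (fun c => c.2) hmap (fun a ha b hb => hinj a ha b hb)
  _ = betaRun n μ T r := Finset.card_range _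

lemma bj_split : betaRun n μ T j = (QbS μ T j).card + (QaS μ T j).card := by
  have hj2 := two_le_j hd hT
  rw [hT.betaRun_card (by omega)]
  rw [← Finset.card_filter_add_card_filter_not
    (s := μ.cells.filter (fun c => runIdx μ T (T c) = j)) (p := fun c => c.1 + 1 < j)]
  simp only [QbS, QaS, fib]

lemma U_eq : belowCells μ T i j = fib μ T i ∪ QbS μ T j := by
  have hij := i_lt_j hd hT
  have hi1 := hd.2.2.2.1
  ext c
  simp only [belowCells, fib, QbS, Finset.mem_filter, Finset.mem_union]
  constructor
  · rintro ⟨hc, hor, hrow⟩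
    rcases hor with h | h
    · exact Or.inl ⟨hc, h⟩
    · exact Or.inr ⟨⟨hc, h⟩, hrow⟩
  · rintro (⟨hc, h⟩ | ⟨⟨hc, h⟩, hrow⟩)
    · refine ⟨hc, Or.inl h, ?_⟩
      have := (run_prefix_iff hd hT hc (by omega) hij).1 h
      omega
    · exact ⟨hc, Or.inr h, hrow⟩

lemma U_disj : Disjoint (fib μ T i) (QbS μ T j) := by
  have hij := i_lt_j hd hT
  rw [Finset.disjoint_left]
  intro c hc hc'
  simp only [fib, QbS, Finset.mem_filter] at hc hc'
  omega

lemma U_card : (belowCells μ T i j).card = betaRun n μ T i + (QbS μ T j).card := by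
  rw [U_eq hd hT, Finset.card_union_of_disjoint (U_disj hd hT),
    hT.betaRun_card hd.2.2.2.1]
  rfl

lemma kst_le_U : betaRun n μ T j + i - j ≤ (belowCells μ T i j).card := by
  have h1 := qa_card_le hd hT hd.2.2.2.1 (i_lt_j hd hT)
  have h2 := bj_split hd hT
  have h3 := U_card hd hT
  have h4 := i_lt_j hd hT
  omega

end AGeneric

section ASide

variable {A : ℕ × ℕ → ℕ}
variable (hT : IsSYT n μ T) (hA : IsSYT n μ A)
variable (hrA : Redistrib μ T A i j (betaRun n μ T j + i - j))
include hd hT hA hrA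

lemma redistrib_rk {c : ℕ × ℕ} (hc : c ∈ belowCells μ T i j) :
    runIdx μ A (A c) =
      if rk (belowCells μ T i j) c < betaRun n μ T j + i - j then i else j := by
  have h := hrA.2.2 c hc
  have hbr : ((belowCells μ T i j).filter
      (fun c' => c.1 < c'.1 ∨ (c'.1 = c.1 ∧ c'.2 < c.2))).card
      = rk (belowCells μ T i j) c := by
    unfold rk
    congr 1
    ext c'
    simp only [Finset.mem_filter]
    unfold clt
    tauto
  rwa [hbr] at h

omit hA in
lemma rhoA_other {c : ℕ × ℕ} (hc : c ∈ μ.cells) (h1 : runIdx μ T (T c) ≠ i)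
    (h2 : runIdx μ T (T c) ≠ j) : runIdx μ A (A c) = runIdx μ T (T c) :=
  hrA.1 c hc h1 h2

omit hA in
lemma rhoA_qa {c : ℕ × ℕ} (hc : c ∈ QaS μ T j) : runIdx μ A (A c) = j := by
  simp only [QaS, fib, Finset.mem_filter] at hc
  exact hrA.2.1 c hc.1.1 hc.1.2 (by omega)

lemma memU_of_rhoA_i {c : ℕ × ℕ} (hc : c ∈ μ.cells) (h : runIdx μ A (A c) = i) :
    c ∈ belowCells μ T i j ∧ rk (belowCells μ T i j) c < betaRun n μ T j + i - j := by
  have hij := i_lt_j hd hT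
  by_cases h1 : runIdx μ T (T c) = i
  · have hcU : c ∈ belowCells μ T i j := by
      rw [U_eq hd hT]
      exact Finset.mem_union_left _ (by simp only [fib, Finset.mem_filter]; exact ⟨hc, h1⟩)
    refine ⟨hcU, ?_⟩
    have := redistrib_rk hd hT hA hrA hcU
    rw [h] at this
    by_contra hge
    rw [if_neg hge] at this
    omega
  · by_cases h2 : runIdx μ T (T c) = j
    · by_cases h3 : c.1 + 1 < j
      · have hcU : c ∈ belowCells μ T i j := by
          rw [U_eq hd hT]
          exact Finset.mem_union_right _
            (by simp only [QbS, fib, Finset.mem_filter]; exact ⟨⟨hc, h2⟩, h3⟩)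
        refine ⟨hcU, ?_⟩
        have := redistrib_rk hd hT hA hrA hcU
        rw [h] at this
        by_contra hge
        rw [if_neg hge] at this
        omega
      · have := hrA.2.1 c hc h2 (by omega)
        omega
    · have := hrA.1 c hc h1 h2
      omega

lemma rhoA_i_row {c : ℕ × ℕ} (hc : c ∈ μ.cells) (h : runIdx μ A (A c) = i) :
    c.1 = i - 1 := by
  have hij := i_lt_j hd hT
  have hi1 := hd.2.2.2.1
  obtain ⟨hcU, hrk⟩ := memU_of_rhoA_i hd hT hA hrA hc h
  by_cases h1 : runIdx μ T (T c) = i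
  · have := (run_prefix_iff hd hT hc hi1 hij).1 h1
    omega
  · have h2 : runIdx μ T (T c) = j ∧ c.1 + 1 < j := by
      simp only [belowCells, Finset.mem_filter] at hcU
      rcases hcU.2.1 with hh | hh
      · omega
      · exact ⟨hh, hcU.2.2⟩
    rcases Nat.lt_or_ge c.1 i with hlow | hhigh
    · -- c.1 < i ; rule out c.1 + 2 ≤ i
      by_contra hne
      have hi2 : 2 ≤ i := by omega
      have hm := hd.2.2.2.2.2 (i - 1) (by omega) (by omega)
      rw [show i - 1 + 1 = i by omega] at hm
      have hsub : μ.cells.filter (fun c' => runIdx μ T (T c') ≤ j ∧ c'.1 = i - 1) ⊆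
          (belowCells μ T i j).filter (fun c' => clt c' c) := by
        intro c' hc'
        simp only [Finset.mem_filter] at hc'
        obtain ⟨hc'm, hc'le, hc'row⟩ := hc'
        have hc'run : runIdx μ T (T c') = i ∨ runIdx μ T (T c') = j := by
          rcases Nat.lt_or_ge (runIdx μ T (T c')) j with hlt | hge2
          · left
            have hfr := frss_pred hd hT
            rw [firstRunsSS_iff hT] at hfr
            have := hfr c' hc'm (by omega)
            have hpos := runIdx_pos μ T (T c')
            omega
          · right; omega
        refine Finset.mem_filter.2 ⟨?_, ?_⟩
        · simp only [belowCells, Finset.mem_filter]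
          exact ⟨hc'm, hc'run, by omega⟩
        · exact Or.inl (by omega)
      have hcount : shapeRow μ T j i ≤ rk (belowCells μ T i j) c := by
        unfold shapeRow rk
        exact Finset.card_le_card hsub
      have hj_le := j_le_beta_add hd hT
      omega
    · -- c.1 ≥ i : contradiction via the cell (c.1, 0)
      exfalso
      have hmemc : c ∈ μ := by rwa [← YoungDiagram.mem_cells]
      have hmem0 : (c.1, 0) ∈ μ := μ.up_left_mem le_rfl (Nat.zero_le _) hmemc
      have hcell0 : (c.1, 0) ∈ μ.cells := by rwa [YoungDiagram.mem_cells]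
      have hrun0 : runIdx μ T (T (c.1, 0)) = c.1 + 1 := by
        apply (run_prefix_iff hd hT hcell0 (by omega) (by omega)).2
        refine ⟨by simp only; omega, ?_⟩
        simp only
        have := beta_pos hd hT (r := c.1 + 1) (by omega) (by omega)
        omega
      have hrunA0 : runIdx μ A (A (c.1, 0)) = c.1 + 1 := by
        rw [← hrun0]
        exact hrA.1 (c.1, 0) hcell0 (by omega) (by omega)
      have hle : runIdx μ A (A (c.1, 0)) ≤ runIdx μ A (A (c.1, c.2)) :=
        hA.rho_row_le (Nat.zero_le _) hmemc
      rw [hrunA0] at hle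
      rw [show ((c.1 : ℕ), c.2) = c from rfl, h] at hle
      omega

lemma kst_pos : 1 ≤ betaRun n μ T j + i - j := by
  have hij := i_lt_j hd hT
  have hi1 := hd.2.2.2.1
  have hbi := beta_pos hd hT hi1 (by omega)
  -- some cell of run i exists; it lies in U, hence has ρ_A ∈ {i, j}; run i of A nonempty
  have hex : ∃ c ∈ μ.cells, runIdx μ T (T c) = i := by
    have := hT.betaRun_card hi1
    rcases Finset.card_pos.1 (by omega : 0 < (μ.cells.filter
      (fun c => runIdx μ T (T c) = i)).card) with ⟨c, hcm⟩
    simp only [Finset.mem_filter] at hcm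
    exact ⟨c, hcm.1, hcm.2⟩
  obtain ⟨c₁, hc₁, hc₁i⟩ := hex
  have hc₁U : c₁ ∈ belowCells μ T i j := by
    rw [U_eq hd hT]
    exact Finset.mem_union_left _ (by simp only [fib, Finset.mem_filter]; exact ⟨hc₁, hc₁i⟩)
  have hge : i ≤ runIdx μ A (A c₁) := by
    have := redistrib_rk hd hT hA hrA hc₁U
    split_ifs at this <;> omega
  obtain ⟨c₂, hc₂, hc₂i⟩ := hA.run_nonempty hi1 hc₁ hge
  obtain ⟨-, hrk⟩ := memU_of_rhoA_i hd hT hA hrA hc₂ hc₂i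
  omega

/-- All cells of `U` lie in rows `≤ i - 1`. -/
lemma U_low {c : ℕ × ℕ} (hc : c ∈ belowCells μ T i j) : c.1 + 1 ≤ i := by
  have hi1 := hd.2.2.2.1
  -- take the reading-first cell of U
  have hne : (belowCells μ T i j).Nonempty := ⟨c, hc⟩
  obtain ⟨c₀, hc₀, hrk₀⟩ := exists_rk (s := belowCells μ T i j)
    (k := 0) (Finset.card_pos.2 hne)
  have hρ : runIdx μ A (A c₀) = i := by
    have := redistrib_rk hd hT hA hrA hc₀
    rw [hrk₀, if_pos (by have := kst_pos hd hT hA hrA; omega)] at this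
    exact this
  have hrow₀ : c₀.1 = i - 1 := by
    apply rhoA_i_row hd hT hA hrA _ hρ
    simp only [belowCells, Finset.mem_filter] at hc₀
    exact hc₀.1
  by_contra hgt
  -- then clt c c₀, contradicting rk c₀ = 0
  have hclt : clt c c₀ := Or.inl (by omega)
  have := rk_lt_rk hc hclt
  omega

/-- Reading rank within `U` of a cell in row `i - 1` is its column. -/
lemma rk_U_row {c : ℕ × ℕ} (hc : c ∈ belowCells μ T i j) (hrow : c.1 = i - 1) :
    rk (belowCells μ T i j) c = c.2 := by
  have hij := i_lt_j hd hT
  have hi1 := hd.2.2.2.1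
  have hmemc : c ∈ μ := by
    simp only [belowCells, Finset.mem_filter] at hc
    rw [← YoungDiagram.mem_cells]
    exact hc.1
  have hrunc : runIdx μ T (T c) = i ∨ runIdx μ T (T c) = j := by
    simp only [belowCells, Finset.mem_filter] at hc
    exact hc.2.1
  have hset : (belowCells μ T i j).filter (fun c' => clt c' c) =
      (Finset.range c.2).image (fun y => (i - 1, y)) := by
    ext c'
    simp only [Finset.mem_filter, Finset.mem_image, Finset.mem_range]
    constructor
    · rintro ⟨hc', hclt⟩
      have hlow := U_low hd hT hA hrA hc'
      rcases hclt with hh | ⟨hh1, hh2⟩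
      · omega
      · exact ⟨c'.2, hh2, Prod.ext (by omega) rfl⟩
    · rintro ⟨y, hy, rfl⟩
      have hmemy : ((i : ℕ) - 1, y) ∈ μ := by
        apply μ.up_left_mem (show i - 1 ≤ c.1 by omega) (show y ≤ c.2 by omega) hmemc
      have hcelly : ((i : ℕ) - 1, y) ∈ μ.cells := by rwa [YoungDiagram.mem_cells]
      refine ⟨?_, Or.inr ⟨by omega, by show y < c.2; omega⟩⟩
      simp only [belowCells, Finset.mem_filter]
      refine ⟨hcelly, ?_, by show i - 1 + 1 < j; omega⟩
      by_cases hylt : y < betaRun n μ T i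
      · left
        exact (run_prefix_iff hd hT hcelly hi1 hij).2 ⟨rfl, hylt⟩
      · right
        have hgej : j ≤ runIdx μ T (T (i - 1, y)) := by
          apply rho_ge_of_beyond hd hT hcelly (by simp only; omega)
          simp only
          rw [show i - 1 + 1 = i by omega]
          omega
        have hlej : runIdx μ T (T (i - 1, y)) ≤ j := by
          have hmono : runIdx μ T (T (i - 1, y)) ≤ runIdx μ T (T (i - 1, c.2)) := by
            apply hT.rho_row_le (by omega)
            rw [show ((i : ℕ) - 1, c.2) = c from Prod.ext (by omega) rfl]
            exact hmemc
          rw [show ((i : ℕ) - 1, c.2) = c from Prod.ext (by omega) rfl] at hmono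
          rcases hrunc with hh | hh
          · -- then c.2 < betaRun i, so y < c.2 < betaRun i, contradiction with hylt
            exfalso
            have := (run_prefix_iff hd hT (by
              simp only [belowCells, Finset.mem_filter] at hc; exact hc.1) hi1 hij).1 hh
            omega
          · omega
        omega
  rw [rk, hset, Finset.card_image_of_injOn, Finset.card_range]
  intro a ha b hb hab
  have := congrArg Prod.snd hab
  simpa using this

/-- Reading rank within `U` of a `Qb`-cell. -/
lemma rk_U_qb {c : ℕ × ℕ} (hc : c ∈ QbS μ T j) :
    rk (belowCells μ T i j) c = betaRun n μ T i + rk (QbS μ T j) c := by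
  have hij := i_lt_j hd hT
  have hi1 := hd.2.2.2.1
  have hcU : c ∈ belowCells μ T i j := by
    rw [U_eq hd hT]; exact Finset.mem_union_right _ hc
  have hclow := U_low hd hT hA hrA hcU
  have hcq := hc
  simp only [QbS, fib, Finset.mem_filter] at hcq
  have hfib_clt : ∀ c' ∈ fib μ T i, clt c' c := by
    intro c' hc'
    simp only [fib, Finset.mem_filter] at hc'
    have h' := (run_prefix_iff hd hT hc'.1 hi1 hij).1 hc'.2
    rcases Nat.lt_or_ge c.1 (i - 1) with hh | hh
    · exact Or.inl (by omega)
    · -- c.1 = i - 1 ; then c.2 ≥ betaRun i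
      have hrow : c.1 = i - 1 := by omega
      have hcge : betaRun n μ T i ≤ c.2 := by
        by_contra hlt
        have := (run_prefix_iff hd hT hcq.1.1 hi1 hij).2 ⟨hrow, by omega⟩
        omega
      exact Or.inr ⟨by omega, by omega⟩
  have hsplit : (belowCells μ T i j).filter (fun c' => clt c' c) =
      fib μ T i ∪ (QbS μ T j).filter (fun c' => clt c' c) := by
    rw [U_eq hd hT, Finset.filter_union]
    congr 1
    apply Finset.filter_true_of_mem
    intro c' hc'
    exact hfib_clt c' hc'
  rw [rk, hsplit, Finset.card_union_of_disjoint
    (Finset.disjoint_of_subset_right (Finset.filter_subset _ _) (U_disj hd hT)),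
    hT.betaRun_card hi1]
  rfl

lemma rhoA_i_iff {c : ℕ × ℕ} (hc : c ∈ μ.cells) :
    runIdx μ A (A c) = i ↔ c ∈ belowCells μ T i j ∧
      rk (belowCells μ T i j) c < betaRun n μ T j + i - j := by
  constructor
  · exact memU_of_rhoA_i hd hT hA hrA hc
  · rintro ⟨hcU, hrk⟩
    have := redistrib_rk hd hT hA hrA hcU
    rwa [if_pos hrk] at this

lemma rhoA_j_iff {c : ℕ × ℕ} (hc : c ∈ μ.cells) :
    runIdx μ A (A c) = j ↔ c ∈ QaS μ T j ∨ (c ∈ belowCells μ T i j ∧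
      betaRun n μ T j + i - j ≤ rk (belowCells μ T i j) c) := by
  have hij := i_lt_j hd hT
  constructor
  · intro h
    by_cases h1 : runIdx μ T (T c) = i
    · have hcU : c ∈ belowCells μ T i j := by
        rw [U_eq hd hT]
        exact Finset.mem_union_left _ (by simp only [fib, Finset.mem_filter]; exact ⟨hc, h1⟩)
      right
      refine ⟨hcU, ?_⟩
      have := redistrib_rk hd hT hA hrA hcU
      by_contra hlt
      rw [if_pos (by omega)] at this
      omega
    · by_cases h2 : runIdx μ T (T c) = j
      · by_cases h3 : c.1 + 1 < j
        · have hcU : c ∈ belowCells μ T i j := by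
            rw [U_eq hd hT]
            exact Finset.mem_union_right _
              (by simp only [QbS, fib, Finset.mem_filter]; exact ⟨⟨hc, h2⟩, h3⟩)
          right
          refine ⟨hcU, ?_⟩
          have := redistrib_rk hd hT hA hrA hcU
          by_contra hlt
          rw [if_pos (by omega)] at this
          omega
        · left
          simp only [QaS, fib, Finset.mem_filter]
          exact ⟨⟨hc, h2⟩, h3⟩
      · exfalso
        have := hrA.1 c hc h1 h2
        omega
  · intro h
    rcases h with h | ⟨hcU, hge⟩
    · exact rhoA_qa hd hT hrA h
    · have := redistrib_rk hd hT hA hrA hcU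
      rwa [if_neg (by omega)] at this

omit hA in
lemma rhoA_other_iff {c : ℕ × ℕ} (hc : c ∈ μ.cells) {r : ℕ} (hri : r ≠ i) (hrj : r ≠ j) :
    (runIdx μ A (A c) = r ↔ runIdx μ T (T c) = r) := by
  constructor
  · intro h
    by_cases h1 : runIdx μ T (T c) = i
    · exfalso
      have hcU : c ∈ belowCells μ T i j := by
        rw [U_eq hd hT]
        exact Finset.mem_union_left _ (by simp only [fib, Finset.mem_filter]; exact ⟨hc, h1⟩)
      have := hrA.2.2 c hcU
      split_ifs at this <;> omega
    · by_cases h2 : runIdx μ T (T c) = j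
      · by_cases h3 : c.1 + 1 < j
        · exfalso
          have hcU : c ∈ belowCells μ T i j := by
            rw [U_eq hd hT]
            exact Finset.mem_union_right _
              (by simp only [QbS, fib, Finset.mem_filter]; exact ⟨⟨hc, h2⟩, h3⟩)
          have := hrA.2.2 c hcU
          split_ifs at this <;> omega
        · exfalso
          have := hrA.2.1 c hc h2 (by omega)
          omega
      · rw [← hrA.1 c hc h1 h2]
        exact h
  · intro h
    rw [← h]
    exact hrA.1 c hc (by omega) (by omega)

lemma fibA_i : fib μ A i = (belowCells μ T i j).filter
    (fun c => rk (belowCells μ T i j) c < betaRun n μ T j + i - j) := by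
  ext c
  simp only [fib, Finset.mem_filter]
  constructor
  · rintro ⟨hc, h⟩
    obtain ⟨h1, h2⟩ := memU_of_rhoA_i hd hT hA hrA hc h
    exact ⟨h1, h2⟩
  · rintro ⟨hcU, hrk⟩
    have hc : c ∈ μ.cells := by
      simp only [belowCells, Finset.mem_filter] at hcU
      exact hcU.1
    exact ⟨hc, (rhoA_i_iff hd hT hA hrA hc).2 ⟨hcU, hrk⟩⟩

lemma betaA_i : betaRun n μ A i = betaRun n μ T j + i - j := by
  have h := hA.betaRun_card hd.2.2.2.1
  rw [show μ.cells.filter (fun c => runIdx μ A (A c) = i) = fib μ A i from rfl,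
    fibA_i hd hT hA hrA, card_rk_lt] at h
  rw [h]
  have := kst_le_U hd hT
  omega

lemma betaA_j : betaRun n μ A j = betaRun n μ T i + j - i := by
  have hij := i_lt_j hd hT
  have hj2 := two_le_j hd hT
  have h := hA.betaRun_card (show 1 ≤ j by omega)
  have hset : μ.cells.filter (fun c => runIdx μ A (A c) = j) =
      QaS μ T j ∪ (belowCells μ T i j).filter
        (fun c => betaRun n μ T j + i - j ≤ rk (belowCells μ T i j) c) := by
    ext c
    simp only [Finset.mem_filter, Finset.mem_union]
    constructor
    · rintro ⟨hc, hcc⟩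
      rcases (rhoA_j_iff hd hT hA hrA hc).1 hcc with hh | hh
      · exact Or.inl hh
      · exact Or.inr ⟨hh.1, hh.2⟩
    · intro hcc
      have hc : c ∈ μ.cells := by
        rcases hcc with hh | hh
        · simp only [QaS, fib, Finset.mem_filter] at hh
          exact hh.1.1
        · simp only [belowCells, Finset.mem_filter] at hh
          exact hh.1.1
      refine ⟨hc, (rhoA_j_iff hd hT hA hrA hc).2 ?_⟩
      rcases hcc with hh | hh
      · exact Or.inl hh
      · exact Or.inr ⟨hh.1, hh.2⟩
  have hdisj : Disjoint (QaS μ T j) ((belowCells μ T i j).filter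
      (fun c => betaRun n μ T j + i - j ≤ rk (belowCells μ T i j) c)) := by
    rw [Finset.disjoint_left]
    intro c hc1 hc2
    simp only [QaS, fib, Finset.mem_filter] at hc1
    simp only [Finset.mem_filter] at hc2
    simp only [belowCells, Finset.mem_filter] at hc2
    omega
  rw [hset, Finset.card_union_of_disjoint hdisj] at h
  have hcompl : ((belowCells μ T i j).filter
      (fun c => betaRun n μ T j + i - j ≤ rk (belowCells μ T i j) c)).card =
      (belowCells μ T i j).card - (betaRun n μ T j + i - j) := by
    have hpart := Finset.card_filter_add_card_filter_not
      (s := belowCells μ T i j)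
      (p := fun c => rk (belowCells μ T i j) c < betaRun n μ T j + i - j)
    rw [card_rk_lt] at hpart
    have hkle := kst_le_U hd hT
    have hmineq : min (betaRun n μ T j + i - j) (belowCells μ T i j).card =
        betaRun n μ T j + i - j := by omega
    rw [hmineq] at hpart
    have hcongr : (belowCells μ T i j).filter
        (fun c => ¬ rk (belowCells μ T i j) c < betaRun n μ T j + i - j) =
        (belowCells μ T i j).filter
        (fun c => betaRun n μ T j + i - j ≤ rk (belowCells μ T i j) c) := by
      apply Finset.filter_congr
      intro c hc
      simp only [not_lt]
    rw [hcongr] at hpart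
    omega
  rw [hcompl] at h
  have h1 := qa_card_le hd hT hd.2.2.2.1 hij
  have h2 := bj_split hd hT
  have h3 := U_card hd hT
  have h4 := j_le_beta_add hd hT
  omega

lemma betaA_other {r : ℕ} (hr1 : 1 ≤ r) (hri : r ≠ i) (hrj : r ≠ j) :
    betaRun n μ A r = betaRun n μ T r := by
  rw [hA.betaRun_card hr1, hT.betaRun_card hr1]
  congr 1
  ext c
  simp only [Finset.mem_filter]
  constructor
  · rintro ⟨hc, h⟩
    exact ⟨hc, (rhoA_other_iff hd hT hrA hc hri hrj).1 h⟩
  · rintro ⟨hc, h⟩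
    exact ⟨hc, (rhoA_other_iff hd hT hrA hc hri hrj).2 h⟩

lemma frss_A {t : ℕ} (ht : t < j) : FirstRunsSS n μ A t := by
  rw [firstRunsSS_iff hA]
  intro c hc hr
  set r := runIdx μ A (A c) with hrdef
  have hpos := runIdx_pos μ A (A c)
  by_cases hri : r = i
  · rw [hri] at hrdef
    have := rhoA_i_row hd hT hA hrA hc hrdef.symm
    omega
  · have hrj : r ≠ j := by omega
    have hT' : runIdx μ T (T c) = r := (rhoA_other_iff hd hT hrA hc hri hrj).1 rfl
    have hfr := frss_pred hd hT
    rw [firstRunsSS_iff hT] at hfr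
    have := hfr c hc (by omega)
    omega

lemma not_frss_A : ¬ FirstRunsSS n μ A j := by
  have hij := i_lt_j hd hT
  have hi1 := hd.2.2.2.1
  have hj2 := two_le_j hd hT
  rw [firstRunsSS_iff hA]
  intro hcon
  -- there is a cell of run j of A strictly below row j - 1
  have hklt : betaRun n μ T j + i - j < (belowCells μ T i j).card := by
    have h1 := qa_card_le hd hT hi1 hij
    have h2 := bj_split hd hT
    have h3 := U_card hd hT
    have h4 := j_le_beta_add hd hT
    have h5 := beta_pos hd hT hi1 (by omega)
    omega
  obtain ⟨c, hcU, hrk⟩ := exists_rk hklt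
  have hcj : runIdx μ A (A c) = j := by
    have := redistrib_rk hd hT hA hrA hcU
    rwa [hrk, if_neg (by omega)] at this
  have hlow := U_low hd hT hA hrA hcU
  have hc : c ∈ μ.cells := by
    simp only [belowCells, Finset.mem_filter] at hcU
    exact hcU.1
  have := hcon c hc (by omega)
  omega

lemma slinkData_A : SlinkData n μ A i j := by
  have hij := i_lt_j hd hT
  have hi1 := hd.2.2.2.1
  have hj2 := two_le_j hd hT
  refine ⟨by omega, not_frss_A hd hT hA hrA, ?_, hi1, ?_, ?_⟩
  · intro j' hj'
    exact frss_A hd hT hA hrA hj'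
  · -- the condition at i
    rw [betaA_j hd hT hA hrA]
    rcases Nat.lt_or_ge (i + 1) j with hlt | hge
    · -- shapeRow μ A j (i+1) = betaRun T (i+1)
      have hset : μ.cells.filter (fun c => runIdx μ A (A c) ≤ j ∧ c.1 = i + 1 - 1) =
          fib μ T (i + 1) := by
        ext c
        simp only [Finset.mem_filter, fib]
        constructor
        · rintro ⟨hc, hle, hrow⟩
          refine ⟨hc, ?_⟩
          set r := runIdx μ A (A c) with hrdef
          by_cases hri : r = i
          · exfalso
            have := rhoA_i_row hd hT hA hrA hc (hrdef.symm.trans hri)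
            omega
          · by_cases hrj : r = j
            · exfalso
              rcases (rhoA_j_iff hd hT hA hrA hc).1 (hrdef.symm.trans hrj) with hh | hh
              · simp only [QaS, fib, Finset.mem_filter] at hh
                have := qa_row hd hT hh.1.1 hh.1.2 (by omega)
                omega
              · have := U_low hd hT hA hrA hh.1
                omega
            · have hTr : runIdx μ T (T c) = r :=
                (rhoA_other_iff hd hT hrA hc hri hrj).1 rfl
              have := (run_prefix_iff hd hT hc (r := r)
                (by have := runIdx_pos μ A (A c); omega) (by omega)).1 hTr
              have hreq : r = i + 1 := by omega
              omega
        · rintro ⟨hc, hr⟩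
          have hA' : runIdx μ A (A c) = i + 1 :=
            (rhoA_other_iff hd hT hrA hc (by omega) (by omega)).2 hr
          have := (run_prefix_iff hd hT hc (r := i + 1) (by omega) (by omega)).1 hr
          refine ⟨hc, by omega, by omega⟩
      have hbound : betaRun n μ T (i + 1) ≤ betaRun n μ T i :=
        beta_antitone hd hT hi1 (by omega) hlt
      unfold shapeRow
      rw [hset]
      have : (fib μ T (i+1)).card = betaRun n μ T (i+1) :=
        (hT.betaRun_card (by omega)).symm
      rw [this]
      omega
    · -- i + 1 = j ; shapeRow μ A j j = (QaS).card
      have hieq : i + 1 = j := by omega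
      have hset : μ.cells.filter (fun c => runIdx μ A (A c) ≤ j ∧ c.1 = i + 1 - 1) =
          QaS μ T j := by
        ext c
        simp only [Finset.mem_filter]
        constructor
        · rintro ⟨hc, hle, hrow⟩
          set r := runIdx μ A (A c) with hrdef
          by_cases hri : r = i
          · exfalso
            have := rhoA_i_row hd hT hA hrA hc (hrdef.symm.trans hri)
            omega
          · by_cases hrj : r = j
            · rcases (rhoA_j_iff hd hT hA hrA hc).1 (hrdef.symm.trans hrj) with hh | hh
              · exact hh
              · exfalso
                have := U_low hd hT hA hrA hh.1
                omega
            · exfalso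
              have hTr : runIdx μ T (T c) = r :=
                (rhoA_other_iff hd hT hrA hc hri hrj).1 rfl
              have := (run_prefix_iff hd hT hc (r := r)
                (by have := runIdx_pos μ A (A c); omega) (by omega)).1 hTr
              omega
        · intro hcq
          have hcm : c ∈ μ.cells := by
            simp only [QaS, fib, Finset.mem_filter] at hcq
            exact hcq.1.1
          have hrow : c.1 = j - 1 := by
            simp only [QaS, fib, Finset.mem_filter] at hcq
            exact qa_row hd hT hcq.1.1 hcq.1.2 (by omega)
          have := rhoA_qa hd hT hrA hcq
          exact ⟨hcm, by omega, by omega⟩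
      unfold shapeRow
      rw [hset]
      have hm := qa_card_le hd hT hi1 hij
      omega
  · -- minimality
    intro i' hi'1 hi'lt
    rw [betaA_j hd hT hA hrA]
    have hsub : fib μ T (i' + 1) ⊆
        μ.cells.filter (fun c => runIdx μ A (A c) ≤ j ∧ c.1 = i' + 1 - 1) := by
      intro c hc
      simp only [fib, Finset.mem_filter] at hc ⊢
      obtain ⟨hcm, hcr⟩ := hc
      have hrow := (run_prefix_iff hd hT hcm (r := i' + 1) (by omega) (by omega)).1 hcr
      rcases Nat.lt_or_ge (i' + 1) i with hlt | hge
      · have hA' : runIdx μ A (A c) = i' + 1 :=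
          (rhoA_other_iff hd hT hrA hcm (by omega) (by omega)).2 hcr
        exact ⟨hcm, by omega, by omega⟩
      · -- i' + 1 = i
        have hieq : i' + 1 = i := by omega
        have hcU : c ∈ belowCells μ T i j := by
          rw [U_eq hd hT]
          apply Finset.mem_union_left
          simp only [fib, Finset.mem_filter]
          exact ⟨hcm, by omega⟩
        have := redistrib_rk hd hT hA hrA hcU
        split_ifs at this
        · exact ⟨hcm, by omega, by omega⟩
        · exact ⟨hcm, by omega, by omega⟩
    have hcard : betaRun n μ T (i' + 1) ≤ shapeRow μ A j (i' + 1) := by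
      unfold shapeRow
      rw [hT.betaRun_card (show 1 ≤ i' + 1 by omega)]
      exact Finset.card_le_card hsub
    have hmono : betaRun n μ T i ≤ betaRun n μ T (i' + 1) :=
      beta_antitone hd hT (by omega) (by omega) hij
    omega

end ASide

/-- The quantity `x = β_j - 1 - β_{j-1}`. -/
noncomputable def xv (n : ℕ) (μ : YoungDiagram) (T : ℕ × ℕ → ℕ) (j : ℕ) : ℕ :=
  betaRun n μ T j - 1 - betaRun n μ T (j - 1)

/-- The first `x` cells of `Qb` in reading order. -/
noncomputable def XS (n : ℕ) (μ : YoungDiagram) (T : ℕ × ℕ → ℕ) (j : ℕ) : Finset (ℕ × ℕ) :=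
  (QbS μ T j).filter (fun c => rk (QbS μ T j) c < xv n μ T j)

section CSide

variable {A C : ℕ × ℕ → ℕ}
variable (hT : IsSYT n μ T) (hA : IsSYT n μ A)
variable (hrA : Redistrib μ T A i j (betaRun n μ T j + i - j))
variable (hC : IsSYT n μ C)
variable (hrC : Redistrib μ T C (j - 1) j (betaRun n μ T j - 1))
variable (hii : i + 1 < j)

include hd hT hA hrA in
lemma qb_low {c : ℕ × ℕ} (hc : c ∈ QbS μ T j) : c.1 + 1 ≤ i := by
  apply U_low hd hT hA hrA
  rw [U_eq hd hT]
  exact Finset.mem_union_right _ hc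

include hd hT hA hrA hii in
lemma shapeRow_i1 : shapeRow μ T j (i + 1) = betaRun n μ T (i + 1) := by
  have hij := i_lt_j hd hT
  have hset : μ.cells.filter (fun c => runIdx μ T (T c) ≤ j ∧ c.1 = i + 1 - 1) =
      fib μ T (i + 1) := by
    ext c
    simp only [Finset.mem_filter, fib]
    constructor
    · rintro ⟨hc, hle, hrow⟩
      refine ⟨hc, ?_⟩
      set r := runIdx μ T (T c) with hrdef
      have hpos := runIdx_pos μ T (T c)
      by_cases hrj : r = j
      · exfalso
        by_cases hbel : c.1 + 1 < j
        · have : c ∈ QbS μ T j := by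
            simp only [QbS, fib, Finset.mem_filter]
            exact ⟨⟨hc, hrdef.symm.trans hrj⟩, hbel⟩
          have := qb_low hd hT hA hrA this
          omega
        · have := qa_row hd hT hc (hrdef.symm.trans hrj) (by omega)
          omega
      · have := (run_prefix_iff hd hT hc (r := r) (by omega) (by omega)).1 rfl
        omega
    · rintro ⟨hc, hr⟩
      have := (run_prefix_iff hd hT hc (r := i + 1) (by omega) (by omega)).1 hr
      exact ⟨hc, by omega, by omega⟩
  unfold shapeRow
  rw [hset, hT.betaRun_card (by omega)]
  rfl

include hd hT hA hrA hii in
lemma bj_large : betaRun n μ T (j - 1) + 2 ≤ betaRun n μ T j := by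
  have hcond := hd.2.2.2.2.1
  rw [shapeRow_i1 hd hT hA hrA hii] at hcond
  have hmono : betaRun n μ T (j - 1) ≤ betaRun n μ T (i + 1) :=
    beta_antitone hd hT (by omega) (by omega) (by omega)
  omega

include hd hT hA hrA hii in
lemma beta_i1_le_kst : betaRun n μ T (i + 1) ≤ betaRun n μ T j + i - j := by
  have hcond := hd.2.2.2.2.1
  rw [shapeRow_i1 hd hT hA hrA hii] at hcond
  omega

include hd hT hA hrA hii in
lemma kst_le_bix : betaRun n μ T j + i - j ≤ betaRun n μ T i + xv n μ T j := by
  have hN2 := bj_large hd hT hA hrA hii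
  have hG1 : betaRun n μ T (j - 1) ≤ betaRun n μ T i :=
    beta_antitone hd hT hd.2.2.2.1 (by omega) (by omega)
  unfold xv
  omega

include hd hT in
lemma V_eq : belowCells μ T (j - 1) j = fib μ T (j - 1) ∪ QbS μ T j := by
  have hj2 := two_le_j hd hT
  ext c
  simp only [belowCells, fib, QbS, Finset.mem_filter, Finset.mem_union]
  constructor
  · rintro ⟨hc, hor, hrow⟩
    rcases hor with h | h
    · exact Or.inl ⟨hc, h⟩
    · exact Or.inr ⟨⟨hc, h⟩, hrow⟩
  · rintro (⟨hc, h⟩ | ⟨⟨hc, h⟩, hrow⟩)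
    · refine ⟨hc, Or.inl h, ?_⟩
      have := (run_prefix_iff hd hT hc (by omega) (by omega)).1 h
      omega
    · exact ⟨hc, Or.inr h, hrow⟩

include hd hT in
lemma V_disj : Disjoint (fib μ T (j - 1)) (QbS μ T j) := by
  have hj2 := two_le_j hd hT
  rw [Finset.disjoint_left]
  intro c hc hc'
  simp only [fib, QbS, Finset.mem_filter] at hc hc'
  omega

include hd hT hA hrA hii in
lemma rk_V_rb {c : ℕ × ℕ} (hc : c ∈ fib μ T (j - 1)) :
    rk (belowCells μ T (j - 1) j) c = c.2 := by
  have hj2 := two_le_j hd hT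
  simp only [fib, Finset.mem_filter] at hc
  have hrow := (run_prefix_iff hd hT hc.1 (r := j - 1) (by omega) (by omega)).1 hc.2
  have hset : (belowCells μ T (j - 1) j).filter (fun c' => clt c' c) =
      (Finset.range c.2).image (fun y => (j - 1 - 1, y)) := by
    ext c'
    simp only [Finset.mem_filter, Finset.mem_image, Finset.mem_range]
    constructor
    · rintro ⟨hc', hclt⟩
      rw [V_eq hd hT] at hc'
      have hc'row : c'.1 ≤ j - 2 := by
        rcases Finset.mem_union.1 hc' with hh | hh
        · simp only [fib, Finset.mem_filter] at hh
          have := (run_prefix_iff hd hT hh.1 (r := j - 1) (by omega) (by omega)).1 hh.2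
          omega
        · have := qb_low hd hT hA hrA hh
          omega
      rcases hclt with hh | ⟨hh1, hh2⟩
      · omega
      · exact ⟨c'.2, hh2, Prod.ext (by omega) rfl⟩
    · rintro ⟨y, hy, rfl⟩
      have hmem := run_prefix_mem hd hT (r := j - 1) (by omega) (by omega)
        (y := y) (by omega)
      refine ⟨?_, Or.inr ⟨by omega, by show y < c.2; omega⟩⟩
      rw [V_eq hd hT]
      apply Finset.mem_union_left
      simp only [fib, Finset.mem_filter]
      exact ⟨hmem.1, hmem.2⟩
  rw [rk, hset, Finset.card_image_of_injOn, Finset.card_range]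
  intro a ha b hb hab
  have := congrArg Prod.snd hab
  simpa using this

include hd hT hA hrA hii in
lemma rk_V_qb {c : ℕ × ℕ} (hc : c ∈ QbS μ T j) :
    rk (belowCells μ T (j - 1) j) c = betaRun n μ T (j - 1) + rk (QbS μ T j) c := by
  have hj2 := two_le_j hd hT
  have hclow := qb_low hd hT hA hrA hc
  have hfib_clt : ∀ c' ∈ fib μ T (j - 1), clt c' c := by
    intro c' hc'
    simp only [fib, Finset.mem_filter] at hc'
    have h' := (run_prefix_iff hd hT hc'.1 (by omega) (by omega)).1 hc'.2
    exact Or.inl (by omega)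
  have hsplit : (belowCells μ T (j - 1) j).filter (fun c' => clt c' c) =
      fib μ T (j - 1) ∪ (QbS μ T j).filter (fun c' => clt c' c) := by
    rw [V_eq hd hT, Finset.filter_union]
    congr 1
    exact Finset.filter_true_of_mem hfib_clt
  rw [rk, hsplit, Finset.card_union_of_disjoint
    (Finset.disjoint_of_subset_right (Finset.filter_subset _ _) (V_disj hd hT)),
    hT.betaRun_card (show 1 ≤ j - 1 by omega)]
  rfl

include hd hT hC hrC in
lemma redistrib_rk_C {c : ℕ × ℕ} (hc : c ∈ belowCells μ T (j - 1) j) :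
    runIdx μ C (C c) =
      if rk (belowCells μ T (j - 1) j) c < betaRun n μ T j - 1 then j - 1 else j := by
  have h := hrC.2.2 c hc
  have hbr : ((belowCells μ T (j - 1) j).filter
      (fun c' => c.1 < c'.1 ∨ (c'.1 = c.1 ∧ c'.2 < c.2))).card
      = rk (belowCells μ T (j - 1) j) c := by
    unfold rk
    congr 1
    ext c'
    simp only [Finset.mem_filter]
    unfold clt
    tauto
  rwa [hbr] at h

include hd hT hA hrA hC hrC hii in
lemma rhoC_rb {c : ℕ × ℕ} (hc : c ∈ fib μ T (j - 1)) : runIdx μ C (C c) = j - 1 := by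
  have hN2 := bj_large hd hT hA hrA hii
  have hcV : c ∈ belowCells μ T (j - 1) j := by
    rw [V_eq hd hT]; exact Finset.mem_union_left _ hc
  have hrk := rk_V_rb hd hT hA hrA hii hc
  have hcol : c.2 < betaRun n μ T (j - 1) := by
    simp only [fib, Finset.mem_filter] at hc
    exact ((run_prefix_iff hd hT hc.1 (by omega) (by omega)).1 hc.2).2
  have := redistrib_rk_C hd hT hC hrC hcV
  rwa [hrk, if_pos (by omega)] at this

include hd hT hA hrA hC hrC hii in
lemma rhoC_qb {c : ℕ × ℕ} (hc : c ∈ QbS μ T j) :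
    runIdx μ C (C c) =
      if rk (QbS μ T j) c < xv n μ T j then j - 1 else j := by
  have hN2 := bj_large hd hT hA hrA hii
  have hcV : c ∈ belowCells μ T (j - 1) j := by
    rw [V_eq hd hT]; exact Finset.mem_union_right _ hc
  have hrk := rk_V_qb hd hT hA hrA hii hc
  have := redistrib_rk_C hd hT hC hrC hcV
  rw [hrk] at this
  unfold xv
  rcases Nat.lt_or_ge (rk (QbS μ T j) c) (betaRun n μ T j - 1 - betaRun n μ T (j - 1))
    with hh | hh
  · rw [if_pos (by omega)] at this
    rw [if_pos (by omega)]
    exact this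
  · rw [if_neg (by omega)] at this
    rw [if_neg (by omega)]
    exact this

include hd hT hrC in
lemma rhoC_qa {c : ℕ × ℕ} (hc : c ∈ QaS μ T j) : runIdx μ C (C c) = j := by
  simp only [QaS, fib, Finset.mem_filter] at hc
  exact hrC.2.1 c hc.1.1 hc.1.2 (by omega)

include hd hT hrC in
lemma rhoC_other {c : ℕ × ℕ} (hc : c ∈ μ.cells) (h1 : runIdx μ T (T c) ≠ j - 1)
    (h2 : runIdx μ T (T c) ≠ j) : runIdx μ C (C c) = runIdx μ T (T c) :=
  hrC.1 c hc h1 h2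

include hd hT hA hrA hC hrC hii in
lemma fibC_j1 : fib μ C (j - 1) = fib μ T (j - 1) ∪ XS n μ T j := by
  have hj2 := two_le_j hd hT
  have hN2 := bj_large hd hT hA hrA hii
  ext c
  simp only [fib, XS, Finset.mem_filter, Finset.mem_union]
  constructor
  · rintro ⟨hc, hcr⟩
    by_cases h1 : runIdx μ T (T c) = j - 1
    · exact Or.inl ⟨hc, h1⟩
    · by_cases h2 : runIdx μ T (T c) = j
      · by_cases h3 : c.1 + 1 < j
        · have hq : c ∈ QbS μ T j := by
            simp only [QbS, fib, Finset.mem_filter]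
            exact ⟨⟨hc, h2⟩, h3⟩
          have := rhoC_qb hd hT hA hrA hC hrC hii hq
          rw [hcr] at this
          split_ifs at this with hx
          · right
            simp only [QbS, fib, Finset.mem_filter]
            exact ⟨⟨⟨hc, h2⟩, h3⟩, hx⟩
          · omega
        · exfalso
          have := hrC.2.1 c hc h2 (by omega)
          omega
      · exfalso
        have := hrC.1 c hc h1 h2
        omega
  · intro h
    rcases h with ⟨hc, hcr⟩ | ⟨hq, hx⟩
    · exact ⟨hc, rhoC_rb hd hT hA hrA hC hrC hii (by
        simp only [fib, Finset.mem_filter]; exact ⟨hc, hcr⟩)⟩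
    · have hq' := hq
      simp only [QbS, fib, Finset.mem_filter] at hq'
      refine ⟨hq'.1.1, ?_⟩
      have := rhoC_qb hd hT hA hrA hC hrC hii hq
      rwa [if_pos hx] at this

include hd hT hrC hii in
lemma fibC_other {r : ℕ} (hr1 : r ≠ j - 1) (hrj : r ≠ j) : fib μ C r = fib μ T r := by
  have hj2 := two_le_j hd hT
  ext c
  simp only [fib, Finset.mem_filter]
  constructor
  · rintro ⟨hc, hcr⟩
    refine ⟨hc, ?_⟩
    by_cases h1 : runIdx μ T (T c) = j - 1
    · exfalso
      have hcV : c ∈ belowCells μ T (j - 1) j := by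
        rw [V_eq hd hT]
        apply Finset.mem_union_left
        simp only [fib, Finset.mem_filter]
        exact ⟨hc, h1⟩
      have := hrC.2.2 c hcV
      split_ifs at this <;> omega
    · by_cases h2 : runIdx μ T (T c) = j
      · exfalso
        by_cases h3 : c.1 + 1 < j
        · have hcV : c ∈ belowCells μ T (j - 1) j := by
            rw [V_eq hd hT]
            apply Finset.mem_union_right
            simp only [QbS, fib, Finset.mem_filter]
            exact ⟨⟨hc, h2⟩, h3⟩
          have := hrC.2.2 c hcV
          split_ifs at this <;> omega
        · have := hrC.2.1 c hc h2 (by omega)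
          omega
      · rw [← hrC.1 c hc h1 h2]
        exact hcr
  · rintro ⟨hc, hcr⟩
    exact ⟨hc, by rw [hrC.1 c hc (by omega) (by omega)]; exact hcr⟩

include hd hT hA hrA hii in
lemma x_le_w : xv n μ T j ≤ (QbS μ T j).card := by
  have hsplit := bj_split hd hT
  have hm := qa_card_le hd hT (r := j - 1) (by have := two_le_j hd hT; omega)
    (by have := two_le_j hd hT; omega)
  unfold xv
  omega

include hd hT hA hrA hii in
lemma x_card : (XS n μ T j).card = xv n μ T j := by
  unfold XS
  rw [card_rk_lt]
  have := x_le_w hd hT hA hrA hii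
  omega

include hd hT hA hrA hC hrC hii in
lemma betaC_j1 : betaRun n μ C (j - 1) = betaRun n μ T j - 1 := by
  have hj2 := two_le_j hd hT
  have hN2 := bj_large hd hT hA hrA hii
  have h := hC.betaRun_card (show 1 ≤ j - 1 by omega)
  rw [show μ.cells.filter (fun c => runIdx μ C (C c) = j - 1) = fib μ C (j - 1) from rfl,
    fibC_j1 hd hT hA hrA hC hrC hii] at h
  have hdisj : Disjoint (fib μ T (j - 1)) (XS n μ T j) :=
    Finset.disjoint_of_subset_right (Finset.filter_subset _ _) (V_disj hd hT)
  rw [Finset.card_union_of_disjoint hdisj, x_card hd hT hA hrA hii] at h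
  have hfibcard : (fib μ T (j - 1)).card = betaRun n μ T (j - 1) :=
    (hT.betaRun_card (show 1 ≤ j - 1 by omega)).symm
  rw [h, hfibcard]
  unfold xv
  omega

include hd hT hA hrA hii in
lemma xs_low {c : ℕ × ℕ} (hc : c ∈ XS n μ T j) : c.1 + 1 ≤ i :=
  qb_low hd hT hA hrA (Finset.filter_subset _ _ hc)

include hd hT in
lemma qb_ge {c : ℕ × ℕ} (hc : c ∈ QbS μ T j) : betaRun n μ T (c.1 + 1) ≤ c.2 := by
  simp only [QbS, fib, Finset.mem_filter] at hc
  by_contra hlt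
  have := (run_prefix_iff hd hT hc.1.1 (r := c.1 + 1) (by omega) (by omega)).2
    ⟨by omega, by omega⟩
  omega

include hd hT in
lemma qb_lt_row {c : ℕ × ℕ} (hc : c ∈ QbS μ T j) (h1 : 1 ≤ c.1) :
    c.2 < betaRun n μ T c.1 := by
  simp only [QbS, fib, Finset.mem_filter] at hc
  obtain ⟨a, b⟩ := c
  simp only at hc h1 ⊢
  have hmem : (a, b) ∈ μ := by
    have := hc.1.1
    rwa [YoungDiagram.mem_cells] at this
  have hmem' : ((a : ℕ) - 1, b) ∈ μ := μ.up_left_mem (show a - 1 ≤ a by omega) le_rfl hmem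
  have hcells' : ((a : ℕ) - 1, b) ∈ μ.cells := by rwa [YoungDiagram.mem_cells]
  have hle : runIdx μ T (T (a - 1, b)) ≤ runIdx μ T (T (a, b)) :=
    hT.rho_col_le (by omega) hmem
  have hpos := runIdx_pos μ T (T (a - 1, b))
  by_cases hj' : runIdx μ T (T (a - 1, b)) = j
  · exact (hT.no_col_pair (show a - 1 < a by omega) hmem (by rw [hj', hc.1.2])).elim
  · have hlt : runIdx μ T (T (a - 1, b)) < j := by
      rw [hc.1.2] at hle; omega
    have hiff := (run_prefix_iff hd hT hcells'
      (r := runIdx μ T (T (a - 1, b))) (by omega) (by omega)).1 rfl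
    have h1' := hiff.1
    have h2' := hiff.2
    simp only at h1' h2'
    have hra : runIdx μ T (T (a - 1, b)) = a := by omega
    rw [hra] at h2'
    exact h2'

end CSide

section CSide2

variable {A C : ℕ × ℕ → ℕ}
variable (hT : IsSYT n μ T) (hA : IsSYT n μ A)
variable (hrA : Redistrib μ T A i j (betaRun n μ T j + i - j))
variable (hC : IsSYT n μ C)
variable (hrC : Redistrib μ T C (j - 1) j (betaRun n μ T j - 1))
variable (hii : i + 1 < j)

include hd hT hA hrA hii in
lemma x_pos : 1 ≤ xv n μ T j := by
  have := bj_large hd hT hA hrA hii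
  unfold xv
  omega

include hd hT hA hrA in
lemma qb_high_card {i' : ℕ} (h1 : 1 ≤ i') (h2 : i' < i) :
    ((QbS μ T j).filter (fun c => i' < c.1)).card ≤
      betaRun n μ T (i' + 1) - betaRun n μ T i := by
  have hij := i_lt_j hd hT
  have hbd : ∀ c ∈ (QbS μ T j).filter (fun c => i' < c.1),
      betaRun n μ T i ≤ c.2 ∧ c.2 < betaRun n μ T (i' + 1) := by
    intro c hc
    simp only [Finset.mem_filter] at hc
    have hlow := qb_low hd hT hA hrA hc.1
    have hge := qb_ge hd hT hc.1
    have hlt := qb_lt_row hd hT hc.1 (by omega)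
    constructor
    · calc betaRun n μ T i ≤ betaRun n μ T (c.1 + 1) :=
          beta_antitone hd hT (by omega) (by omega) (by omega)
      _ ≤ c.2 := hge
    · calc c.2 < betaRun n μ T c.1 := hlt
      _ ≤ betaRun n μ T (i' + 1) := beta_antitone hd hT (by omega) (by omega) (by omega)
  have hmap : ∀ c ∈ (QbS μ T j).filter (fun c => i' < c.1),
      c.2 ∈ Finset.Ico (betaRun n μ T i) (betaRun n μ T (i' + 1)) := by
    intro c hc
    have := hbd c hc
    exact Finset.mem_Ico.2 ⟨this.1, this.2⟩
  have hinj : ∀ c ∈ (QbS μ T j).filter (fun c => i' < c.1),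
      ∀ c' ∈ (QbS μ T j).filter (fun c => i' < c.1), c.2 = c'.2 → c = c' := by
    intro c hc c' hc' hcc
    have hcm := hc; have hcm' := hc'
    simp only [Finset.mem_filter] at hcm hcm'
    rcases Nat.lt_trichotomy c.1 c'.1 with hh | hh | hh
    · exfalso
      have hge := qb_ge hd hT hcm.1
      have hlt := qb_lt_row hd hT hcm'.1 (by omega)
      have hmono : betaRun n μ T c'.1 ≤ betaRun n μ T (c.1 + 1) := by
        apply beta_antitone hd hT (by omega) (by omega)
        have := qb_low hd hT hA hrA hcm'.1
        omega
      omega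
    · exact Prod.ext hh hcc
    · exfalso
      have hge := qb_ge hd hT hcm'.1
      have hlt := qb_lt_row hd hT hcm.1 (by omega)
      have hmono : betaRun n μ T c.1 ≤ betaRun n μ T (c'.1 + 1) := by
        apply beta_antitone hd hT (by omega) (by omega)
        have := qb_low hd hT hA hrA hcm.1
        omega
      omega
  calc ((QbS μ T j).filter (fun c => i' < c.1)).card
      ≤ (Finset.Ico (betaRun n μ T i) (betaRun n μ T (i' + 1))).card :=
        Finset.card_le_card_of_injOn (fun c => c.2) hmap (fun a ha b hb => hinj a ha b hb)
  _ = betaRun n μ T (i' + 1) - betaRun n μ T i := Nat.card_Ico _ _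

include hd hT in
lemma shapeRow_T_low {i' : ℕ} (h1 : 1 ≤ i') (h2 : i' + 1 < j) :
    shapeRow μ T j (i' + 1) =
      betaRun n μ T (i' + 1) + ((QbS μ T j).filter (fun c => c.1 = i')).card := by
  have hj2 := two_le_j hd hT
  have hset : μ.cells.filter (fun c => runIdx μ T (T c) ≤ j ∧ c.1 = i' + 1 - 1) =
      fib μ T (i' + 1) ∪ (QbS μ T j).filter (fun c => c.1 = i') := by
    ext c
    simp only [fib, QbS, Finset.mem_filter, Finset.mem_union]
    constructor
    · rintro ⟨hc, hle, hrow⟩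
      set r := runIdx μ T (T c) with hrdef
      have hpos := runIdx_pos μ T (T c)
      by_cases hrj : r = j
      · right
        refine ⟨⟨⟨hc, hrdef.symm.trans hrj⟩, by omega⟩, by omega⟩
      · left
        have := (run_prefix_iff hd hT hc (r := r) (by omega) (by omega)).1 rfl
        exact ⟨hc, by omega⟩
    · rintro (⟨hc, hr⟩ | ⟨⟨⟨hc, hr⟩, hbel⟩, hrow⟩)
      · have := (run_prefix_iff hd hT hc (r := i' + 1) (by omega) (by omega)).1 hr
        exact ⟨hc, by omega, by omega⟩
      · exact ⟨hc, by omega, by omega⟩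
  have hdisj : Disjoint (fib μ T (i' + 1)) ((QbS μ T j).filter (fun c => c.1 = i')) := by
    rw [Finset.disjoint_left]
    intro c hc hc'
    simp only [fib, QbS, Finset.mem_filter] at hc hc'
    omega
  unfold shapeRow
  rw [hset, Finset.card_union_of_disjoint hdisj, hT.betaRun_card (show 1 ≤ i' + 1 by omega)]
  rfl

include hd hT hA hrA hC hrC hii in
lemma slinkData_C : SlinkData n μ C i (j - 1) := by
  have hj2 := two_le_j hd hT
  have hij := i_lt_j hd hT
  have hi1 := hd.2.2.2.1
  have hN2 := bj_large hd hT hA hrA hii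
  have hxpos := x_pos hd hT hA hrA hii
  have hjβ := j_le_beta_add hd hT
  refine ⟨by omega, ?_, ?_, hi1, ?_, ?_⟩
  · -- ¬ FirstRunsSS (j-1)
    rw [firstRunsSS_iff hC]
    intro hcon
    have hw : 0 < (QbS μ T j).card := by
      have := x_le_w hd hT hA hrA hii
      omega
    obtain ⟨c, hcq, hrk0⟩ := exists_rk (k := 0) hw
    have hρ : runIdx μ C (C c) = j - 1 := by
      have := rhoC_qb hd hT hA hrA hC hrC hii hcq
      rwa [hrk0, if_pos (by omega)] at this
    have hlow := qb_low hd hT hA hrA hcq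
    have hc : c ∈ μ.cells := by
      simp only [QbS, fib, Finset.mem_filter] at hcq
      exact hcq.1.1
    have := hcon c hc (by omega)
    omega
  · -- FirstRunsSS t for t < j - 1
    intro t ht
    rw [firstRunsSS_iff hC]
    intro c hc hr
    set r := runIdx μ C (C c) with hrdef
    have hpos := runIdx_pos μ C (C c)
    have hcm : c ∈ fib μ C r := Finset.mem_filter.2 ⟨hc, rfl⟩
    rw [fibC_other hd hT hrC hii (by omega) (by omega)] at hcm
    simp only [fib, Finset.mem_filter] at hcm
    have hfr := frss_pred hd hT
    rw [firstRunsSS_iff hT] at hfr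
    have := hfr c hc (by omega)
    omega
  · -- the condition at i
    rw [betaC_j1 hd hT hA hrA hC hrC hii]
    rcases Nat.lt_or_ge (i + 1) (j - 1) with hlt | hge
    · have hset : μ.cells.filter (fun c => runIdx μ C (C c) ≤ j - 1 ∧ c.1 = i + 1 - 1) =
          fib μ T (i + 1) := by
        ext c
        simp only [Finset.mem_filter]
        constructor
        · rintro ⟨hc, hle, hrow⟩
          set r := runIdx μ C (C c) with hrdef
          have hpos := runIdx_pos μ C (C c)
          by_cases hrj : r = j - 1
          · exfalso
            have hcm : c ∈ fib μ C (j - 1) := by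
              simp only [fib, Finset.mem_filter]
              exact ⟨hc, hrdef.symm.trans hrj⟩
            rw [fibC_j1 hd hT hA hrA hC hrC hii] at hcm
            rcases Finset.mem_union.1 hcm with hh | hh
            · simp only [fib, Finset.mem_filter] at hh
              have := (run_prefix_iff hd hT hh.1 (r := j - 1) (by omega) (by omega)).1 hh.2
              omega
            · have := xs_low hd hT hA hrA hii hh
              omega
          · have hcm : c ∈ fib μ C r := Finset.mem_filter.2 ⟨hc, rfl⟩
            rw [fibC_other hd hT hrC hii (by omega) (by omega)] at hcm
            simp only [fib, Finset.mem_filter] at hcm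
            have := (run_prefix_iff hd hT hc (r := r) (by omega) (by omega)).1 hcm.2
            simp only [fib, Finset.mem_filter]
            exact ⟨hc, by omega⟩
        · intro hcm
          simp only [fib, Finset.mem_filter] at hcm
          have hρ : runIdx μ C (C c) = i + 1 := by
            have hcm2 : c ∈ fib μ T (i + 1) := by
              simp only [fib, Finset.mem_filter]; exact hcm
            rw [← fibC_other hd hT hrC hii (by omega) (by omega)] at hcm2
            simp only [fib, Finset.mem_filter] at hcm2
            exact hcm2.2
          have := (run_prefix_iff hd hT hcm.1 (r := i + 1) (by omega) (by omega)).1 hcm.2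
          exact ⟨hcm.1, by omega, by omega⟩
      unfold shapeRow
      rw [hset]
      have hc1 : (fib μ T (i + 1)).card = betaRun n μ T (i + 1) :=
        (hT.betaRun_card (by omega)).symm
      rw [hc1]
      have := beta_i1_le_kst hd hT hA hrA hii
      omega
    · -- i + 1 = j - 1
      have hieq : i + 1 = j - 1 := by omega
      have hset : μ.cells.filter (fun c => runIdx μ C (C c) ≤ j - 1 ∧ c.1 = i + 1 - 1) =
          fib μ T (j - 1) := by
        ext c
        simp only [Finset.mem_filter]
        constructor
        · rintro ⟨hc, hle, hrow⟩
          set r := runIdx μ C (C c) with hrdef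
          have hpos := runIdx_pos μ C (C c)
          by_cases hrj : r = j - 1
          · have hcm : c ∈ fib μ C (j - 1) := by
              simp only [fib, Finset.mem_filter]
              exact ⟨hc, hrdef.symm.trans hrj⟩
            rw [fibC_j1 hd hT hA hrA hC hrC hii] at hcm
            rcases Finset.mem_union.1 hcm with hh | hh
            · exact hh
            · exfalso
              have := xs_low hd hT hA hrA hii hh
              omega
          · exfalso
            have hcm : c ∈ fib μ C r := Finset.mem_filter.2 ⟨hc, rfl⟩
            rw [fibC_other hd hT hrC hii (by omega) (by omega)] at hcm
            simp only [fib, Finset.mem_filter] at hcm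
            have := (run_prefix_iff hd hT hc (r := r) (by omega) (by omega)).1 hcm.2
            omega
        · intro hcm
          have hρ := rhoC_rb hd hT hA hrA hC hrC hii hcm
          simp only [fib, Finset.mem_filter] at hcm
          have := (run_prefix_iff hd hT hcm.1 (r := j - 1) (by omega) (by omega)).1 hcm.2
          exact ⟨hcm.1, by omega, by omega⟩
      unfold shapeRow
      rw [hset]
      have hc1 : (fib μ T (j - 1)).card = betaRun n μ T (j - 1) :=
        (hT.betaRun_card (by omega)).symm
      rw [hc1]
      omega
  · -- minimality
    intro i' hi'1 hi'lt
    rw [betaC_j1 hd hT hA hrA hC hrC hii]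
    have hset : μ.cells.filter (fun c => runIdx μ C (C c) ≤ j - 1 ∧ c.1 = i' + 1 - 1) =
        fib μ T (i' + 1) ∪ (XS n μ T j).filter (fun c => c.1 = i') := by
      ext c
      simp only [Finset.mem_filter]
      constructor
      · rintro ⟨hc, hle, hrow⟩
        set r := runIdx μ C (C c) with hrdef
        have hpos := runIdx_pos μ C (C c)
        by_cases hrj : r = j - 1
        · have hcm : c ∈ fib μ C (j - 1) := by
            simp only [fib, Finset.mem_filter]
            exact ⟨hc, hrdef.symm.trans hrj⟩
          rw [fibC_j1 hd hT hA hrA hC hrC hii] at hcm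
          rcases Finset.mem_union.1 hcm with hh | hh
          · exfalso
            simp only [fib, Finset.mem_filter] at hh
            have := (run_prefix_iff hd hT hh.1 (r := j - 1) (by omega) (by omega)).1 hh.2
            omega
          · exact Finset.mem_union_right _ (Finset.mem_filter.2 ⟨hh, by omega⟩)
        · have hcm : c ∈ fib μ C r := Finset.mem_filter.2 ⟨hc, rfl⟩
          rw [fibC_other hd hT hrC hii (by omega) (by omega)] at hcm
          simp only [fib, Finset.mem_filter] at hcm
          have := (run_prefix_iff hd hT hc (r := r) (by omega) (by omega)).1 hcm.2
          apply Finset.mem_union_left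
          simp only [fib, Finset.mem_filter]
          exact ⟨hc, by omega⟩
      · intro hcm
        rcases Finset.mem_union.1 hcm with hh | hh
        · simp only [fib, Finset.mem_filter] at hh
          have hρ : runIdx μ C (C c) = i' + 1 := by
            have hcm2 : c ∈ fib μ T (i' + 1) := by
              simp only [fib, Finset.mem_filter]; exact hh
            rw [← fibC_other hd hT hrC hii (by omega) (by omega)] at hcm2
            simp only [fib, Finset.mem_filter] at hcm2
            exact hcm2.2
          have := (run_prefix_iff hd hT hh.1 (r := i' + 1) (by omega) (by omega)).1 hh.2
          exact ⟨hh.1, by omega, by omega⟩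
        · simp only [Finset.mem_filter] at hh
          obtain ⟨hhx, hhrow⟩ := hh
          have hρ : runIdx μ C (C c) = j - 1 := by
            have hq := Finset.filter_subset _ _ hhx
            have := rhoC_qb hd hT hA hrA hC hrC hii hq
            simp only [XS, Finset.mem_filter] at hhx
            rwa [if_pos hhx.2] at this
          have hc : c ∈ μ.cells := by
            have hq := Finset.filter_subset
              (fun c => rk (QbS μ T j) c < xv n μ T j) (QbS μ T j) hhx
            simp only [QbS, fib, Finset.mem_filter] at hq
            exact hq.1.1
          exact ⟨hc, by omega, by omega⟩
    have hdisj : Disjoint (fib μ T (i' + 1))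
        ((XS n μ T j).filter (fun c => c.1 = i')) := by
      rw [Finset.disjoint_left]
      intro c hc hc'
      simp only [fib, Finset.mem_filter] at hc
      have := Finset.filter_subset (fun c : ℕ × ℕ => c.1 = i') _ hc'
      simp only [XS, Finset.mem_filter] at this
      simp only [QbS, Finset.mem_filter] at this
      simp only [fib, Finset.mem_filter] at this
      omega
    unfold shapeRow
    rw [hset, Finset.card_union_of_disjoint hdisj]
    have hc1 : (fib μ T (i' + 1)).card = betaRun n μ T (i' + 1) :=
      (hT.betaRun_card (by omega)).symm
    rw [hc1]
    set xi := ((XS n μ T j).filter (fun c => c.1 = i')).card with hxi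
    by_cases hsubQ : (QbS μ T j).filter (fun c => c.1 = i') ⊆ XS n μ T j
    · -- use T's minimality
      have hxeq : (XS n μ T j).filter (fun c => c.1 = i') =
          (QbS μ T j).filter (fun c => c.1 = i') := by
        apply Finset.Subset.antisymm
        · exact Finset.filter_subset_filter _ (Finset.filter_subset _ _)
        · intro c hc
          simp only [Finset.mem_filter] at hc ⊢
          exact ⟨hsubQ (Finset.mem_filter.2 hc), hc.2⟩
      have hmin := hd.2.2.2.2.2 i' hi'1 (by omega)
      rw [shapeRow_T_low hd hT hi'1 (by omega)] at hmin
      rw [hxi, hxeq]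
      omega
    · -- counting argument
      have hc₂ : ∃ c₂ ∈ (QbS μ T j).filter (fun c => c.1 = i'),
          xv n μ T j ≤ rk (QbS μ T j) c₂ := by
        rcases Finset.not_subset.1 hsubQ with ⟨c₂, hc₂m, hc₂n⟩
        refine ⟨c₂, hc₂m, ?_⟩
        simp only [XS, Finset.mem_filter] at hc₂n
        push_neg at hc₂n
        exact hc₂n (Finset.filter_subset _ _ hc₂m)
      obtain ⟨c₂, hc₂m, hc₂rk⟩ := hc₂
      have hc₂row : c₂.1 = i' := (Finset.mem_filter.1 hc₂m).2
      have hc₂q : c₂ ∈ QbS μ T j := Finset.filter_subset _ _ hc₂m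
      -- X has no cells in rows < i'
      have hXlow : ∀ c₃ ∈ XS n μ T j, i' ≤ c₃.1 := by
        intro c₃ hc₃
        by_contra hlt
        simp only [XS, Finset.mem_filter] at hc₃
        have hclt : clt c₂ c₃ := Or.inl (by omega)
        have := rk_lt_rk hc₂q hclt
        omega
      -- x ≤ #(Qb in rows > i') + xi
      have hxbound : xv n μ T j ≤
          ((QbS μ T j).filter (fun c => i' < c.1)).card + xi := by
        have hXsub : XS n μ T j ⊆
            (QbS μ T j).filter (fun c => i' < c.1) ∪
              (XS n μ T j).filter (fun c => c.1 = i') := by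
          intro c₃ hc₃
          have hge := hXlow c₃ hc₃
          rcases Nat.eq_or_lt_of_le hge with hh | hh
          · exact Finset.mem_union_right _ (Finset.mem_filter.2 ⟨hc₃, hh.symm⟩)
          · apply Finset.mem_union_left
            refine Finset.mem_filter.2 ⟨?_, hh⟩
            simp only [XS, Finset.mem_filter] at hc₃
            exact hc₃.1
        calc xv n μ T j = (XS n μ T j).card := (x_card hd hT hA hrA hii).symm
        _ ≤ _ := Finset.card_le_card hXsub
        _ ≤ _ := Finset.card_union_le _ _
      have hqhigh := qb_high_card hd hT hA hrA hi'1 (by omega)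
      have hδ := kst_le_bix hd hT hA hrA hii
      have hmono : betaRun n μ T i ≤ betaRun n μ T (i' + 1) :=
        beta_antitone hd hT (by omega) (by omega) (by omega)
      omega

end CSide2

section BSide

variable {A B C : ℕ × ℕ → ℕ}
variable (hT : IsSYT n μ T) (hA : IsSYT n μ A)
variable (hrA : Redistrib μ T A i j (betaRun n μ T j + i - j))
variable (hB : IsSYT n μ B)
variable (hrB : Redistrib μ A B (j - 1) j (betaRun n μ A j - 1))
variable (hii : i + 1 < j)

/-- The tail of `U`: the below-cells of run `j` of `A`. -/
noncomputable def UT (n : ℕ) (μ : YoungDiagram) (T : ℕ × ℕ → ℕ) (i j : ℕ) :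
    Finset (ℕ × ℕ) :=
  (belowCells μ T i j).filter
    (fun c => betaRun n μ T j + i - j ≤ rk (belowCells μ T i j) c)

include hd hT hA hrA hii in
lemma VA_eq : belowCells μ A (j - 1) j = fib μ T (j - 1) ∪ UT n μ T i j := by
  have hj2 := two_le_j hd hT
  ext c
  simp only [belowCells, Finset.mem_filter, Finset.mem_union]
  constructor
  · rintro ⟨hc, hor, hrow⟩
    rcases hor with h | h
    · left
      have := (rhoA_other_iff hd hT hrA hc (r := j - 1) (by omega) (by omega)).1 h
      simp only [fib, Finset.mem_filter]
      exact ⟨hc, this⟩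
    · right
      rcases (rhoA_j_iff hd hT hA hrA hc).1 h with hh | hh
      · exfalso
        simp only [QaS, fib, Finset.mem_filter] at hh
        omega
      · simp only [UT, Finset.mem_filter]
        exact ⟨hh.1, hh.2⟩
  · intro h
    rcases h with hh | hh
    · simp only [fib, Finset.mem_filter] at hh
      have hrow := (run_prefix_iff hd hT hh.1 (r := j - 1) (by omega) (by omega)).1 hh.2
      refine ⟨hh.1, Or.inl ?_, by omega⟩
      exact (rhoA_other_iff hd hT hrA hh.1 (by omega) (by omega)).2 hh.2
    · simp only [UT, Finset.mem_filter] at hh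
      simp only [belowCells, Finset.mem_filter] at hh
      obtain ⟨⟨hc, hor, hrow⟩, hrk⟩ := hh
      refine ⟨hc, Or.inr ?_, hrow⟩
      apply (rhoA_j_iff hd hT hA hrA hc).2
      right
      simp only [belowCells, Finset.mem_filter]
      exact ⟨⟨hc, hor, hrow⟩, hrk⟩

include hd hT hA hrA hii in
lemma ut_low {c : ℕ × ℕ} (hc : c ∈ UT n μ T i j) : c.1 + 1 ≤ i :=
  U_low hd hT hA hrA (Finset.filter_subset _ _ hc)

include hd hT hA hrA hii in
lemma rk_VA_rb {c : ℕ × ℕ} (hc : c ∈ fib μ T (j - 1)) :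
    rk (belowCells μ A (j - 1) j) c = c.2 := by
  have hj2 := two_le_j hd hT
  simp only [fib, Finset.mem_filter] at hc
  have hrow := (run_prefix_iff hd hT hc.1 (r := j - 1) (by omega) (by omega)).1 hc.2
  have hset : (belowCells μ A (j - 1) j).filter (fun c' => clt c' c) =
      (Finset.range c.2).image (fun y => (j - 1 - 1, y)) := by
    ext c'
    simp only [Finset.mem_filter, Finset.mem_image, Finset.mem_range]
    constructor
    · rintro ⟨hc', hclt⟩
      rw [VA_eq hd hT hA hrA hii] at hc'
      have hc'row : c'.1 ≤ j - 2 := by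
        rcases Finset.mem_union.1 hc' with hh | hh
        · simp only [fib, Finset.mem_filter] at hh
          have := (run_prefix_iff hd hT hh.1 (r := j - 1) (by omega) (by omega)).1 hh.2
          omega
        · have := ut_low hd hT hA hrA hii hh
          omega
      rcases hclt with hh | ⟨hh1, hh2⟩
      · omega
      · exact ⟨c'.2, hh2, Prod.ext (by omega) rfl⟩
    · rintro ⟨y, hy, rfl⟩
      have hmem := run_prefix_mem hd hT (r := j - 1) (by omega) (by omega)
        (y := y) (by omega)
      refine ⟨?_, Or.inr ⟨by omega, by show y < c.2; omega⟩⟩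
      rw [VA_eq hd hT hA hrA hii]
      apply Finset.mem_union_left
      simp only [fib, Finset.mem_filter]
      exact ⟨hmem.1, hmem.2⟩
  rw [rk, hset, Finset.card_image_of_injOn, Finset.card_range]
  intro a ha b hb hab
  have := congrArg Prod.snd hab
  simpa using this

include hd hT hA hrA hii in
lemma rk_VA_ut {c : ℕ × ℕ} (hc : c ∈ UT n μ T i j) :
    rk (belowCells μ A (j - 1) j) c =
      betaRun n μ T (j - 1) + (rk (belowCells μ T i j) c - (betaRun n μ T j + i - j)) := by
  have hj2 := two_le_j hd hT
  have hclow := ut_low hd hT hA hrA hii hc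
  have hcU : c ∈ belowCells μ T i j := Finset.filter_subset _ _ hc
  have hcrk : betaRun n μ T j + i - j ≤ rk (belowCells μ T i j) c := by
    simp only [UT, Finset.mem_filter] at hc
    exact hc.2
  have hfib_clt : ∀ c' ∈ fib μ T (j - 1), clt c' c := by
    intro c' hc'
    simp only [fib, Finset.mem_filter] at hc'
    have h' := (run_prefix_iff hd hT hc'.1 (by omega) (by omega)).1 hc'.2
    exact Or.inl (by omega)
  have hdisj2 : Disjoint (fib μ T (j - 1)) (UT n μ T i j) := by
    rw [Finset.disjoint_left]
    intro c' h1 h2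
    have hl := ut_low hd hT hA hrA hii h2
    simp only [fib, Finset.mem_filter] at h1
    have := (run_prefix_iff hd hT h1.1 (r := j - 1) (by omega) (by omega)).1 h1.2
    omega
  have hsplit : (belowCells μ A (j - 1) j).filter (fun c' => clt c' c) =
      fib μ T (j - 1) ∪ (UT n μ T i j).filter (fun c' => clt c' c) := by
    rw [VA_eq hd hT hA hrA hii, Finset.filter_union]
    congr 1
    exact Finset.filter_true_of_mem hfib_clt
  have hutcard : ((UT n μ T i j).filter (fun c' => clt c' c)).card =
      rk (belowCells μ T i j) c - (betaRun n μ T j + i - j) := by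
    have hsd : (UT n μ T i j).filter (fun c' => clt c' c) =
        ((belowCells μ T i j).filter (fun c' => clt c' c)) \
          ((belowCells μ T i j).filter
            (fun c' => rk (belowCells μ T i j) c' < betaRun n μ T j + i - j)) := by
      ext c'
      simp only [UT, Finset.mem_filter, Finset.mem_sdiff]
      constructor
      · rintro ⟨⟨h1, h2⟩, h3⟩
        exact ⟨⟨h1, h3⟩, fun hh => by omega⟩
      · rintro ⟨⟨h1, h3⟩, h2⟩
        refine ⟨⟨h1, ?_⟩, h3⟩
        by_contra hh
        exact h2 ⟨h1, by omega⟩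
    have hHdsub : (belowCells μ T i j).filter
        (fun c' => rk (belowCells μ T i j) c' < betaRun n μ T j + i - j) ⊆
        (belowCells μ T i j).filter (fun c' => clt c' c) := by
      intro c' hc'
      simp only [Finset.mem_filter] at hc' ⊢
      refine ⟨hc'.1, ?_⟩
      have hle : rk (belowCells μ T i j) c' ≤ rk (belowCells μ T i j) c := by omega
      rcases rk_le_of_rk_le hc'.1 hcU hle with hh | hh
      · exfalso
        subst hh
        omega
      · exact hh
    rw [hsd, Finset.card_sdiff_of_subset hHdsub, card_rk_lt]
    have hkle := kst_le_U hd hT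
    have hmin : min (betaRun n μ T j + i - j) (belowCells μ T i j).card =
        betaRun n μ T j + i - j := by omega
    rw [hmin]
    rfl
  rw [rk, hsplit, Finset.card_union_of_disjoint
    (Finset.disjoint_of_subset_right (Finset.filter_subset _ _) hdisj2), hutcard]
  have hfibc : (fib μ T (j - 1)).card = betaRun n μ T (j - 1) :=
    (hT.betaRun_card (show 1 ≤ j - 1 by omega)).symm
  rw [hfibc]

include hd hT hA hrA hB hrB hii in
lemma redistrib_rk_B {c : ℕ × ℕ} (hc : c ∈ belowCells μ A (j - 1) j) :
    runIdx μ B (B c) =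
      if rk (belowCells μ A (j - 1) j) c < betaRun n μ A j - 1 then j - 1 else j := by
  have h := hrB.2.2 c hc
  have hbr : ((belowCells μ A (j - 1) j).filter
      (fun c' => c.1 < c'.1 ∨ (c'.1 = c.1 ∧ c'.2 < c.2))).card
      = rk (belowCells μ A (j - 1) j) c := by
    unfold rk
    congr 1
    ext c'
    simp only [Finset.mem_filter]
    unfold clt
    tauto
  rwa [hbr] at h

include hd hT hA hrA hB hrB hii in
lemma rhoB_runi {c : ℕ × ℕ} (hc : c ∈ μ.cells) (h : runIdx μ A (A c) = i) :
    runIdx μ B (B c) = i := by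
  rw [← h]
  exact hrB.1 c hc (by omega) (by have := i_lt_j hd hT; omega)

include hd hT hA hrA hB hrB hii in
lemma rhoB_rb {c : ℕ × ℕ} (hc : c ∈ fib μ T (j - 1)) : runIdx μ B (B c) = j - 1 := by
  have hj2 := two_le_j hd hT
  have hcVA : c ∈ belowCells μ A (j - 1) j := by
    rw [VA_eq hd hT hA hrA hii]; exact Finset.mem_union_left _ hc
  have hrk := rk_VA_rb hd hT hA hrA hii hc
  have hcol : c.2 < betaRun n μ T (j - 1) := by
    simp only [fib, Finset.mem_filter] at hc
    exact ((run_prefix_iff hd hT hc.1 (by omega) (by omega)).1 hc.2).2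
  have hN1 : betaRun n μ T (j - 1) ≤ betaRun n μ T i :=
    beta_antitone hd hT hd.2.2.2.1 (by omega) (by omega)
  have hkB : betaRun n μ A j = betaRun n μ T i + j - i := betaA_j hd hT hA hrA
  have := redistrib_rk_B hd hT hA hrA hB hrB hii hcVA
  rwa [hrk, if_pos (by omega)] at this

include hd hT hA hrA hB hrB hii in
lemma rhoB_ut {c : ℕ × ℕ} (hc : c ∈ UT n μ T i j) :
    runIdx μ B (B c) =
      if rk (belowCells μ T i j) c < betaRun n μ T i + xv n μ T j then j - 1 else j := by
  have hj2 := two_le_j hd hT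
  have hcVA : c ∈ belowCells μ A (j - 1) j := by
    rw [VA_eq hd hT hA hrA hii]; exact Finset.mem_union_right _ hc
  have hrk := rk_VA_ut hd hT hA hrA hii hc
  have hN1 : betaRun n μ T (j - 1) ≤ betaRun n μ T i :=
    beta_antitone hd hT hd.2.2.2.1 (by omega) (by omega)
  have hN2 := bj_large hd hT hA hrA hii
  have hkB : betaRun n μ A j = betaRun n μ T i + j - i := betaA_j hd hT hA hrA
  have hjβ := j_le_beta_add hd hT
  have hcrk : betaRun n μ T j + i - j ≤ rk (belowCells μ T i j) c := by
    simp only [UT, Finset.mem_filter] at hc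
    exact hc.2
  have := redistrib_rk_B hd hT hA hrA hB hrB hii hcVA
  rw [hrk] at this
  unfold xv
  rcases Nat.lt_or_ge (rk (belowCells μ T i j) c)
      (betaRun n μ T i + (betaRun n μ T j - 1 - betaRun n μ T (j - 1))) with hh | hh
  · rw [if_pos (by omega)] at this
    rw [if_pos (by omega)]
    exact this
  · rw [if_neg (by omega)] at this
    rw [if_neg (by omega)]
    exact this

include hd hT hA hrA hB hrB hii in
lemma rhoB_qa {c : ℕ × ℕ} (hc : c ∈ QaS μ T j) : runIdx μ B (B c) = j := by
  have hj2 := two_le_j hd hT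
  have hρA : runIdx μ A (A c) = j := rhoA_qa hd hT hrA hc
  simp only [QaS, fib, Finset.mem_filter] at hc
  exact hrB.2.1 c hc.1.1 hρA (by omega)

include hd hT hA hrA hB hrB hii in
lemma rhoB_other {c : ℕ × ℕ} (hc : c ∈ μ.cells) {r : ℕ} (hri : r ≠ i)
    (hrj1 : r ≠ j - 1) (hrj : r ≠ j) (h : runIdx μ T (T c) = r) :
    runIdx μ B (B c) = r := by
  have hρA : runIdx μ A (A c) = r := (rhoA_other_iff hd hT hrA hc hri hrj).2 h
  rw [← hρA]
  exact hrB.1 c hc (by omega) (by omega)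

include hd hT hA hrA hB hrB hii in
/-- The key verification: `B` satisfies the redistribution relation defining `D`. -/
lemma redistrib_CB {C : ℕ × ℕ → ℕ} (hC : IsSYT n μ C)
    (hrC : Redistrib μ T C (j - 1) j (betaRun n μ T j - 1)) :
    Redistrib μ C B i (j - 1) (betaRun n μ T j + i - j) := by
  have hj2 := two_le_j hd hT
  have hij := i_lt_j hd hT
  have hi1 := hd.2.2.2.1
  have hN2 := bj_large hd hT hA hrA hii
  have hδ := kst_le_bix hd hT hA hrA hii
  have hjβ := j_le_beta_add hd hT
  -- belowCells μ C i (j-1) = fib μ T i ∪ XS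
  have hUC : belowCells μ C i (j - 1) = fib μ T i ∪ XS n μ T j := by
    ext c
    simp only [belowCells, Finset.mem_filter, Finset.mem_union]
    constructor
    · rintro ⟨hc, hor, hrow⟩
      rcases hor with h | h
      · left
        have hcm : c ∈ fib μ C i := Finset.mem_filter.2 ⟨hc, h⟩
        rwa [fibC_other hd hT hrC hii (by omega) (by omega)] at hcm
      · right
        have hcm : c ∈ fib μ C (j - 1) := Finset.mem_filter.2 ⟨hc, h⟩
        rw [fibC_j1 hd hT hA hrA hC hrC hii] at hcm
        rcases Finset.mem_union.1 hcm with hh | hh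
        · exfalso
          simp only [fib, Finset.mem_filter] at hh
          have := (run_prefix_iff hd hT hh.1 (r := j - 1) (by omega) (by omega)).1 hh.2
          omega
        · exact hh
    · intro h
      rcases h with hh | hh
      · have hcm := hh
        simp only [fib, Finset.mem_filter] at hcm
        have hrow := (run_prefix_iff hd hT hcm.1 (r := i) (by omega) (by omega)).1 hcm.2
        refine ⟨hcm.1, Or.inl ?_, by omega⟩
        have : c ∈ fib μ C i := by
          rw [fibC_other hd hT hrC hii (by omega) (by omega)]
          exact hh
        simp only [fib, Finset.mem_filter] at this
        exact this.2
      · have hlow := xs_low hd hT hA hrA hii hh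
        have hq := Finset.filter_subset
          (fun c => rk (QbS μ T j) c < xv n μ T j) (QbS μ T j) hh
        have hcm : c ∈ μ.cells := by
          simp only [QbS, fib, Finset.mem_filter] at hq
          exact hq.1.1
        refine ⟨hcm, Or.inr ?_, by omega⟩
        have : c ∈ fib μ C (j - 1) := by
          rw [fibC_j1 hd hT hA hrA hC hrC hii]
          exact Finset.mem_union_right _ hh
        simp only [fib, Finset.mem_filter] at this
        exact this.2
  refine ⟨?_, ?_, ?_⟩
  · -- clause 1
    intro c hc h1 h2
    by_cases hT1 : runIdx μ T (T c) = i
    · exfalso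
      apply h1
      have hmem : c ∈ fib μ C i := by
        rw [fibC_other hd hT hrC hii (by omega) (by omega)]
        exact Finset.mem_filter.2 ⟨hc, hT1⟩
      simp only [fib, Finset.mem_filter] at hmem
      exact hmem.2
    · by_cases hT2 : runIdx μ T (T c) = j - 1
      · exact absurd (rhoC_rb hd hT hA hrA hC hrC hii (Finset.mem_filter.2 ⟨hc, hT2⟩)) h2
      · by_cases hT3 : runIdx μ T (T c) = j
        · by_cases hT4 : c.1 + 1 < j
          · -- Qb cell
            have hcq : c ∈ QbS μ T j := by
              simp only [QbS, fib, Finset.mem_filter]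
              exact ⟨⟨hc, hT3⟩, hT4⟩
            have hρC := rhoC_qb hd hT hA hrA hC hrC hii hcq
            by_cases hx : rk (QbS μ T j) c < xv n μ T j
            · exact absurd (by rw [hρC, if_pos hx]) h2
            · -- c ∈ Qb \ X : both sides give j
              rw [hρC, if_neg hx]
              have hcU : c ∈ belowCells μ T i j := by
                rw [U_eq hd hT]
                exact Finset.mem_union_right _ hcq
              have hrkU : rk (belowCells μ T i j) c =
                  betaRun n μ T i + rk (QbS μ T j) c :=
                rk_U_qb hd hT hA hrA hcq
              have hcUT : c ∈ UT n μ T i j := by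
                simp only [UT, Finset.mem_filter]
                exact ⟨hcU, by omega⟩
              have hB' := rhoB_ut hd hT hA hrA hB hrB hii hcUT
              rwa [if_neg (by push_neg at hx ⊢; omega)] at hB'
          · -- Qa cell
            have hcqa : c ∈ QaS μ T j := by
              simp only [QaS, fib, Finset.mem_filter]
              exact ⟨⟨hc, hT3⟩, hT4⟩
            rw [rhoC_qa hd hT hrC hcqa]
            exact rhoB_qa hd hT hA hrA hB hrB hii hcqa
        · -- other run
          rw [rhoC_other hd hT hrC hc hT2 hT3]
          exact rhoB_other hd hT hA hrA hB hrB hii hc (by omega) (by omega) (by omega) rfl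
  · -- clause 2
    intro c hc hcr hrow
    have hcm : c ∈ fib μ C (j - 1) := Finset.mem_filter.2 ⟨hc, hcr⟩
    rw [fibC_j1 hd hT hA hrA hC hrC hii] at hcm
    rcases Finset.mem_union.1 hcm with hh | hh
    · exact rhoB_rb hd hT hA hrA hB hrB hii hh
    · exfalso
      have := xs_low hd hT hA hrA hii hh
      omega
  · -- clause 3
    intro c hcbel
    have hbr : ((belowCells μ C i (j - 1)).filter
        (fun c' => c.1 < c'.1 ∨ (c'.1 = c.1 ∧ c'.2 < c.2))).card
        = rk (belowCells μ C i (j - 1)) c := by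
      unfold rk
      congr 1
      ext c'
      simp only [Finset.mem_filter]
      unfold clt
      tauto
    rw [hbr]
    rw [hUC] at hcbel
    rcases Finset.mem_union.1 hcbel with hh | hh
    · -- c ∈ fib T i
      have hcm := hh
      simp only [fib, Finset.mem_filter] at hcm
      have hrow := (run_prefix_iff hd hT hcm.1 (r := i) (by omega) (by omega)).1 hcm.2
      have hcU : c ∈ belowCells μ T i j := by
        rw [U_eq hd hT]
        exact Finset.mem_union_left _ hh
      have hrkU : rk (belowCells μ T i j) c = c.2 :=
        rk_U_row hd hT hA hrA hcU (by omega)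
      -- rank in UC equals c.2 as well
      have hrkUC : rk (belowCells μ C i (j - 1)) c = c.2 := by
        have hset : (belowCells μ C i (j - 1)).filter (fun c' => clt c' c) =
            (Finset.range c.2).image (fun y => (i - 1, y)) := by
          ext c'
          simp only [Finset.mem_filter, Finset.mem_image, Finset.mem_range]
          constructor
          · rintro ⟨hc', hclt⟩
            rw [hUC] at hc'
            have hc'row : c'.1 ≤ i - 1 := by
              rcases Finset.mem_union.1 hc' with hh2 | hh2
              · simp only [fib, Finset.mem_filter] at hh2
                have := (run_prefix_iff hd hT hh2.1 (r := i) (by omega) (by omega)).1 hh2.2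
                omega
              · have := xs_low hd hT hA hrA hii hh2
                omega
            rcases hclt with hh2 | ⟨hh21, hh22⟩
            · omega
            · -- same row i - 1 ; c' must be in fib T i since col < c.2 < betaRun i
              refine ⟨c'.2, hh22, Prod.ext (by omega) rfl⟩
          · rintro ⟨y, hy, rfl⟩
            have hmem := run_prefix_mem hd hT (r := i) (by omega) (by omega)
              (y := y) (by omega)
            refine ⟨?_, Or.inr ⟨by omega, by show y < c.2; omega⟩⟩
            rw [hUC]
            apply Finset.mem_union_left
            simp only [fib, Finset.mem_filter]
            exact ⟨hmem.1, hmem.2⟩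
        rw [rk, hset, Finset.card_image_of_injOn, Finset.card_range]
        intro a ha b hb hab
        have := congrArg Prod.snd hab
        simpa using this
      rw [hrkUC]
      rcases Nat.lt_or_ge c.2 (betaRun n μ T j + i - j) with hlt | hge
      · rw [if_pos hlt]
        apply rhoB_runi hd hT hA hrA hB hrB hii hcm.1
        have := redistrib_rk hd hT hA hrA hcU
        rwa [hrkU, if_pos hlt] at this
      · rw [if_neg (by omega)]
        have hcUT : c ∈ UT n μ T i j := by
          simp only [UT, Finset.mem_filter]
          exact ⟨hcU, by omega⟩
        have := rhoB_ut hd hT hA hrA hB hrB hii hcUT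
        rwa [hrkU, if_pos (by
          have hxp := x_pos hd hT hA hrA hii
          omega)] at this
    · -- c ∈ XS
      have hq : c ∈ QbS μ T j := Finset.filter_subset _ _ hh
      have hxlt : rk (QbS μ T j) c < xv n μ T j := by
        simp only [XS, Finset.mem_filter] at hh
        exact hh.2
      have hcU : c ∈ belowCells μ T i j := by
        rw [U_eq hd hT]
        exact Finset.mem_union_right _ hq
      have hrkU : rk (belowCells μ T i j) c =
          betaRun n μ T i + rk (QbS μ T j) c := rk_U_qb hd hT hA hrA hq
      -- rank in UC equals rank in U
      have hrkUC : rk (belowCells μ C i (j - 1)) c =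
          betaRun n μ T i + rk (QbS μ T j) c := by
        have hclow := qb_low hd hT hA hrA hq
        have hfib_clt : ∀ c' ∈ fib μ T i, clt c' c := by
          intro c' hc'
          simp only [fib, Finset.mem_filter] at hc'
          have h' := (run_prefix_iff hd hT hc'.1 (by omega) (by omega)).1 hc'.2
          rcases Nat.lt_or_ge c.1 (i - 1) with hh2 | hh2
          · exact Or.inl (by omega)
          · have hrow : c.1 = i - 1 := by omega
            have hcge : betaRun n μ T i ≤ c.2 := by
              by_contra hlt2
              have hcmm : c ∈ μ.cells := by
                simp only [QbS, fib, Finset.mem_filter] at hq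
                exact hq.1.1
              have := (run_prefix_iff hd hT hcmm hi1 hij).2 ⟨hrow, by omega⟩
              simp only [QbS, fib, Finset.mem_filter] at hq
              omega
            exact Or.inr ⟨by omega, by omega⟩
        have hdisj : Disjoint (fib μ T i) (XS n μ T j) := by
          rw [Finset.disjoint_left]
          intro c' h1 h2
          have h2' := Finset.filter_subset _ _ h2
          simp only [fib, QbS, Finset.mem_filter] at h1 h2'
          omega
        have hXpref : (XS n μ T j).filter (fun c' => clt c' c) =
            (QbS μ T j).filter (fun c' => clt c' c) := by
          ext c'
          simp only [XS, Finset.mem_filter]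
          constructor
          · rintro ⟨⟨h1, h2⟩, h3⟩
            exact ⟨h1, h3⟩
          · rintro ⟨h1, h3⟩
            refine ⟨⟨h1, ?_⟩, h3⟩
            have := rk_lt_rk h1 h3
            omega
        have hsplit : (belowCells μ C i (j - 1)).filter (fun c' => clt c' c) =
            fib μ T i ∪ (XS n μ T j).filter (fun c' => clt c' c) := by
          rw [hUC, Finset.filter_union]
          congr 1
          exact Finset.filter_true_of_mem hfib_clt
        rw [rk, hsplit, Finset.card_union_of_disjoint
          (Finset.disjoint_of_subset_right (Finset.filter_subset _ _) hdisj),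
          hT.betaRun_card hi1, hXpref]
        rfl
      rw [hrkUC]
      rcases Nat.lt_or_ge (betaRun n μ T i + rk (QbS μ T j) c)
          (betaRun n μ T j + i - j) with hlt | hge
      · rw [if_pos hlt]
        have hcm : c ∈ μ.cells := by
          simp only [QbS, fib, Finset.mem_filter] at hq
          exact hq.1.1
        apply rhoB_runi hd hT hA hrA hB hrB hii hcm
        have := redistrib_rk hd hT hA hrA hcU
        rwa [hrkU, if_pos (by omega)] at this
      · rw [if_neg (by omega)]
        have hcUT : c ∈ UT n μ T i j := by
          simp only [UT, Finset.mem_filter]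
          exact ⟨hcU, by omega⟩
        have := rhoB_ut hd hT hA hrA hB hrB hii hcUT
        rwa [hrkU, if_pos (by omega)] at this

end BSide





lemma ss_frss {n : ℕ} {μ : YoungDiagram} {S : ℕ × ℕ → ℕ}
    (h : IsSuperstandard μ S) (t : ℕ) : FirstRunsSS n μ S t := by
  intro v h1 h2 hr c hc hTc
  subst hTc
  exact h c hc

end Main

end SlinkProof


/-- `slink` and `slink_*` commute: `slink(slink_*(T)) = slink_*(slink(T))`. -/
theorem slink_slinkStar_comm (n : ℕ) (T A B C D : ℕ × ℕ → ℕ)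
    (h1 : SlinkStarRel n T A) (h2 : SlinkRel n A B)
    (h3 : SlinkRel n T C) (h4 : SlinkStarRel n C D) :
    B = D := by
  obtain ⟨μ, hT, hA, hbr1⟩ := h1
  obtain ⟨μ2, hA2, hB, hbr2⟩ := h2
  obtain ⟨μ3, hT3, hC, hbr3⟩ := h3
  obtain ⟨μ4, hC4, hD, hbr4⟩ := h4
  obtain rfl : μ = μ2 := shape_unique hA hA2
  obtain rfl : μ = μ3 := shape_unique hT hT3
  obtain rfl : μ = μ4 := shape_unique hC hC4
  by_cases hss : IsSuperstandard μ T
  · -- superstandard case: everything is T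
    have hAT : A = T := by
      rcases hbr1 with ⟨-, h⟩ | ⟨hns, -⟩
      · exact h
      · exact absurd hss hns
    have hCT : C = T := by
      rcases hbr3 with ⟨-, h⟩ | ⟨hns, -⟩
      · exact h
      · exact absurd hss hns
    rw [hAT] at hbr2
    rw [hCT] at hbr4
    have hBT : B = T := by
      rcases hbr2 with ⟨-, h⟩ | ⟨hns, -⟩
      · exact h
      · exact absurd hss hns
    have hDT : D = T := by
      rcases hbr4 with ⟨-, h⟩ | ⟨hns, -⟩
      · exact h
      · exact absurd hss hns
    rw [hBT, hDT]
  · -- main case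
    rcases hbr1 with ⟨h, -⟩ | ⟨-, i1, j1, hd1, hr1⟩
    · exact absurd h hss
    rcases hbr3 with ⟨h, -⟩ | ⟨-, i3, j3, hd3, hr3⟩
    · exact absurd h hss
    obtain ⟨rfl, rfl⟩ : i1 = i3 ∧ j1 = j3 := slinkData_unique hd1 hd3
    have hij := i_lt_j hd1 hT
    have hi1 := hd1.2.2.2.1
    have hj2 := two_le_j hd1 hT
    have hjβ := j_le_beta_add hd1 hT
    have hdA := slinkData_A hd1 hT hA hr1
    -- extract h2's data
    have hr2 : Redistrib μ A B (j1 - 1) j1 (betaRun n μ A j1 - 1) := by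
      rcases hbr2 with ⟨hssA, -⟩ | ⟨-, i2, j2, hd2, hr2⟩
      · exact absurd (ss_frss hssA j1) hdA.2.1
      · obtain ⟨rfl, rfl⟩ : i1 = i2 ∧ j1 = j2 := slinkData_unique hdA hd2
        exact hr2
    have hcovA : ∀ c ∈ μ.cells, runIdx μ A (A c) = i1 → c.1 + 1 < j1 := by
      intro c hc h
      have := rhoA_i_row hd1 hT hA hr1 hc h
      omega
    rcases Nat.lt_or_ge (i1 + 1) j1 with hii | hii
    · -- case i < j - 1
      have hdC := slinkData_C hd1 hT hA hr1 hC hr3 hii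
      have hr4 : Redistrib μ C D i1 (j1 - 1) (betaRun n μ T j1 + i1 - j1) := by
        rcases hbr4 with ⟨hssC, -⟩ | ⟨-, i4, j4, hd4, hr4⟩
        · exact absurd (ss_frss hssC (j1 - 1)) hdC.2.1
        · obtain ⟨rfl, rfl⟩ : i1 = i4 ∧ j1 - 1 = j4 := slinkData_unique hdC hd4
          have hkeq : betaRun n μ C (j1 - 1) + i1 - (j1 - 1) =
              betaRun n μ T j1 + i1 - j1 := by
            have := betaC_j1 hd1 hT hA hr1 hC hr3 hii
            have := bj_large hd1 hT hA hr1 hii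
            omega
          rwa [hkeq] at hr4
      have hCB := redistrib_CB hd1 hT hA hr1 hB hr2 hii hC hr3
      have hcovC : ∀ c ∈ μ.cells, runIdx μ C (C c) = i1 → c.1 + 1 < j1 - 1 := by
        intro c hc h
        have hcm : c ∈ fib μ C i1 := Finset.mem_filter.2 ⟨hc, h⟩
        rw [fibC_other hd1 hT hr3 hii (by omega) (by omega)] at hcm
        simp only [fib, Finset.mem_filter] at hcm
        have := (run_prefix_iff hd1 hT hc (r := i1) (by omega) (by omega)).1 hcm.2
        omega
      exact redistrib_det hC hB hD hcovC hCB hr4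
    · -- case i = j - 1
      have hieq : i1 + 1 = j1 := by omega
      have hr3' : Redistrib μ T C i1 j1 (betaRun n μ T j1 + i1 - j1) := by
        rw [show i1 = j1 - 1 by omega,
          show betaRun n μ T j1 + (j1 - 1) - j1 = betaRun n μ T j1 - 1 by omega]
        exact hr3
      have hcovT : ∀ c ∈ μ.cells, runIdx μ T (T c) = i1 → c.1 + 1 < j1 := by
        intro c hc h
        have := (run_prefix_iff hd1 hT hc (r := i1) (by omega) (by omega)).1 h
        omega
      have hAC : A = C := redistrib_det hT hA hC hcovT hr1 hr3'
      subst hAC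
      have hr4 : Redistrib μ A D i1 j1 (betaRun n μ A j1 + i1 - j1) := by
        rcases hbr4 with ⟨hssC, -⟩ | ⟨-, i4, j4, hd4, hr4⟩
        · exact absurd (ss_frss hssC j1) hdA.2.1
        · obtain ⟨rfl, rfl⟩ : i1 = i4 ∧ j1 = j4 := slinkData_unique hdA hd4
          exact hr4
      have hβA : 1 ≤ betaRun n μ A j1 := by
        have h1 := betaA_j hd1 hT hA hr1
        have h2 := beta_pos hd1 hT hi1 (by omega)
        omega
      have hr2' : Redistrib μ A B i1 j1 (betaRun n μ A j1 + i1 - j1) := by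
        rw [show i1 = j1 - 1 by omega,
          show betaRun n μ A j1 + (j1 - 1) - j1 = betaRun n μ A j1 - 1 by omega]
        exact hr2
      exact redistrib_det hA hB hD hcovA hr2' hr4
end
end

section
/- Let λ be a partition of n and T ∈ SYT(λ) with T ≠ U_λ. Then the composition Schur functions satisfy s_{β(slink(T))} = − s_{β(T)}. -/
open scoped Classical

noncomputable section

/-- `β(T)`, the composition of `n` recording the run sizes of `T`. -/
def betaList (n : ℕ) (μ : YoungDiagram) (T : ℕ × ℕ → ℕ) : List ℕ :=
  (List.range (runIdx μ T n)).map (fun m => betaRun n μ T (m + 1))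

/-- The vector `v_i = α_i - i` (1-based) attached to a composition `α`; the slinky
move on compositions swaps adjacent entries of `v`, and `s_α = 0` iff `v` has a
repeated entry. -/
def vvec (l : List ℕ) : List ℤ := l.mapIdx (fun idx a => (a : ℤ) - (idx + 1))

/-- The number of non-inversions of a list (pairs out of decreasing order);
its parity is the sign relating `s_α` to `s_λ` under the slinky correspondence. -/
def invCount (l : List ℤ) : ℕ :=
  (((Finset.range l.length) ×ˢ (Finset.range l.length)).filter
    (fun p => p.1 < p.2 ∧ l.getD p.1 0 < l.getD p.2 0)).card

/-- The composition Schur function `s_α`, encoded faithfully in the free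
`ℤ`-module on the multisets `{α_i - i}`: `s_α = 0` if `v(α)` has a repeated entry,
and otherwise `s_α = (-1)^{inv} s_λ` where `λ` is the unique partition with the
same `v`-multiset (so `s_λ` is encoded as the basis element of that multiset). -/
def compSchur (l : List ℕ) : Multiset ℤ →₀ ℤ :=
  if (vvec l).Nodup then
    Finsupp.single (↑(vvec l) : Multiset ℤ) ((-1) ^ invCount (vvec l))
  else 0

namespace SlinkProof

open Finset

private lemma mem_cells_iff_val {n : ℕ} {μ : YoungDiagram} {T : ℕ × ℕ → ℕ}
    (hT : IsSYT n μ T) {c : ℕ × ℕ} : c ∈ μ.cells ↔ 1 ≤ T c ∧ T c ≤ n := by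
  constructor
  · intro hc
    have h := hT.2.1.mapsTo (Finset.mem_coe.mpr hc)
    exact Set.mem_Icc.mp h
  · intro hv
    by_contra hc
    have := hT.1 c hc
    omega

private lemma val_inj {n : ℕ} {μ : YoungDiagram} {T : ℕ × ℕ → ℕ}
    (hT : IsSYT n μ T) {c c' : ℕ × ℕ} (hc : c ∈ μ.cells) (hc' : c' ∈ μ.cells)
    (h : T c = T c') : c = c' :=
  hT.2.1.injOn (Finset.mem_coe.mpr hc) (Finset.mem_coe.mpr hc') h

private lemma exists_cell {n : ℕ} {μ : YoungDiagram} {T : ℕ × ℕ → ℕ}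
    (hT : IsSYT n μ T) {v : ℕ} (h1 : 1 ≤ v) (h2 : v ≤ n) :
    ∃ c ∈ μ.cells, T c = v := by
  obtain ⟨c, hc, hTc⟩ := hT.2.1.surjOn (Set.mem_Icc.mpr ⟨h1, h2⟩)
  exact ⟨c, Finset.mem_coe.mp hc, hTc⟩

private lemma prec_iff {n : ℕ} {μ : YoungDiagram} {T : ℕ × ℕ → ℕ}
    (hT : IsSYT n μ T) {u v : ℕ} {cu cv : ℕ × ℕ}
    (hcu : cu ∈ μ.cells) (hcv : cv ∈ μ.cells) (hu : T cu = u) (hv : T cv = v) :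
    Precedes μ T u v ↔ (cv.1 < cu.1 ∨ (cu.1 = cv.1 ∧ cu.2 < cv.2)) := by
  constructor
  · rintro ⟨a, ha, b, hb, hau, hbv, hord⟩
    have ha' : a = cu := val_inj hT ha hcu (by rw [hau, hu])
    have hb' : b = cv := val_inj hT hb hcv (by rw [hbv, hv])
    subst ha'; subst hb'; exact hord
  · intro h; exact ⟨cu, hcu, cv, hcv, hu, hv, h⟩

private lemma runIdx_mono (μ : YoungDiagram) (T : ℕ × ℕ → ℕ) {v w : ℕ} (h : v ≤ w) :
    runIdx μ T v ≤ runIdx μ T w := by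
  unfold runIdx
  have hs : Finset.Ico 1 v ⊆ Finset.Ico 1 w := Finset.Ico_subset_Ico le_rfl h
  exact Nat.add_le_add_left (Finset.card_le_card (Finset.filter_subset_filter _ hs)) 1

private lemma runIdx_pos (μ : YoungDiagram) (T : ℕ × ℕ → ℕ) (v : ℕ) :
    1 ≤ runIdx μ T v := Nat.le_add_right 1 _

private lemma runIdx_le_one (μ : YoungDiagram) (T : ℕ × ℕ → ℕ) {v : ℕ} (h : v ≤ 1) :
    runIdx μ T v = 1 := by
  unfold runIdx
  interval_cases v <;> simp

private lemma runIdx_succ (μ : YoungDiagram) (T : ℕ × ℕ → ℕ) (v : ℕ) :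
    runIdx μ T (v + 1) = runIdx μ T v + (if 1 ≤ v ∧ Precedes μ T (v + 1) v then 1 else 0) := by
  unfold runIdx
  rcases Nat.eq_zero_or_pos v with h0 | h1
  · subst h0; simp
  · have hins : Finset.Ico 1 (v + 1) = insert v (Finset.Ico 1 v) := by
      ext m; simp only [Finset.mem_Ico, Finset.mem_insert]; omega
    rw [hins, Finset.filter_insert]
    by_cases hp : Precedes μ T (v + 1) v
    · rw [if_pos hp, Finset.card_insert_of_notMem (by simp), if_pos ⟨h1, hp⟩]
      omega
    · rw [if_neg hp, if_neg (by tauto)]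
      simp

private lemma runIdx_exists (μ : YoungDiagram) (T : ℕ × ℕ → ℕ) :
    ∀ v, 1 ≤ v → ∀ m, 1 ≤ m → m ≤ runIdx μ T v →
    ∃ u, 1 ≤ u ∧ u ≤ v ∧ runIdx μ T u = m := by
  intro v
  induction v with
  | zero => omega
  | succ w ih =>
    intro _ m hm1 hm2
    rcases Nat.lt_or_ge w 1 with hw | hw
    · have hw0 : w = 0 := by omega
      subst hw0
      have h1 := runIdx_le_one μ T (v := 0 + 1) le_rfl
      exact ⟨0 + 1, le_rfl, le_rfl, by omega⟩
    · by_cases hle : m ≤ runIdx μ T w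
      · obtain ⟨u, h1, h2, h3⟩ := ih hw m hm1 hle
        exact ⟨u, h1, by omega, h3⟩
      · refine ⟨w + 1, by omega, le_rfl, ?_⟩
        have hs := runIdx_succ μ T w
        have h2 : runIdx μ T (w + 1) ≤ runIdx μ T w + 1 := by rw [hs]; split <;> omega
        omega

private lemma col_lt {n : ℕ} {μ : YoungDiagram} {T : ℕ × ℕ → ℕ}
    (hT : IsSYT n μ T) {r r' c : ℕ} (h : (r, c) ∈ μ) (hr : r' < r) :
    T (r', c) < T (r, c) := by
  induction r with
  | zero => omega
  | succ s ih =>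
    have hstep : T (s, c) < T (s + 1, c) := hT.2.2.2 s c h
    rcases Nat.lt_or_ge r' s with h' | h'
    · exact lt_trans (ih (μ.up_left_mem (Nat.le_succ s) le_rfl h) h') hstep
    · have : r' = s := by omega
      subst this; exact hstep

end SlinkProof
namespace SlinkProof

open Finset

private lemma run_chain {n : ℕ} {μ : YoungDiagram} {T : ℕ × ℕ → ℕ} (hT : IsSYT n μ T) :
    ∀ v, v ≤ n → ∀ u, 1 ≤ u → u < v → runIdx μ T u = runIdx μ T v →
    ∀ cu cv : ℕ × ℕ, cu ∈ μ.cells → cv ∈ μ.cells → T cu = u → T cv = v →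
    (cv.1 < cu.1 ∨ (cu.1 = cv.1 ∧ cu.2 < cv.2)) := by
  intro v
  induction v with
  | zero => omega
  | succ w ih =>
    intro hvn u hu1 huv hrun cu cv hcu hcv hTu hTv
    have hmono1 : runIdx μ T u ≤ runIdx μ T w := runIdx_mono μ T (by omega)
    have hmono2 : runIdx μ T w ≤ runIdx μ T (w + 1) := runIdx_mono μ T (Nat.le_succ w)
    have hnoprec : ¬ Precedes μ T (w + 1) w := by
      intro hp
      have hs := runIdx_succ μ T w
      rw [if_pos ⟨by omega, hp⟩] at hs
      omega
    -- adjacent step helper: for any cell cw of w, reading order cw before cv fails appropriately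
    have hadj : ∀ cw : ℕ × ℕ, cw ∈ μ.cells → T cw = w →
        (cv.1 < cw.1 ∨ (cw.1 = cv.1 ∧ cw.2 < cv.2)) := by
      intro cw hcw hTw
      have hne : ¬(cv.1 = cw.1 ∧ cv.2 = cw.2) := by
        rintro ⟨h1, h2⟩
        have : cv = cw := Prod.ext h1 h2
        rw [this, hTw] at hTv
        omega
      have hnp := (prec_iff hT hcv hcw hTv hTw).not.mp hnoprec
      omega
    rcases Nat.lt_or_ge u w with hlt | hge
    · obtain ⟨cw, hcw, hTw⟩ := exists_cell hT (by omega : 1 ≤ w) (by omega : w ≤ n)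
      have h1 : (cw.1 < cu.1 ∨ (cu.1 = cw.1 ∧ cu.2 < cw.2)) :=
        ih (by omega) u hu1 hlt (by omega) cu cw hcu hcw hTu hTw
      have h2 := hadj cw hcw hTw
      omega
    · have : u = w := by omega
      subst this
      exact hadj cu hcu hTu

private lemma row_zero {n : ℕ} {μ : YoungDiagram} {T : ℕ × ℕ → ℕ} (hT : IsSYT n μ T) :
    ∀ v, 1 ≤ v → v ≤ n → runIdx μ T v = 1 → ∀ c ∈ μ.cells, T c = v → c.1 = 0 := by
  intro v
  induction v with
  | zero => omega
  | succ w ih =>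
    intro _ hvn hrun c hc hTc
    by_contra hne
    have hr : 1 ≤ c.1 := by omega
    have hcm : (c.1, c.2) ∈ μ := by rw [Prod.mk.eta]; exact (YoungDiagram.mem_cells _).mp hc
    rcases Nat.eq_zero_or_pos w with hw | hw
    · subst hw
      have hmem : (c.1 - 1 + 1, c.2) ∈ μ := by
        rw [show c.1 - 1 + 1 = c.1 by omega]; exact hcm
      have hlt := hT.2.2.2 (c.1 - 1) c.2 hmem
      rw [show c.1 - 1 + 1 = c.1 by omega, Prod.mk.eta] at hlt
      rw [hTc] at hlt
      have hmem2 : (c.1 - 1, c.2) ∈ μ.cells :=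
        (YoungDiagram.mem_cells _).mpr (μ.up_left_mem (by omega) le_rfl hcm)
      have := ((mem_cells_iff_val hT).mp hmem2).1
      omega
    · have hrw : runIdx μ T w = 1 := by
        have h1 := runIdx_mono μ T (show w ≤ w + 1 by omega)
        have h2 := runIdx_pos μ T w
        omega
      obtain ⟨cw, hcw, hTw⟩ := exists_cell hT hw (by omega)
      have hcw0 : cw.1 = 0 := ih hw (by omega) hrw cw hcw hTw
      have hnoprec : ¬ Precedes μ T (w + 1) w := by
        intro hp
        have hs := runIdx_succ μ T w
        rw [if_pos ⟨hw, hp⟩] at hs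
        have := runIdx_pos μ T w
        omega
      apply hnoprec
      exact (prec_iff hT hc hcw hTc hTw).mpr (by omega)

private lemma firstRunsSS_one {n : ℕ} {μ : YoungDiagram} {T : ℕ × ℕ → ℕ} (hT : IsSYT n μ T) :
    FirstRunsSS n μ T 1 := by
  intro v h1 h2 hle c hc hTc
  have heq : runIdx μ T v = 1 := le_antisymm hle (runIdx_pos μ T v)
  rw [heq]
  exact row_zero hT v h1 h2 heq c hc hTc

private lemma card_filter_transfer {n : ℕ} {μ : YoungDiagram} {T : ℕ × ℕ → ℕ}
    (hT : IsSYT n μ T) (p : ℕ → Prop) [DecidablePred p] :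
    ((Finset.Icc 1 n).filter p).card = (μ.cells.filter fun c => p (T c)).card := by
  symm
  apply Finset.card_bij (fun c _ => T c)
  · intro c hc
    rw [Finset.mem_filter] at hc ⊢
    obtain ⟨hc1, hc2⟩ := hc
    have := (mem_cells_iff_val hT).mp hc1
    exact ⟨Finset.mem_Icc.mpr this, hc2⟩
  · intro c1 h1 c2 h2 heq
    exact val_inj hT (Finset.mem_filter.mp h1).1 (Finset.mem_filter.mp h2).1 heq
  · intro v hv
    rw [Finset.mem_filter, Finset.mem_Icc] at hv
    obtain ⟨⟨hv1, hv2⟩, hv3⟩ := hv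
    obtain ⟨c, hc, hTc⟩ := exists_cell hT hv1 hv2
    exact ⟨c, Finset.mem_filter.mpr ⟨hc, by rw [hTc]; exact hv3⟩, hTc⟩

private lemma betaRun_card {n : ℕ} {μ : YoungDiagram} {T : ℕ × ℕ → ℕ}
    (hT : IsSYT n μ T) {m : ℕ} (hm : 1 ≤ m) :
    betaRun n μ T m = (μ.cells.filter fun c => runIdx μ T (T c) = m).card := by
  unfold betaRun bsum
  rw [card_filter_transfer hT, card_filter_transfer hT]
  have hsplit : (μ.cells.filter fun c => runIdx μ T (T c) ≤ m)
      = (μ.cells.filter fun c => runIdx μ T (T c) ≤ m - 1)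
        ∪ (μ.cells.filter fun c => runIdx μ T (T c) = m) := by
    ext c
    simp only [Finset.mem_filter, Finset.mem_union]
    constructor
    · rintro ⟨h1, h2⟩
      by_cases h : runIdx μ T (T c) = m
      · exact Or.inr ⟨h1, h⟩
      · exact Or.inl ⟨h1, by omega⟩
    · rintro (⟨h1, h2⟩ | ⟨h1, h2⟩) <;> exact ⟨h1, by omega⟩
  rw [hsplit, Finset.card_union_of_disjoint]
  · omega
  · rw [Finset.disjoint_left]
    intro c h1 h2
    rw [Finset.mem_filter] at h1 h2
    omega

private lemma rank_filter_card (B : Finset (ℕ × ℕ)) (k : ℕ) (hk : k ≤ B.card) :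
    (B.filter fun c => (B.filter fun c' => c.1 < c'.1 ∨ (c'.1 = c.1 ∧ c'.2 < c.2)).card < k).card
      = k := by
  set rank : ℕ × ℕ → ℕ :=
    fun c => (B.filter fun c' => c.1 < c'.1 ∨ (c'.1 = c.1 ∧ c'.2 < c.2)).card with hrank
  have hmono : ∀ x ∈ B, ∀ y : ℕ × ℕ, y ∈ B → (y.1 < x.1 ∨ (x.1 = y.1 ∧ x.2 < y.2)) →
      rank x < rank y := by
    intro x hx y hy hxy
    apply Finset.card_lt_card
    rw [Finset.ssubset_iff_of_subset]
    · exact ⟨x, Finset.mem_filter.mpr ⟨hx, by omega⟩,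
        fun hmem => by have := (Finset.mem_filter.mp hmem).2; omega⟩
    · intro z hz
      rw [Finset.mem_filter] at hz ⊢
      exact ⟨hz.1, by omega⟩
  have hinj : Set.InjOn rank ↑B := by
    intro x hx y hy heq
    by_contra hne
    have hne' : ¬(x.1 = y.1 ∧ x.2 = y.2) := by
      rintro ⟨h1, h2⟩; exact hne (Prod.ext h1 h2)
    have htri : (y.1 < x.1 ∨ (x.1 = y.1 ∧ x.2 < y.2)) ∨ (x.1 < y.1 ∨ (y.1 = x.1 ∧ y.2 < x.2)) := by
      omega
    rcases htri with h | h
    · have := hmono x (Finset.mem_coe.mp hx) y (Finset.mem_coe.mp hy) h; omega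
    · have := hmono y (Finset.mem_coe.mp hy) x (Finset.mem_coe.mp hx) h; omega
  have hbound : ∀ x ∈ B, rank x < B.card := by
    intro x hx
    have hsub : (B.filter fun c' => x.1 < c'.1 ∨ (c'.1 = x.1 ∧ c'.2 < x.2)) ⊆ B.erase x := by
      intro z hz
      rw [Finset.mem_filter] at hz
      rw [Finset.mem_erase]
      refine ⟨?_, hz.1⟩
      rintro rfl
      omega
    have h1 : rank x ≤ (B.erase x).card := Finset.card_le_card hsub
    have h2 : (B.erase x).card = B.card - 1 := Finset.card_erase_of_mem hx
    have h3 : 1 ≤ B.card := Finset.card_pos.mpr ⟨x, hx⟩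
    omega
  have himg : B.image rank = Finset.range B.card := by
    apply Finset.eq_of_subset_of_card_le
    · intro m hm
      obtain ⟨c, hc, hcm⟩ := Finset.mem_image.mp hm
      rw [Finset.mem_range]
      rw [← hcm]
      exact hbound c hc
    · rw [Finset.card_range, Finset.card_image_of_injOn hinj]
  have hfin : (B.filter fun c => rank c < k).card
      = ((Finset.range B.card).filter fun m => m < k).card := by
    apply Finset.card_bij (fun c _ => rank c)
    · intro c hc
      rw [Finset.mem_filter] at hc ⊢
      exact ⟨Finset.mem_range.mpr (hbound c hc.1), hc.2⟩
    · intro c1 h1 c2 h2 heq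
      exact hinj (Finset.mem_coe.mpr (Finset.mem_filter.mp h1).1)
        (Finset.mem_coe.mpr (Finset.mem_filter.mp h2).1) heq
    · intro m hm
      rw [Finset.mem_filter] at hm
      have : m ∈ B.image rank := by rw [himg]; exact hm.1
      obtain ⟨c, hcB, hcm⟩ := Finset.mem_image.mp this
      exact ⟨c, Finset.mem_filter.mpr ⟨hcB, by rw [hcm]; exact hm.2⟩, hcm⟩
  rw [hfin]
  have : ((Finset.range B.card).filter fun m => m < k) = Finset.range k := by
    ext m
    simp only [Finset.mem_filter, Finset.mem_range]
    omega
  rw [this, Finset.card_range]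

end SlinkProof
namespace SlinkProof

open Finset

private def swp (p q : ℕ) : ℕ := if q = p then p + 1 else if q = p + 1 then p else q

private lemma swp_swp (p q : ℕ) : swp p (swp p q) = q := by
  unfold swp; split_ifs <;> omega

private def invSet (R : ℕ) (g : ℕ → ℤ) : Finset (ℕ × ℕ) :=
  ((Finset.range R) ×ˢ (Finset.range R)).filter (fun p => p.1 < p.2 ∧ g p.1 < g p.2)

private lemma getD_map_range (R : ℕ) (g : ℕ → ℤ) {q : ℕ} (hq : q < R) :
    (((List.range R).map g).getD q 0) = g q := by
  rw [List.getD_eq_getElem _ _ (by simpa using hq)]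
  simp

private lemma invCount_map_range (R : ℕ) (g : ℕ → ℤ) :
    invCount ((List.range R).map g) = (invSet R g).card := by
  unfold invCount invSet
  simp only [List.length_map, List.length_range]
  congr 1
  apply Finset.filter_congr
  intro q hq
  rw [Finset.mem_product, Finset.mem_range, Finset.mem_range] at hq
  rw [getD_map_range R g hq.1, getD_map_range R g hq.2]

private lemma swap_mem_aux (R p : ℕ) (hp : p + 1 < R) (g g' : ℕ → ℤ)
    (h1 : ∀ q, q ≠ p → q ≠ p + 1 → g' q = g q) (h2 : g' p = g (p + 1)) (h3 : g' (p + 1) = g p) :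
    ∀ q ∈ (invSet R g').erase (p, p + 1),
      (swp p q.1, swp p q.2) ∈ (invSet R g).erase (p, p + 1) := by
  rintro ⟨q1, q2⟩ hq
  simp only [Finset.mem_erase, invSet, Finset.mem_filter, Finset.mem_product,
    Finset.mem_range] at hq ⊢
  obtain ⟨hne, ⟨⟨hr1, hr2⟩, hlt, hval⟩⟩ := hq
  have hne' : ¬(q1 = p ∧ q2 = p + 1) := by
    rintro ⟨a, b⟩; exact hne (by rw [a, b])
  have e1 : g (swp p q1) = g' q1 := by
    unfold swp
    split_ifs with ha hb
    · rw [ha, ← h2]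
    · rw [hb, ← h3]
    · exact (h1 q1 ha hb).symm
  have e2 : g (swp p q2) = g' q2 := by
    unfold swp
    split_ifs with ha hb
    · rw [ha, ← h2]
    · rw [hb, ← h3]
    · exact (h1 q2 ha hb).symm
  refine ⟨?_, ⟨⟨?_, ?_⟩, ?_, ?_⟩⟩
  · intro hEq
    rw [Prod.mk.injEq] at hEq
    obtain ⟨ha, hb⟩ := hEq
    unfold swp at ha hb
    split_ifs at ha hb <;> omega
  · unfold swp; split_ifs <;> omega
  · unfold swp; split_ifs <;> omega
  · unfold swp; split_ifs <;> omega
  · rw [e1, e2]; exact hval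

private lemma invSet_card_swap (R p : ℕ) (hp : p + 1 < R) (g g' : ℕ → ℤ)
    (h1 : ∀ q, q ≠ p → q ≠ p + 1 → g' q = g q) (h2 : g' p = g (p + 1)) (h3 : g' (p + 1) = g p)
    (hne : g p ≠ g (p + 1)) :
    ((-1 : ℤ) ^ (invSet R g').card) = -((-1 : ℤ) ^ (invSet R g).card) := by
  have h1' : ∀ q, q ≠ p → q ≠ p + 1 → g q = g' q := fun q a b => (h1 q a b).symm
  have hcard : ((invSet R g').erase (p, p + 1)).card = ((invSet R g).erase (p, p + 1)).card := by
    apply Finset.card_nbij' (fun q => (swp p q.1, swp p q.2)) (fun q => (swp p q.1, swp p q.2))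
      (fun ⦃q⦄ hq => Finset.mem_coe.mpr (swap_mem_aux R p hp g g' h1 h2 h3 q (Finset.mem_coe.mp hq)))
      (fun ⦃q⦄ hq => Finset.mem_coe.mpr (swap_mem_aux R p hp g' g h1' h3.symm h2.symm q (Finset.mem_coe.mp hq)))
    · intro a _; simp [swp_swp]
    · intro a _; simp [swp_swp]
  have hspS : (p, p + 1) ∈ invSet R g ↔ g p < g (p + 1) := by
    unfold invSet
    rw [Finset.mem_filter, Finset.mem_product, Finset.mem_range, Finset.mem_range]
    constructor
    · rintro ⟨-, -, h⟩; exact h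
    · intro h; exact ⟨⟨by omega, hp⟩, by omega, h⟩
  have hspS' : (p, p + 1) ∈ invSet R g' ↔ g (p + 1) < g p := by
    unfold invSet
    rw [Finset.mem_filter, Finset.mem_product, Finset.mem_range, Finset.mem_range]
    constructor
    · rintro ⟨-, -, h⟩; rw [h2, h3] at h; exact h
    · intro h; exact ⟨⟨by omega, hp⟩, by omega, by rw [h2, h3]; exact h⟩
  rcases lt_or_gt_of_ne hne with hxy | hxy
  · have hmem : (p, p + 1) ∈ invSet R g := hspS.mpr hxy
    have hnmem : (p, p + 1) ∉ invSet R g' := fun h => absurd (hspS'.mp h) (by omega)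
    rw [Finset.erase_eq_of_notMem hnmem] at hcard
    have he : ((invSet R g).erase (p, p + 1)).card = (invSet R g).card - 1 :=
      Finset.card_erase_of_mem hmem
    have hpos : 1 ≤ (invSet R g).card := Finset.card_pos.mpr ⟨_, hmem⟩
    have : (invSet R g).card = (invSet R g').card + 1 := by omega
    rw [this, pow_succ]
    ring
  · have hmem : (p, p + 1) ∈ invSet R g' := hspS'.mpr hxy
    have hnmem : (p, p + 1) ∉ invSet R g := fun h => absurd (hspS.mp h) (by omega)
    rw [Finset.erase_eq_of_notMem hnmem] at hcard
    have he : ((invSet R g').erase (p, p + 1)).card = (invSet R g').card - 1 :=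
      Finset.card_erase_of_mem hmem
    have hpos : 1 ≤ (invSet R g').card := Finset.card_pos.mpr ⟨_, hmem⟩
    have : (invSet R g').card = (invSet R g).card + 1 := by omega
    rw [this, pow_succ]
    ring

private lemma multiset_map_swap (R p : ℕ) (hp : p + 1 < R) (g g' : ℕ → ℤ)
    (h1 : ∀ q, q ≠ p → q ≠ p + 1 → g' q = g q) (h2 : g' p = g (p + 1)) (h3 : g' (p + 1) = g p) :
    (((List.range R).map g' : List ℤ) : Multiset ℤ) = (((List.range R).map g : List ℤ) : Multiset ℤ) := by
  have hcoe : ∀ f : ℕ → ℤ, (((List.range R).map f : List ℤ) : Multiset ℤ)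
      = Multiset.map f (Multiset.range R) := by
    intro f
    rfl
  rw [hcoe, hcoe]
  have hnd : (Multiset.range R).Nodup := Multiset.nodup_range R
  have hpm : p ∈ Multiset.range R := Multiset.mem_range.mpr (by omega)
  have hpm2 : p + 1 ∈ (Multiset.range R).erase p :=
    (hnd.mem_erase_iff).mpr ⟨by omega, Multiset.mem_range.mpr hp⟩
  have hM : Multiset.range R = p ::ₘ (p + 1) ::ₘ (((Multiset.range R).erase p).erase (p + 1)) := by
    rw [Multiset.cons_erase hpm2, Multiset.cons_erase hpm]
  have ht : ∀ q ∈ (((Multiset.range R).erase p).erase (p + 1)), g' q = g q := by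
    intro q hq
    have hq1 := ((hnd.erase p).mem_erase_iff).mp hq
    have hq2 := (hnd.mem_erase_iff).mp hq1.2
    exact h1 q hq2.1 hq1.1
  rw [hM]
  simp only [Multiset.map_cons]
  rw [Multiset.map_congr rfl ht, h2, h3, Multiset.cons_swap]

private lemma vvec_map_range (R : ℕ) (f : ℕ → ℕ) :
    vvec ((List.range R).map f) = (List.range R).map (fun m => (f m : ℤ) - (m + 1)) := by
  unfold vvec
  have hco : (do let a ← (List.range R).map f; pure ((a : ℤ))) = List.map (fun a : ℕ => (a : ℤ)) ((List.range R).map f) := by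
    generalize (List.range R).map f = l
    induction l with
    | nil => rfl
    | cons a t ih => simpa [List.flatMap_cons] using ih
  rw [hco, List.map_map]
  apply List.ext_getElem
  · simp only [List.length_mapIdx, List.length_map, List.length_range]
  · intro i h1 h2
    rw [List.getElem_mapIdx]
    simp only [List.getElem_map, List.getElem_range, Function.comp]

private lemma compSchur_swap (R p : ℕ) (hp : p + 1 < R) (g g' : ℕ → ℤ)
    (h1 : ∀ q, q ≠ p → q ≠ p + 1 → g' q = g q) (h2 : g' p = g (p + 1)) (h3 : g' (p + 1) = g p) :
    (if ((List.range R).map g').Nodup then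
      Finsupp.single (((List.range R).map g' : List ℤ) : Multiset ℤ)
        ((-1 : ℤ) ^ invCount ((List.range R).map g'))
     else 0)
    = -(if ((List.range R).map g).Nodup then
      Finsupp.single (((List.range R).map g : List ℤ) : Multiset ℤ)
        ((-1 : ℤ) ^ invCount ((List.range R).map g))
     else 0) := by
  have hms := multiset_map_swap R p hp g g' h1 h2 h3
  have hnod : ((List.range R).map g').Nodup ↔ ((List.range R).map g).Nodup := by
    rw [← Multiset.coe_nodup, ← Multiset.coe_nodup, hms]
  by_cases hnd : ((List.range R).map g).Nodup
  · rw [if_pos (hnod.mpr hnd), if_pos hnd, hms]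
    have hnegd : g p ≠ g (p + 1) := by
      intro he
      have hL : ((List.range R).map g)[p]'(by simp; omega)
          = ((List.range R).map g)[p + 1]'(by simp; omega) := by
        simp only [List.getElem_map, List.getElem_range]
        exact he
      have := (hnd.getElem_inj_iff).mp hL
      omega
    rw [invCount_map_range, invCount_map_range,
      invSet_card_swap R p hp g g' h1 h2 h3 hnegd]
    exact Finsupp.single_neg _ _
  · rw [if_neg hnd, if_neg (fun h => hnd (hnod.mp h)), neg_zero]

end SlinkProof
namespace SlinkProof

open Finset

private def Ncells (μ : YoungDiagram) (T : ℕ × ℕ → ℕ) (m : ℕ) : ℕ :=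
  (μ.cells.filter fun c => runIdx μ T (T c) = m).card

private lemma Ncells_pos {n : ℕ} {μ : YoungDiagram} {T : ℕ × ℕ → ℕ} (hT : IsSYT n μ T)
    (hn : 1 ≤ n) {m : ℕ} (h1 : 1 ≤ m) (h2 : m ≤ runIdx μ T n) : 1 ≤ Ncells μ T m := by
  obtain ⟨u, hu1, hu2, hu3⟩ := runIdx_exists μ T n hn m h1 h2
  obtain ⟨c, hc, hTc⟩ := exists_cell hT hu1 hu2
  have hmem : c ∈ μ.cells.filter fun c => runIdx μ T (T c) = m :=
    Finset.mem_filter.mpr ⟨hc, by rw [hTc]; exact hu3⟩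
  exact Finset.card_pos.mpr ⟨c, hmem⟩

private lemma betaRun_Ncells {n : ℕ} {μ : YoungDiagram} {T : ℕ × ℕ → ℕ}
    (hT : IsSYT n μ T) {m : ℕ} (hm : 1 ≤ m) :
    betaRun n μ T m = Ncells μ T m := betaRun_card hT hm

private lemma jab_card_le {n : ℕ} {μ : YoungDiagram} {T : ℕ × ℕ → ℕ} (hT : IsSYT n μ T)
    {p : ℕ} (hFR : FirstRunsSS n μ T (p + 1)) :
    (μ.cells.filter fun c => runIdx μ T (T c) = p + 2 ∧ p + 2 ≤ c.1 + 1).card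
      ≤ Ncells μ T (p + 1) := by
  unfold Ncells
  apply Finset.card_le_card_of_injOn (fun c => (p, c.2))
  · intro c hc
    rw [Finset.mem_coe, Finset.mem_filter] at hc ⊢
    obtain ⟨hcmem, hrun, hrow⟩ := hc
    have hrow' : p + 1 ≤ c.1 := by omega
    have hcm : (c.1, c.2) ∈ μ := by rw [Prod.mk.eta]; exact (YoungDiagram.mem_cells _).mp hcmem
    have hmem2 : (p, c.2) ∈ μ := μ.up_left_mem (by omega) le_rfl hcm
    have hmem2c : (p, c.2) ∈ μ.cells := (YoungDiagram.mem_cells _).mpr hmem2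
    refine ⟨hmem2c, ?_⟩
    have hlt : T (p, c.2) < T (c.1, c.2) := col_lt hT hcm (by omega)
    rw [Prod.mk.eta] at hlt
    have hv1 := (mem_cells_iff_val hT).mp hmem2c
    have hvc := (mem_cells_iff_val hT).mp hcmem
    have hle2 : runIdx μ T (T (p, c.2)) ≤ p + 2 := by
      have := runIdx_mono μ T (le_of_lt hlt)
      omega
    have hnotj : runIdx μ T (T (p, c.2)) ≠ p + 2 := by
      intro heq
      have horder : c.1 < (p, c.2).1 ∨ ((p, c.2).1 = c.1 ∧ (p, c.2).2 < c.2) :=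
        run_chain hT (T c) hvc.2 (T (p, c.2)) hv1.1 hlt (by omega)
          (p, c.2) c hmem2c hcmem rfl rfl
      have horder' : c.1 < p ∨ (p = c.1 ∧ c.2 < c.2) := horder
      omega
    have hlep1 : runIdx μ T (T (p, c.2)) ≤ p + 1 := by omega
    have hrowz : (p, c.2).1 = runIdx μ T (T (p, c.2)) - 1 :=
      hFR (T (p, c.2)) hv1.1 hv1.2 hlep1 (p, c.2) hmem2c rfl
    have hrowz' : p = runIdx μ T (T (p, c.2)) - 1 := hrowz
    have hpos := runIdx_pos μ T (T (p, c.2))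
    exact (by omega : runIdx μ T (T (p, c.2)) = p + 1)
  · intro c1 h1 c2 h2 heq
    rw [Finset.mem_coe, Finset.mem_filter] at h1 h2
    simp only [Prod.mk.injEq] at heq
    have hcol : c1.2 = c2.2 := heq.2
    by_contra hne
    have hvne : T c1 ≠ T c2 := fun hv => hne (val_inj hT h1.1 h2.1 hv)
    have hv1 := (mem_cells_iff_val hT).mp h1.1
    have hv2 := (mem_cells_iff_val hT).mp h2.1
    have hc1m : (c1.1, c1.2) ∈ μ := by rw [Prod.mk.eta]; exact (YoungDiagram.mem_cells _).mp h1.1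
    have hc2m : (c2.1, c2.2) ∈ μ := by rw [Prod.mk.eta]; exact (YoungDiagram.mem_cells _).mp h2.1
    rcases Nat.lt_or_ge (T c1) (T c2) with hlt | hge
    · have horder : (c2.1 < c1.1 ∨ (c1.1 = c2.1 ∧ c1.2 < c2.2)) :=
        run_chain hT (T c2) hv2.2 (T c1) hv1.1 hlt
          (by rw [h1.2.1, h2.2.1]) c1 c2 h1.1 h2.1 rfl rfl
      have hcc : c2.1 < c1.1 := by omega
      have hcl := col_lt hT hc1m hcc
      rw [Prod.mk.eta] at hcl
      rw [← hcol] at hc2m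
      have hcl2 : T (c2.1, c2.2) < T c1 := by rwa [hcol] at hcl
      rw [Prod.mk.eta] at hcl2
      omega
    · have hlt2 : T c2 < T c1 := by omega
      have horder : (c1.1 < c2.1 ∨ (c2.1 = c1.1 ∧ c2.2 < c1.2)) :=
        run_chain hT (T c1) hv1.2 (T c2) hv2.1 hlt2
          (by rw [h1.2.1, h2.2.1]) c2 c1 h2.1 h1.1 rfl rfl
      have hcc : c1.1 < c2.1 := by omega
      have hcl := col_lt hT hc2m hcc
      rw [Prod.mk.eta] at hcl
      have hcl2 : T (c1.1, c1.2) < T c2 := by rwa [← hcol] at hcl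
      rw [Prod.mk.eta] at hcl2
      omega

end SlinkProof
open SlinkProof in
/-- for `T ∈ SYT(λ)` with `T ≠ U_λ`, the composition Schur functions
satisfy `s_{β(slink(T))} = - s_{β(T)}`. -/
theorem compSchur_slink (n : ℕ) (μ : YoungDiagram) (T T' : ℕ × ℕ → ℕ)
    (hT : IsSYT n μ T) (hns : ¬ IsSuperstandard μ T) (h : SlinkRel n T T') :
    compSchur (betaList n μ T') = - compSchur (betaList n μ T) := by
  classical
  obtain ⟨μ₀, hT0, hT'0, hcase⟩ := h
  have hμcells : μ₀.cells = μ.cells := by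
    ext c
    rw [SlinkProof.mem_cells_iff_val hT0, SlinkProof.mem_cells_iff_val hT]
  have hμ : μ₀ = μ := by
    ext x
    constructor <;> intro hx
    · exact (YoungDiagram.mem_cells _).mp (hμcells ▸ (YoungDiagram.mem_cells _).mpr hx)
    · exact (YoungDiagram.mem_cells _).mp (hμcells ▸ (YoungDiagram.mem_cells _).mpr hx)
  rw [hμ] at hT0 hT'0 hcase
  rcases hcase with ⟨hss, _⟩ | ⟨-, i, j, hSD, hRed⟩
  · exact absurd hss hns
  obtain ⟨hj1, hnSS, hprev, -, -, -⟩ := hSD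
  have hj2 : 2 ≤ j := by
    rcases Nat.lt_or_ge j 2 with hlt | hge
    · exfalso
      have hj1' : j = 1 := by omega
      subst hj1'
      exact hnSS (SlinkProof.firstRunsSS_one hT)
    · exact hge
  obtain ⟨p, rfl⟩ : ∃ p, j = p + 2 := ⟨j - 2, by omega⟩
  obtain ⟨hR1, hR2, hR3⟩ := hRed
  have hsub1 : p + 2 - 1 = p + 1 := rfl
  rw [hsub1] at hR1 hR3
  have hn1 : 1 ≤ n := by
    by_contra hc
    apply hns
    intro c hcmem
    exfalso
    have := (SlinkProof.mem_cells_iff_val hT).mp hcmem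
    omega
  have hFR : FirstRunsSS n μ T (p + 1) := hprev (p + 1) (by omega)
  have hjR : p + 2 ≤ runIdx μ T n := by
    by_cases hex : ∃ v, 1 ≤ v ∧ v ≤ n ∧ runIdx μ T v = p + 2
    · obtain ⟨v, h1, h2, h3⟩ := hex
      calc p + 2 = runIdx μ T v := h3.symm
        _ ≤ runIdx μ T n := SlinkProof.runIdx_mono μ T h2
    · exfalso
      push_neg at hex
      apply hnSS
      intro v h1 h2 hle c hc hTc
      have hv : runIdx μ T v ≤ p + 1 := by
        have := hex v h1 h2
        omega
      exact hFR v h1 h2 hv c hc hTc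
  have hArow : ∀ c ∈ μ.cells, runIdx μ T (T c) = p + 1 → c.1 = p := by
    intro c hc hrc
    have hv := (SlinkProof.mem_cells_iff_val hT).mp hc
    have := hFR (T c) hv.1 hv.2 (by omega) c hc rfl
    omega
  -- cover of the cells by the three classes
  have hcover : ∀ c ∈ μ.cells,
      ((runIdx μ T (T c) ≠ p + 1 ∧ runIdx μ T (T c) ≠ p + 2)
        ∨ (runIdx μ T (T c) = p + 2 ∧ p + 2 ≤ c.1 + 1)
        ∨ ((runIdx μ T (T c) = p + 1 ∨ runIdx μ T (T c) = p + 2) ∧ c.1 + 1 < p + 2)) := by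
    intro c hc
    by_cases h1 : runIdx μ T (T c) = p + 1
    · have := hArow c hc h1
      right; right; exact ⟨Or.inl h1, by omega⟩
    · by_cases h2 : runIdx μ T (T c) = p + 2
      · rcases Nat.lt_or_ge (c.1 + 1) (p + 2) with hh | hh
        · right; right; exact ⟨Or.inr h2, hh⟩
        · right; left; exact ⟨h2, hh⟩
      · left; exact ⟨h1, h2⟩
  have hBdef : belowCells μ T (p + 1) (p + 2)
      = μ.cells.filter fun c =>
          (runIdx μ T (T c) = p + 1 ∨ runIdx μ T (T c) = p + 2) ∧ c.1 + 1 < p + 2 := rfl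
  -- split of Ncells μ T' m
  have hsplitm : ∀ m : ℕ,
      Ncells μ T' m
        = (μ.cells.filter fun c => runIdx μ T' (T' c) = m
            ∧ (runIdx μ T (T c) ≠ p + 1 ∧ runIdx μ T (T c) ≠ p + 2)).card
          + (μ.cells.filter fun c => runIdx μ T' (T' c) = m
            ∧ (runIdx μ T (T c) = p + 2 ∧ p + 2 ≤ c.1 + 1)).card
          + (μ.cells.filter fun c => runIdx μ T' (T' c) = m
            ∧ ((runIdx μ T (T c) = p + 1 ∨ runIdx μ T (T c) = p + 2) ∧ c.1 + 1 < p + 2)).card := by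
    intro m
    have hu : (μ.cells.filter fun c => runIdx μ T' (T' c) = m)
        = ((μ.cells.filter fun c => runIdx μ T' (T' c) = m
            ∧ (runIdx μ T (T c) ≠ p + 1 ∧ runIdx μ T (T c) ≠ p + 2))
          ∪ (μ.cells.filter fun c => runIdx μ T' (T' c) = m
            ∧ (runIdx μ T (T c) = p + 2 ∧ p + 2 ≤ c.1 + 1)))
          ∪ (μ.cells.filter fun c => runIdx μ T' (T' c) = m
            ∧ ((runIdx μ T (T c) = p + 1 ∨ runIdx μ T (T c) = p + 2) ∧ c.1 + 1 < p + 2)) := by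
      ext c
      simp only [Finset.mem_filter, Finset.mem_union]
      constructor
      · rintro ⟨hc, hq⟩
        rcases hcover c hc with hh | hh | hh
        · exact Or.inl (Or.inl ⟨hc, hq, hh⟩)
        · exact Or.inl (Or.inr ⟨hc, hq, hh⟩)
        · exact Or.inr ⟨hc, hq, hh⟩
      · rintro ((⟨hc, hq, -⟩ | ⟨hc, hq, -⟩) | ⟨hc, hq, -⟩) <;> exact ⟨hc, hq⟩
    have hd1 : Disjoint
        (μ.cells.filter fun c => runIdx μ T' (T' c) = m
            ∧ (runIdx μ T (T c) ≠ p + 1 ∧ runIdx μ T (T c) ≠ p + 2))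
        (μ.cells.filter fun c => runIdx μ T' (T' c) = m
            ∧ (runIdx μ T (T c) = p + 2 ∧ p + 2 ≤ c.1 + 1)) := by
      rw [Finset.disjoint_left]
      intro a ha hb
      rw [Finset.mem_filter] at ha hb
      omega
    have hd2 : Disjoint
        ((μ.cells.filter fun c => runIdx μ T' (T' c) = m
            ∧ (runIdx μ T (T c) ≠ p + 1 ∧ runIdx μ T (T c) ≠ p + 2))
          ∪ (μ.cells.filter fun c => runIdx μ T' (T' c) = m
            ∧ (runIdx μ T (T c) = p + 2 ∧ p + 2 ≤ c.1 + 1)))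
        (μ.cells.filter fun c => runIdx μ T' (T' c) = m
            ∧ ((runIdx μ T (T c) = p + 1 ∨ runIdx μ T (T c) = p + 2) ∧ c.1 + 1 < p + 2)) := by
      rw [Finset.disjoint_left]
      intro a ha hb
      rw [Finset.mem_union, Finset.mem_filter, Finset.mem_filter] at ha
      rw [Finset.mem_filter] at hb
      rcases ha with ⟨-, -, hh⟩ | ⟨-, -, hh⟩ <;>
        rcases hb with ⟨-, -, hh2, hh3⟩ <;> omega
    show (μ.cells.filter fun c => runIdx μ T' (T' c) = m).card = _
    rw [hu, Finset.card_union_of_disjoint hd2, Finset.card_union_of_disjoint hd1]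
  set k := betaRun n μ T (p + 2) - 1 with hkdef
  have hbk : betaRun n μ T (p + 2) = Ncells μ T (p + 2) := betaRun_Ncells hT (by omega)
  have hNjpos : 1 ≤ Ncells μ T (p + 2) := Ncells_pos hT hn1 (by omega) hjR
  have hNapos : 1 ≤ Ncells μ T (p + 1) := Ncells_pos hT hn1 (by omega) (by omega)
  have hJab := jab_card_le hT hFR
  -- card of belowCells
  have hJJ : (μ.cells.filter fun c => runIdx μ T (T c) = p + 2 ∧ c.1 + 1 < p + 2).card
      + (μ.cells.filter fun c => runIdx μ T (T c) = p + 2 ∧ p + 2 ≤ c.1 + 1).card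
      = Ncells μ T (p + 2) := by
    have e1 : (μ.cells.filter fun c => runIdx μ T (T c) = p + 2 ∧ c.1 + 1 < p + 2)
        = (μ.cells.filter fun c => runIdx μ T (T c) = p + 2).filter fun c => c.1 + 1 < p + 2 := by
      rw [Finset.filter_filter]
    have e2 : (μ.cells.filter fun c => runIdx μ T (T c) = p + 2 ∧ p + 2 ≤ c.1 + 1)
        = (μ.cells.filter fun c => runIdx μ T (T c) = p + 2).filter fun c => ¬ (c.1 + 1 < p + 2) := by
      rw [Finset.filter_filter]
      apply Finset.filter_congr
      intro c _
      constructor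
      · rintro ⟨h1, h2⟩; exact ⟨h1, by omega⟩
      · rintro ⟨h1, h2⟩; exact ⟨h1, by omega⟩
    rw [e1, e2]
    exact Finset.card_filter_add_card_filter_not _
  have hBsplit : (belowCells μ T (p + 1) (p + 2)).card
      = Ncells μ T (p + 1)
        + (μ.cells.filter fun c => runIdx μ T (T c) = p + 2 ∧ c.1 + 1 < p + 2).card := by
    rw [hBdef]
    have hu : (μ.cells.filter fun c =>
          (runIdx μ T (T c) = p + 1 ∨ runIdx μ T (T c) = p + 2) ∧ c.1 + 1 < p + 2)
        = (μ.cells.filter fun c => runIdx μ T (T c) = p + 1)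
          ∪ (μ.cells.filter fun c => runIdx μ T (T c) = p + 2 ∧ c.1 + 1 < p + 2) := by
      ext c
      simp only [Finset.mem_filter, Finset.mem_union]
      constructor
      · rintro ⟨hc, hor, hrow⟩
        rcases hor with hh | hh
        · exact Or.inl ⟨hc, hh⟩
        · exact Or.inr ⟨hc, hh, hrow⟩
      · rintro (⟨hc, hh⟩ | ⟨hc, hh, hrow⟩)
        · exact ⟨hc, Or.inl hh, by have := hArow c hc hh; omega⟩
        · exact ⟨hc, Or.inr hh, hrow⟩
    have hdisj : Disjoint (μ.cells.filter fun c => runIdx μ T (T c) = p + 1)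
        (μ.cells.filter fun c => runIdx μ T (T c) = p + 2 ∧ c.1 + 1 < p + 2) := by
      rw [Finset.disjoint_left]
      intro a ha hb
      rw [Finset.mem_filter] at ha hb
      omega
    rw [hu, Finset.card_union_of_disjoint hdisj]
    rfl
  have hkB : k + 1 ≤ (belowCells μ T (p + 1) (p + 2)).card := by omega
  -- the three values of Ncells μ T'
  have hN'pres : ∀ m, m ≠ p + 1 → m ≠ p + 2 → Ncells μ T' m = Ncells μ T m := by
    intro m hm1 hm2
    rw [hsplitm m]
    have e1 : (μ.cells.filter fun c => runIdx μ T' (T' c) = m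
          ∧ (runIdx μ T (T c) ≠ p + 1 ∧ runIdx μ T (T c) ≠ p + 2))
        = (μ.cells.filter fun c => runIdx μ T (T c) = m) := by
      apply Finset.filter_congr
      intro c hc
      constructor
      · rintro ⟨hq, hA1, hA2⟩
        rw [hR1 c hc hA1 hA2] at hq
        exact hq
      · intro hq
        have hA1 : runIdx μ T (T c) ≠ p + 1 := by omega
        have hA2 : runIdx μ T (T c) ≠ p + 2 := by omega
        exact ⟨by rw [hR1 c hc hA1 hA2]; exact hq, hA1, hA2⟩
    have e2 : (μ.cells.filter fun c => runIdx μ T' (T' c) = m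
          ∧ (runIdx μ T (T c) = p + 2 ∧ p + 2 ≤ c.1 + 1)) = ∅ := by
      rw [Finset.filter_eq_empty_iff]
      rintro c hc ⟨hq, hA⟩
      rw [hR2 c hc hA.1 hA.2] at hq
      exact hm2 hq.symm
    have e3 : (μ.cells.filter fun c => runIdx μ T' (T' c) = m
          ∧ ((runIdx μ T (T c) = p + 1 ∨ runIdx μ T (T c) = p + 2) ∧ c.1 + 1 < p + 2)) = ∅ := by
      rw [Finset.filter_eq_empty_iff]
      rintro c hc ⟨hq, hA⟩
      have hcB : c ∈ belowCells μ T (p + 1) (p + 2) := by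
        rw [hBdef]; exact Finset.mem_filter.mpr ⟨hc, hA⟩
      rw [hR3 c hcB] at hq
      split_ifs at hq <;> omega
    rw [e1, e2, e3]
    simp [Ncells]
  have hN'a : Ncells μ T' (p + 1) = k := by
    rw [hsplitm (p + 1)]
    have e1 : (μ.cells.filter fun c => runIdx μ T' (T' c) = p + 1
          ∧ (runIdx μ T (T c) ≠ p + 1 ∧ runIdx μ T (T c) ≠ p + 2)) = ∅ := by
      rw [Finset.filter_eq_empty_iff]
      rintro c hc ⟨hq, hA1, hA2⟩
      rw [hR1 c hc hA1 hA2] at hq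
      exact hA1 hq
    have e2 : (μ.cells.filter fun c => runIdx μ T' (T' c) = p + 1
          ∧ (runIdx μ T (T c) = p + 2 ∧ p + 2 ≤ c.1 + 1)) = ∅ := by
      rw [Finset.filter_eq_empty_iff]
      rintro c hc ⟨hq, hA⟩
      rw [hR2 c hc hA.1 hA.2] at hq
      omega
    have e3 : (μ.cells.filter fun c => runIdx μ T' (T' c) = p + 1
          ∧ ((runIdx μ T (T c) = p + 1 ∨ runIdx μ T (T c) = p + 2) ∧ c.1 + 1 < p + 2))
        = (belowCells μ T (p + 1) (p + 2)).filter fun c =>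
            ((belowCells μ T (p + 1) (p + 2)).filter fun c' =>
              c.1 < c'.1 ∨ (c'.1 = c.1 ∧ c'.2 < c.2)).card < k := by
      rw [hBdef, Finset.filter_filter]
      apply Finset.filter_congr
      intro c hc
      constructor
      · rintro ⟨hq, hA⟩
        have hcB : c ∈ belowCells μ T (p + 1) (p + 2) := by
          rw [hBdef]; exact Finset.mem_filter.mpr ⟨hc, hA⟩
        rw [hR3 c hcB] at hq
        by_cases hrk : ((belowCells μ T (p + 1) (p + 2)).filter fun c' =>
            c.1 < c'.1 ∨ (c'.1 = c.1 ∧ c'.2 < c.2)).card < k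
        · exact ⟨hA, hrk⟩
        · rw [if_neg (by exact hrk)] at hq
          omega
      · rintro ⟨hA, hrk⟩
        have hcB : c ∈ belowCells μ T (p + 1) (p + 2) := by
          rw [hBdef]; exact Finset.mem_filter.mpr ⟨hc, hA⟩
        refine ⟨?_, hA⟩
        rw [hR3 c hcB, if_pos (by exact hrk)]
    rw [e1, e2, e3, Finset.card_empty]
    rw [rank_filter_card _ k (by omega)]
    omega
  have hN'j : Ncells μ T' (p + 2) = Ncells μ T (p + 1) + 1 := by
    rw [hsplitm (p + 2)]
    have e1 : (μ.cells.filter fun c => runIdx μ T' (T' c) = p + 2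
          ∧ (runIdx μ T (T c) ≠ p + 1 ∧ runIdx μ T (T c) ≠ p + 2)) = ∅ := by
      rw [Finset.filter_eq_empty_iff]
      rintro c hc ⟨hq, hA1, hA2⟩
      rw [hR1 c hc hA1 hA2] at hq
      exact hA2 hq
    have e2 : (μ.cells.filter fun c => runIdx μ T' (T' c) = p + 2
          ∧ (runIdx μ T (T c) = p + 2 ∧ p + 2 ≤ c.1 + 1))
        = (μ.cells.filter fun c => runIdx μ T (T c) = p + 2 ∧ p + 2 ≤ c.1 + 1) := by
      apply Finset.filter_congr
      intro c hc
      constructor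
      · rintro ⟨-, hA⟩; exact hA
      · intro hA; exact ⟨hR2 c hc hA.1 hA.2, hA⟩
    have e3 : (μ.cells.filter fun c => runIdx μ T' (T' c) = p + 2
          ∧ ((runIdx μ T (T c) = p + 1 ∨ runIdx μ T (T c) = p + 2) ∧ c.1 + 1 < p + 2))
        = (belowCells μ T (p + 1) (p + 2)).filter fun c =>
            ¬ (((belowCells μ T (p + 1) (p + 2)).filter fun c' =>
              c.1 < c'.1 ∨ (c'.1 = c.1 ∧ c'.2 < c.2)).card < k) := by
      rw [hBdef, Finset.filter_filter]
      apply Finset.filter_congr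
      intro c hc
      constructor
      · rintro ⟨hq, hA⟩
        have hcB : c ∈ belowCells μ T (p + 1) (p + 2) := by
          rw [hBdef]; exact Finset.mem_filter.mpr ⟨hc, hA⟩
        rw [hR3 c hcB] at hq
        refine ⟨hA, ?_⟩
        intro hrk
        rw [if_pos (by exact hrk)] at hq
        omega
      · rintro ⟨hA, hrk⟩
        have hcB : c ∈ belowCells μ T (p + 1) (p + 2) := by
          rw [hBdef]; exact Finset.mem_filter.mpr ⟨hc, hA⟩
        refine ⟨?_, hA⟩
        rw [hR3 c hcB, if_neg (by exact hrk)]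
    rw [e1, e2, e3, Finset.card_empty]
    have hcompl : ((belowCells μ T (p + 1) (p + 2)).filter fun c =>
            (((belowCells μ T (p + 1) (p + 2)).filter fun c' =>
              c.1 < c'.1 ∨ (c'.1 = c.1 ∧ c'.2 < c.2)).card < k)).card
        + ((belowCells μ T (p + 1) (p + 2)).filter fun c =>
            ¬ (((belowCells μ T (p + 1) (p + 2)).filter fun c' =>
              c.1 < c'.1 ∨ (c'.1 = c.1 ∧ c'.2 < c.2)).card < k)).card
        = (belowCells μ T (p + 1) (p + 2)).card :=
      Finset.card_filter_add_card_filter_not _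
    rw [rank_filter_card _ k (by omega)] at hcompl
    omega
  -- number of runs is preserved
  have hub : ∀ c ∈ μ.cells, runIdx μ T' (T' c) ≤ runIdx μ T n := by
    intro c hc
    rcases hcover c hc with hh | hh | hh
    · rw [hR1 c hc hh.1 hh.2]
      have hvc := (SlinkProof.mem_cells_iff_val hT).mp hc
      exact SlinkProof.runIdx_mono μ T hvc.2
    · rw [hR2 c hc hh.1 hh.2]; omega
    · have hcB : c ∈ belowCells μ T (p + 1) (p + 2) := by
        rw [hBdef]; exact Finset.mem_filter.mpr ⟨hc, hh⟩
      rw [hR3 c hcB]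
      split <;> omega
  have hexist_of_pos : ∀ m, 1 ≤ Ncells μ T' m → ∃ c ∈ μ.cells, runIdx μ T' (T' c) = m := by
    intro m hm
    obtain ⟨c, hc⟩ := Finset.card_pos.mp
      (show 0 < (μ.cells.filter fun c => runIdx μ T' (T' c) = m).card from hm)
    rw [Finset.mem_filter] at hc
    exact ⟨c, hc.1, hc.2⟩
  have hR'eq : runIdx μ T' n = runIdx μ T n := by
    obtain ⟨cn, hcn, hTcn⟩ := SlinkProof.exists_cell hT'0 hn1 le_rfl
    have hle : runIdx μ T' n ≤ runIdx μ T n := by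
      conv_lhs => rw [← hTcn]
      exact hub cn hcn
    have hge : runIdx μ T n ≤ runIdx μ T' n := by
      have hex : ∃ c ∈ μ.cells, runIdx μ T' (T' c) = runIdx μ T n := by
        rcases Nat.lt_or_ge (p + 2) (runIdx μ T n) with hlt | hge2
        · apply hexist_of_pos
          rw [hN'pres (runIdx μ T n) (by omega) (by omega)]
          exact Ncells_pos hT hn1 (by omega) le_rfl
        · have hReq : runIdx μ T n = p + 2 := by omega
          apply hexist_of_pos
          rw [hReq, hN'j]
          omega
      obtain ⟨c, hc, hceq⟩ := hex
      have hvc := (SlinkProof.mem_cells_iff_val hT'0).mp hc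
      calc runIdx μ T n = runIdx μ T' (T' c) := hceq.symm
        _ ≤ runIdx μ T' n := SlinkProof.runIdx_mono μ T' hvc.2
    omega
  -- final assembly
  have hbl : betaList n μ T = (List.range (runIdx μ T n)).map (fun m => Ncells μ T (m + 1)) := by
    unfold betaList
    exact List.map_congr_left (fun m _ => betaRun_Ncells hT (by omega))
  have hbl' : betaList n μ T' = (List.range (runIdx μ T n)).map (fun m => Ncells μ T' (m + 1)) := by
    unfold betaList
    rw [hR'eq]
    exact List.map_congr_left (fun m _ => betaRun_Ncells hT'0 (by omega))
  rw [hbl, hbl']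
  unfold compSchur
  rw [vvec_map_range, vvec_map_range]
  refine compSchur_swap (runIdx μ T n) p (by omega)
    (fun m => ((Ncells μ T (m + 1) : ℤ) - (m + 1)))
    (fun m => ((Ncells μ T' (m + 1) : ℤ) - (m + 1))) ?_ ?_ ?_
  · intro q hq1 hq2
    exact congrArg (fun x : ℕ => (x : ℤ) - ((q : ℤ) + 1))
      (hN'pres (q + 1) (by omega) (by omega))
  · have h2' : SlinkProof.Ncells μ T (p + 1 + 1) = SlinkProof.Ncells μ T (p + 2) :=
      congrArg (SlinkProof.Ncells μ T) (by omega)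
    have h1 := hN'a
    show ((SlinkProof.Ncells μ T' (p + 1) : ℤ) - ((p : ℤ) + 1))
        = ((SlinkProof.Ncells μ T (p + 1 + 1) : ℤ) - (((p + 1 : ℕ) : ℤ) + 1))
    omega
  · have h2' : SlinkProof.Ncells μ T' (p + 1 + 1) = SlinkProof.Ncells μ T' (p + 2) :=
      congrArg (SlinkProof.Ncells μ T') (by omega)
    have h1 := hN'j
    show ((SlinkProof.Ncells μ T' (p + 1 + 1) : ℤ) - (((p + 1 : ℕ) : ℤ) + 1))
        = ((SlinkProof.Ncells μ T (p + 1) : ℤ) - ((p : ℤ) + 1))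
    omega
end
end
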